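/- arXiv:2601.09435 — 9 statements merged into one kernel-verified Lean document; each statement's English description precedes it below -/
import Mathlib

section
/- Let n ≥ 2 be an integer, p > 1, and r ∈ (0,1). Let Σ' ⊂ ℝ^{n−1} be a bounded open convex set containing the origin, with Lebesgue measure |Σ'| > 0, and write d(x') := dist(x', Σ'). Let c1 ≥ c2 > 0 and let h1, h2 : ℝ^{n−1} → ℝ be continuous functions such that h1(x') = h2(x') for all x' in the closure of Σ', and c2·d(x')² ≤ h1(x') − h2(x') ≤ c1·d(x')² for all x' with 0 < d(x') < 1. Then lim_{ε→0⁺} (ε^{p−1}/|Σ'|) · ∫_{{x' ∈ ℝ^{n−1} : d(x') < r}} (ε + h1(x') − h2(x'))^{1−p} dx' = 1. -/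
open MeasureTheory Filter Set Metric

set_option maxHeartbeats 1000000

/-- Lemma 3.2 (flat case): the scaled integral of `δ(x')^{1-p}` over `{d(x') < r}`
tends to `1` as `ε → 0⁺`. -/
theorem flat_boundary_scaled_integral_tendsto_one
    {n : ℕ} (hn : 2 ≤ n) (p : ℝ) (hp : 1 < p) (r : ℝ) (hr : r ∈ Ioo (0:ℝ) 1)
    (S : Set (EuclideanSpace ℝ (Fin (n-1))))
    (hSo : IsOpen S) (hSb : Bornology.IsBounded S) (hSc : Convex ℝ S)
    (hS0 : (0 : EuclideanSpace ℝ (Fin (n-1))) ∈ S)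
    (hSpos : 0 < (volume S).toReal)
    (c1 c2 : ℝ) (hc2 : 0 < c2) (hc12 : c2 ≤ c1)
    (h1 h2 : EuclideanSpace ℝ (Fin (n-1)) → ℝ)
    (hh1 : Continuous h1) (hh2 : Continuous h2)
    (heq : ∀ x' ∈ closure S, h1 x' = h2 x')
    (hlow : ∀ x', 0 < infDist x' S → infDist x' S < 1 →
      c2 * (infDist x' S) ^ 2 ≤ h1 x' - h2 x')
    (hupp : ∀ x', 0 < infDist x' S → infDist x' S < 1 →
      h1 x' - h2 x' ≤ c1 * (infDist x' S) ^ 2) :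
    Tendsto (fun ε : ℝ =>
      ε ^ (p - 1) / (volume S).toReal *
        ∫ x' in {x' : EuclideanSpace ℝ (Fin (n-1)) | infDist x' S < r},
          (ε + h1 x' - h2 x') ^ (1 - p))
      (nhdsWithin 0 (Ioi 0)) (nhds 1) := by
  clear hupp hn hc12
  obtain ⟨hr0, hr1⟩ := hr
  have hp1 : (0:ℝ) < p - 1 := by linarith
  have hSne : S.Nonempty := ⟨0, hS0⟩
  set D : ℝ := (volume S).toReal with hDdef
  set U : Set (EuclideanSpace ℝ (Fin (n-1))) := {x' : EuclideanSpace ℝ (Fin (n-1)) | infDist x' S < r} with hUdef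
  have hdcont : Continuous fun x : EuclideanSpace ℝ (Fin (n-1)) => infDist x S := continuous_infDist_pt S
  have hUopen : IsOpen U := isOpen_lt hdcont continuous_const
  have hUmeas : MeasurableSet U := hUopen.measurableSet
  -- nonnegativity of h1 - h2 near S
  have hpos : ∀ x : EuclideanSpace ℝ (Fin (n-1)), infDist x S < 1 → 0 ≤ h1 x - h2 x := by
    intro x hx
    rcases eq_or_lt_of_le (infDist_nonneg (x := x) (s := S)) with h | h
    · have hxc : x ∈ closure S := (mem_closure_iff_infDist_zero hSne).2 h.symm
      have := heq x hxc; linarith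
    · have := hlow x h hx
      nlinarith [sq_nonneg (infDist x S)]
  -- measure facts
  have hclosS : volume (closure S) = volume S := by
    rw [closure_eq_interior_union_frontier, hSo.interior_eq]
    refine le_antisymm ?_ (measure_mono subset_union_left)
    calc volume (S ∪ frontier S) ≤ volume S + volume (frontier S) := measure_union_le _ _
      _ = volume S := by rw [hSc.addHaar_frontier volume, add_zero]
  have hKcomp : IsCompact (cthickening r S) :=
    Metric.isCompact_of_isClosed_isBounded isClosed_cthickening hSb.cthickening
  have hKvol : volume (cthickening r S) < ⊤ := hKcomp.measure_lt_top
  have hUsub : U ⊆ cthickening r S := by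
    intro x hx
    rw [mem_cthickening_iff]
    exact (ENNReal.le_ofReal_iff_toReal_le (infEdist_ne_top hSne) hr0.le).2 (le_of_lt hx)
  have hUvol : volume U < ⊤ := lt_of_le_of_lt (measure_mono hUsub) hKvol
  have hK_dist : ∀ x ∈ cthickening r S, infDist x S ≤ r := by
    intro x hx
    rw [mem_cthickening_iff] at hx
    exact ENNReal.toReal_le_of_le_ofReal hr0.le hx
  -- integrability
  have hIntU : ∀ ε : ℝ, 0 < ε →
      IntegrableOn (fun x : EuclideanSpace ℝ (Fin (n-1)) => (ε + h1 x - h2 x) ^ (1 - p)) U volume := by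
    intro ε hε
    have hbpos : ∀ x ∈ cthickening r S, 0 < ε + h1 x - h2 x := by
      intro x hx
      have h1x := hpos x (lt_of_le_of_lt (hK_dist x hx) hr1)
      linarith
    have hcont : ContinuousOn (fun x : EuclideanSpace ℝ (Fin (n-1)) => (ε + h1 x - h2 x) ^ (1 - p))
        (cthickening r S) := by
      apply ContinuousOn.rpow_const
      · exact ((continuous_const.add hh1).sub hh2).continuousOn
      · intro x hx; exact Or.inl (ne_of_gt (hbpos x hx))
    exact (hcont.integrableOn_compact hKcomp).mono_set hUsub
  -- decomposition of U
  have hAU : closure S ⊆ U := by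
    intro x hx
    have : infDist x S = 0 := infDist_zero_of_mem_closure hx
    simpa [hUdef, this] using hr0
  set B : Set (EuclideanSpace ℝ (Fin (n-1))) := U \ closure S with hBdef
  have hBmeas : MeasurableSet B := hUmeas.diff isClosed_closure.measurableSet
  have hUnion : closure S ∪ B = U := union_diff_cancel hAU
  have hdisj : Disjoint (closure S) B := disjoint_sdiff_self_right
  have hD0 : 0 < D := hSpos
  -- key identity for ε > 0
  have key : ∀ ε : ℝ, 0 < ε →
      ε ^ (p - 1) / D * ∫ x' in U, (ε + h1 x' - h2 x') ^ (1 - p) =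
      1 + ε ^ (p - 1) / D * ∫ x' in B, (ε + h1 x' - h2 x') ^ (1 - p) := by
    intro ε hε
    have hIA : IntegrableOn (fun x : EuclideanSpace ℝ (Fin (n-1)) => (ε + h1 x - h2 x) ^ (1 - p)) (closure S) volume :=
      (hIntU ε hε).mono_set hAU
    have hIB : IntegrableOn (fun x : EuclideanSpace ℝ (Fin (n-1)) => (ε + h1 x - h2 x) ^ (1 - p)) B volume :=
      (hIntU ε hε).mono_set diff_subset
    have hsplit : ∫ x' in U, (ε + h1 x' - h2 x') ^ (1 - p) =
        (∫ x' in closure S, (ε + h1 x' - h2 x') ^ (1 - p)) +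
        ∫ x' in B, (ε + h1 x' - h2 x') ^ (1 - p) := by
      rw [← hUnion]
      exact setIntegral_union hdisj hBmeas hIA hIB
    have hA : ∫ x' in closure S, (ε + h1 x' - h2 x') ^ (1 - p) = D * ε ^ (1 - p) := by
      rw [setIntegral_congr_fun isClosed_closure.measurableSet
        (g := fun _ : EuclideanSpace ℝ (Fin (n-1)) => ε ^ (1 - p)) (fun x hx => by rw [heq x hx]; ring_nf)]
      rw [setIntegral_const, Measure.real, hclosS, smul_eq_mul]
    have hpow : ε ^ (p - 1) * ε ^ (1 - p) = 1 := by
      rw [← Real.rpow_add hε, show p - 1 + (1 - p) = 0 by ring, Real.rpow_zero]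
    have h1'' : ε ^ (p - 1) / D * (D * ε ^ (1 - p)) = 1 := by
      field_simp
      linear_combination hpow
    rw [hsplit, hA, mul_add, h1'']
  -- error term tends to zero
  have herr : Tendsto (fun ε : ℝ =>
      ε ^ (p - 1) / D * ∫ x' in B, (ε + h1 x' - h2 x') ^ (1 - p))
      (nhdsWithin 0 (Ioi 0)) (nhds 0) := by
    rw [Metric.tendsto_nhds]
    intro η hη
    -- choose t
    have hVt : Tendsto (fun t : ℝ => (volume (cthickening t S)).toReal)
        (nhdsWithin 0 (Ioi 0)) (nhds D) := by
      have h0 : Tendsto (fun t : ℝ => volume (cthickening t S)) (nhds 0)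
          (nhds (volume (closure S))) :=
        tendsto_measure_cthickening ⟨r, hr0, hKvol.ne⟩
      have hclosfin : volume (closure S) ≠ ⊤ := by
        rw [hclosS]
        exact (lt_of_le_of_lt (measure_mono
          (fun x hx => hUsub (hAU (subset_closure hx)))) hKvol).ne
      have h1' := (ENNReal.tendsto_toReal hclosfin).comp h0
      rw [hclosS] at h1'
      exact h1'.mono_left nhdsWithin_le_nhds
    have hev1 : ∀ᶠ t in nhdsWithin (0:ℝ) (Ioi 0),
        (volume (cthickening t S)).toReal < D + η * D / 4 ∧ t < r ∧ 0 < t := by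
      refine ((hVt.eventually (eventually_lt_nhds (by nlinarith))).and
        (Filter.Eventually.and ?_ ?_))
      · exact eventually_nhdsWithin_of_eventually_nhds (eventually_lt_nhds hr0)
      · exact eventually_mem_nhdsWithin
    obtain ⟨t, hVtlt, htr, ht0⟩ := hev1.exists
    -- volume of the inner shell
    set B1 : Set (EuclideanSpace ℝ (Fin (n-1))) := B ∩ {x : EuclideanSpace ℝ (Fin (n-1)) | infDist x S ≤ t} with hB1def
    set B2 : Set (EuclideanSpace ℝ (Fin (n-1))) := B ∩ {x : EuclideanSpace ℝ (Fin (n-1)) | t < infDist x S} with hB2def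
    have hB1meas : MeasurableSet B1 :=
      hBmeas.inter (isClosed_le hdcont continuous_const).measurableSet
    have hB2meas : MeasurableSet B2 :=
      hBmeas.inter (isOpen_lt continuous_const hdcont).measurableSet
    have hB12 : B1 ∪ B2 = B := by
      rw [hB1def, hB2def, ← inter_union_distrib_left]
      have : {x : EuclideanSpace ℝ (Fin (n-1)) | infDist x S ≤ t} ∪ {x : EuclideanSpace ℝ (Fin (n-1)) | t < infDist x S} = univ := by
        ext x; simp [le_or_gt]
      rw [this, inter_univ]
    have hdisj12 : Disjoint B1 B2 := by
      apply Set.disjoint_left.mpr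
      rintro x ⟨-, hx1⟩ ⟨-, hx2⟩
      simp only [mem_setOf_eq] at hx1 hx2
      exact absurd hx1 (not_le.mpr hx2)
    have hKt : volume (cthickening t S) < ⊤ :=
      lt_of_le_of_lt (measure_mono (cthickening_mono htr.le S)) hKvol
    have hB1sub : B1 ∪ S ⊆ cthickening t S := by
      rintro x (⟨-, hx⟩ | hx)
      · rw [mem_cthickening_iff]
        exact (ENNReal.le_ofReal_iff_toReal_le (infEdist_ne_top hSne) ht0.le).2 hx
      · exact self_subset_cthickening S hx
    have hdisjBS : Disjoint B1 S := by
      apply Set.disjoint_left.mpr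
      rintro x ⟨⟨-, hxB⟩, -⟩ hxS
      exact hxB (subset_closure hxS)
    have hB1fin : volume B1 < ⊤ :=
      lt_of_le_of_lt (measure_mono (fun x hx => hUsub (hx.1.1))) hKvol
    have hSfin : volume S < ⊤ :=
      lt_of_le_of_lt (measure_mono (fun x hx => hUsub (hAU (subset_closure hx)))) hKvol
    have hB1vol : (volume B1).toReal ≤ (volume (cthickening t S)).toReal - D := by
      have hsum : volume B1 + volume S ≤ volume (cthickening t S) := by
        rw [← measure_union hdisjBS hSo.measurableSet]
        exact measure_mono hB1sub
      have h2' := ENNReal.toReal_mono hKt.ne hsum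
      rw [ENNReal.toReal_add hB1fin.ne hSfin.ne] at h2'
      rw [hDdef]; linarith
    -- constants
    set C : ℝ := (c2 * t ^ 2) ^ (1 - p) * (volume U).toReal with hCdef
    have hct : 0 < c2 * t ^ 2 := by positivity
    have hCnn : 0 ≤ C := mul_nonneg (Real.rpow_nonneg hct.le _) ENNReal.toReal_nonneg
    have hεC : Tendsto (fun ε : ℝ => ε ^ (p - 1) * C / D) (nhdsWithin 0 (Ioi 0)) (nhds 0) := by
      have hca : ContinuousAt (fun ε : ℝ => ε ^ (p - 1) * C / D) 0 :=
        ((Real.continuousAt_rpow_const 0 (p - 1) (Or.inr hp1.le)).mul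
          continuousAt_const).div_const D
      have h0 : (0:ℝ) ^ (p - 1) = 0 := Real.zero_rpow (ne_of_gt hp1)
      have := hca.tendsto.mono_left
        (nhdsWithin_le_nhds : nhdsWithin (0:ℝ) (Ioi 0) ≤ nhds 0)
      simpa [h0] using this
    have hev2 : ∀ᶠ ε in nhdsWithin (0:ℝ) (Ioi 0), ε ^ (p - 1) * C / D < η / 4 :=
      hεC.eventually (eventually_lt_nhds (by linarith))
    filter_upwards [hev2, eventually_mem_nhdsWithin] with ε hεsmall hε
    rw [Set.mem_Ioi] at hε
    -- pointwise bounds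
    have hgnn : ∀ x ∈ B, (0:ℝ) ≤ (ε + h1 x - h2 x) ^ (1 - p) := by
      intro x hx
      have := hpos x (lt_trans hx.1 hr1)
      exact Real.rpow_nonneg (by linarith) _
    have hIB : IntegrableOn (fun x : EuclideanSpace ℝ (Fin (n-1)) => (ε + h1 x - h2 x) ^ (1 - p)) B volume :=
      (hIntU ε hε).mono_set diff_subset
    have hIB1 : IntegrableOn (fun x : EuclideanSpace ℝ (Fin (n-1)) => (ε + h1 x - h2 x) ^ (1 - p)) B1 volume :=
      hIB.mono_set inter_subset_left
    have hIB2 : IntegrableOn (fun x : EuclideanSpace ℝ (Fin (n-1)) => (ε + h1 x - h2 x) ^ (1 - p)) B2 volume :=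
      hIB.mono_set inter_subset_left
    have hsplit : ∫ x' in B, (ε + h1 x' - h2 x') ^ (1 - p) =
        (∫ x' in B1, (ε + h1 x' - h2 x') ^ (1 - p)) +
        ∫ x' in B2, (ε + h1 x' - h2 x') ^ (1 - p) := by
      rw [← hB12]
      exact setIntegral_union hdisj12 hB2meas hIB1 hIB2
    have hbd1 : ∫ x' in B1, (ε + h1 x' - h2 x') ^ (1 - p) ≤
        ((volume (cthickening t S)).toReal - D) * ε ^ (1 - p) := by
      have hmono : ∫ x' in B1, (ε + h1 x' - h2 x') ^ (1 - p) ≤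
          ∫ _x' in B1, ε ^ (1 - p) := by
        apply setIntegral_mono_on hIB1 (integrableOn_const hB1fin.ne) hB1meas
        intro x hx
        have hnn := hpos x (lt_trans hx.1.1 hr1)
        exact Real.rpow_le_rpow_of_nonpos hε (by linarith) (by linarith)
      calc ∫ x' in B1, (ε + h1 x' - h2 x') ^ (1 - p) ≤ ∫ _x' in B1, ε ^ (1 - p) := hmono
        _ = (volume B1).toReal * ε ^ (1 - p) := by rw [setIntegral_const, smul_eq_mul]; rfl
        _ ≤ ((volume (cthickening t S)).toReal - D) * ε ^ (1 - p) :=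
          mul_le_mul_of_nonneg_right hB1vol (Real.rpow_nonneg hε.le _)
    have hbd2 : ∫ x' in B2, (ε + h1 x' - h2 x') ^ (1 - p) ≤ C := by
      have hmono : ∫ x' in B2, (ε + h1 x' - h2 x') ^ (1 - p) ≤
          ∫ _x' in B2, (c2 * t ^ 2) ^ (1 - p) := by
        apply setIntegral_mono_on hIB2 (integrableOn_const
          ((lt_of_le_of_lt (measure_mono (fun x hx => hx.1.1)) hUvol).ne)) hB2meas
        intro x hx
        obtain ⟨⟨hxU, hxnc⟩, hxt⟩ := hx
        have hd0 : 0 < infDist x S := lt_trans ht0 hxt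
        have hd1 : infDist x S < 1 := lt_trans hxU hr1
        have hlb := hlow x hd0 hd1
        have hxt' : t < infDist x S := hxt
        have hle : c2 * t ^ 2 ≤ ε + h1 x - h2 x := by
          have ht2 : t ^ 2 ≤ infDist x S ^ 2 := by nlinarith
          nlinarith
        exact Real.rpow_le_rpow_of_nonpos hct hle (by linarith)
      calc ∫ x' in B2, (ε + h1 x' - h2 x') ^ (1 - p)
          ≤ ∫ _x' in B2, (c2 * t ^ 2) ^ (1 - p) := hmono
        _ = (volume B2).toReal * (c2 * t ^ 2) ^ (1 - p) := by
            rw [setIntegral_const, smul_eq_mul]; rfl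
        _ ≤ (volume U).toReal * (c2 * t ^ 2) ^ (1 - p) := by
            apply mul_le_mul_of_nonneg_right _ (Real.rpow_nonneg hct.le _)
            exact ENNReal.toReal_mono hUvol.ne (measure_mono (fun x hx => hx.1.1))
        _ = C := by rw [hCdef]; ring
    have hpow : ε ^ (p - 1) * ε ^ (1 - p) = 1 := by
      rw [← Real.rpow_add hε, show p - 1 + (1 - p) = 0 by ring, Real.rpow_zero]
    have hεpnn : 0 < ε ^ (p - 1) := Real.rpow_pos_of_pos hε _
    have henn : 0 ≤ ε ^ (p - 1) / D * ∫ x' in B, (ε + h1 x' - h2 x') ^ (1 - p) := by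
      apply mul_nonneg (by positivity)
      exact setIntegral_nonneg hBmeas hgnn
    have hVD : 0 ≤ (volume (cthickening t S)).toReal - D := le_trans
      ENNReal.toReal_nonneg hB1vol
    have hub : ε ^ (p - 1) / D * ∫ x' in B, (ε + h1 x' - h2 x') ^ (1 - p) < η := by
      have h1' : ε ^ (p - 1) / D * ∫ x' in B, (ε + h1 x' - h2 x') ^ (1 - p) ≤
          ε ^ (p - 1) / D * (((volume (cthickening t S)).toReal - D) * ε ^ (1 - p) + C) := by
        apply mul_le_mul_of_nonneg_left _ (by positivity)
        rw [hsplit]; exact add_le_add hbd1 hbd2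
      have h2' : ε ^ (p - 1) / D * (((volume (cthickening t S)).toReal - D) * ε ^ (1 - p) + C)
          = ((volume (cthickening t S)).toReal - D) / D + ε ^ (p - 1) * C / D := by
        field_simp
        linear_combination (((volume (cthickening t S)).toReal - D)) * hpow
      have h3' : ((volume (cthickening t S)).toReal - D) / D < η / 4 := by
        rw [div_lt_iff₀ hD0]; nlinarith
      calc ε ^ (p - 1) / D * ∫ x' in B, (ε + h1 x' - h2 x') ^ (1 - p)
          ≤ ((volume (cthickening t S)).toReal - D) / D + ε ^ (p - 1) * C / D := by
            rw [← h2']; exact h1'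
        _ < η / 4 + η / 4 := add_lt_add h3' hεsmall
        _ < η := by linarith
    rw [Real.dist_eq, sub_zero, abs_of_nonneg henn]
    exact hub
  -- conclude
  have hmain : Tendsto (fun ε : ℝ =>
      1 + ε ^ (p - 1) / D * ∫ x' in B, (ε + h1 x' - h2 x') ^ (1 - p))
      (nhdsWithin 0 (Ioi 0)) (nhds 1) := by
    simpa using tendsto_const_nhds.add herr
  refine Tendsto.congr' ?_ hmain
  filter_upwards [eventually_mem_nhdsWithin] with ε hε
  rw [Set.mem_Ioi] at hε
  exact (key ε hε).symm
end

section
/- Let n ≥ 2 be an integer, γ ∈ (0,1), p = (n+γ)/(1+γ) (so that p−1 = (n−1)/(1+γ)), r ∈ (0,1), and c0 > 1. Let a : ℝ^{n−1} → ℝ be a measurable function with 1/c0 ≤ a(x') ≤ c0 for all |x'| < r. Define K := (1+γ)·Γ((n−1)/2)/(2π^{(n−1)/2}), and for ε ∈ (0,1) set I(ε) := |ln ε|^{−1} · ∫_{{|x'|<r}} (ε + a(x')|x'|^{1+γ})^{−(n−1)/(1+γ)} dx'. Then c0^{−(n−1)/(1+γ)}/K ≤ liminf_{ε→0⁺} I(ε)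 ≤ limsup_{ε→0⁺} I(ε) ≤ c0^{(n−1)/(1+γ)}/K. -/
open MeasureTheory Filter Set

private lemma aux_hi {γ c M r : ℝ} (h1γ : (0:ℝ) < 1 + γ) :
    Tendsto (fun t : ℝ => t⁻¹ * (c ^ (-(M/(1+γ))) / M +
        c ^ (-(M/(1+γ))) * (Real.log r + (1+γ)⁻¹ * (t + Real.log c))))
      atTop (nhds (c ^ (-(M/(1+γ))) / (1+γ))) := by
  set q := M / (1+γ)
  have h1 : Tendsto (fun t : ℝ =>
      (c ^ (-q) / M + c ^ (-q) * Real.log r + c ^ (-q) * (1+γ)⁻¹ * Real.log c) * t⁻¹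
        + c ^ (-q) * (1+γ)⁻¹) atTop
      (nhds ((c ^ (-q) / M + c ^ (-q) * Real.log r + c ^ (-q) * (1+γ)⁻¹ * Real.log c) * 0
        + c ^ (-q) * (1+γ)⁻¹)) :=
    (tendsto_const_nhds.mul tendsto_inv_atTop_zero).add tendsto_const_nhds
  rw [mul_zero, zero_add, ← div_eq_mul_inv] at h1
  refine h1.congr' ?_
  filter_upwards [eventually_gt_atTop (0:ℝ)] with t ht
  field_simp
  ring

private lemma aux_lo {γ c M r : ℝ} (h1γ : (0:ℝ) < 1 + γ) (hc : 0 < c) :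
    Tendsto (fun t : ℝ => t⁻¹ * (((1 + t⁻¹) * c) ^ (-(M/(1+γ))) *
        (Real.log r + (1+γ)⁻¹ * (t - Real.log t + Real.log c))))
      atTop (nhds (c ^ (-(M/(1+γ))) / (1+γ))) := by
  set q := M / (1+γ)
  have hA : Tendsto (fun t : ℝ => ((1 + t⁻¹) * c) ^ (-q)) atTop (nhds (c ^ (-q))) := by
    have h0 : Tendsto (fun t : ℝ => (1 + t⁻¹) * c) atTop (nhds c) := by
      have := ((tendsto_const_nhds (x := (1:ℝ))).add tendsto_inv_atTop_zero).mul_const c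
      simpa using this
    exact h0.rpow_const (Or.inl hc.ne')
  have hlog : Tendsto (fun t : ℝ => Real.log t / t) atTop (nhds 0) := by
    simpa using Real.isLittleO_log_id_atTop.tendsto_div_nhds_zero
  have hB : Tendsto (fun t : ℝ =>
      Real.log r * t⁻¹ + (1+γ)⁻¹ * (1 - Real.log t / t + Real.log c * t⁻¹)) atTop
      (nhds (Real.log r * 0 + (1+γ)⁻¹ * (1 - 0 + Real.log c * 0))) :=
    (tendsto_const_nhds.mul tendsto_inv_atTop_zero).add
      (tendsto_const_nhds.mul ((tendsto_const_nhds.sub hlog).add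
        (tendsto_const_nhds.mul tendsto_inv_atTop_zero)))
  have h2 := hA.mul hB
  have heq : c ^ (-q) * (Real.log r * 0 + (1+γ)⁻¹ * (1 - 0 + Real.log c * 0))
      = c ^ (-q) / (1+γ) := by ring
  rw [heq] at h2
  refine h2.congr' ?_
  filter_upwards [eventually_gt_atTop (0:ℝ)] with t ht
  field_simp
private lemma aux_key {γ M q cc y : ℝ} (h1γ : (0:ℝ) < 1 + γ) (hq : q = M / (1+γ))
    (hcc : 0 < cc) (hy : 0 < y) :
    y ^ (M - 1) * (cc * y ^ (1 + γ)) ^ (-q) = cc ^ (-q) * y⁻¹ := by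
  rw [Real.mul_rpow hcc.le (Real.rpow_nonneg hy.le _), ← Real.rpow_mul hy.le, mul_left_comm]
  congr 1
  rw [← Real.rpow_add hy]
  have h : M - 1 + (1 + γ) * (-q) = -1 := by
    rw [hq]; field_simp; ring
  rw [h, Real.rpow_neg_one]

private lemma aux_intg {γ c q M : ℝ} (hγ : 0 < γ) (hc : 0 < c)
    {ε : ℝ} (hε : 0 < ε) (hM : 1 ≤ M) {A B : ℝ} (hA : 0 ≤ A) (hAB : A ≤ B) :
    IntervalIntegrable (fun y : ℝ => y ^ (M - 1) * (ε + c * y ^ (1 + γ)) ^ (-q))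
      volume A B := by
  apply ContinuousOn.intervalIntegrable
  rw [uIcc_of_le hAB]
  have h1 : ContinuousOn (fun y : ℝ => y ^ (M - 1)) (Icc A B) :=
    continuousOn_id.rpow_const (fun x _ => Or.inr (by linarith))
  have h2 : ContinuousOn (fun y : ℝ => (ε + c * y ^ (1 + γ)) ^ (-q)) (Icc A B) := by
    apply ContinuousOn.rpow_const
    · exact continuousOn_const.add (continuousOn_const.mul
        (continuousOn_id.rpow_const (fun x _ => Or.inr (by linarith))))
    · intro x hx
      have hx0 : (0:ℝ) ≤ x := le_trans hA hx.1
      have : (0:ℝ) ≤ c * x ^ (1 + γ) := mul_nonneg hc.le (Real.rpow_nonneg hx0 _)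
      exact Or.inl (by positivity)
  exact h1.mul h2

private lemma aux_oneDim {γ c r M : ℝ} (hγ : 0 < γ) (hc : 0 < c) (hr : 0 < r) (hM : 1 ≤ M) :
    Tendsto (fun ε : ℝ => (-Real.log ε)⁻¹ *
        ∫ y in (0:ℝ)..r, y ^ (M - 1) * (ε + c * y ^ (1 + γ)) ^ (-(M / (1 + γ))))
      (nhdsWithin 0 (Ioi 0)) (nhds (c ^ (-(M / (1 + γ))) / (1 + γ))) := by
  have h1γ : (0:ℝ) < 1 + γ := by linarith
  set q := M / (1 + γ) with hqdef
  have hq : 0 < q := div_pos (by linarith) h1γ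
  have hM0 : 0 < M := by linarith
  have hT : Tendsto (fun ε : ℝ => -Real.log ε) (nhdsWithin (0:ℝ) (Ioi 0)) atTop :=
    tendsto_neg_atTop_iff.mpr Real.tendsto_log_nhdsGT_zero
  -- eventual facts
  have e1 : ∀ᶠ ε in nhdsWithin (0:ℝ) (Ioi 0), (0:ℝ) < ε :=
    eventually_mem_nhdsWithin
  have hδ : (0:ℝ) < min (Real.exp (-1)) (c * r ^ (1 + γ)) := by
    have := Real.exp_pos (-1)
    have : (0:ℝ) < c * r ^ (1 + γ) := by positivity
    simp [Real.exp_pos]; positivity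
  have e2 : ∀ᶠ ε in nhdsWithin (0:ℝ) (Ioi 0),
      ε < min (Real.exp (-1)) (c * r ^ (1 + γ)) :=
    (gt_mem_nhds hδ).filter_mono nhdsWithin_le_nhds
  have e3 : ∀ᶠ ε in nhdsWithin (0:ℝ) (Ioi 0), ε * (-Real.log ε) < c * r ^ (1 + γ) := by
    have hm : Tendsto (fun ε : ℝ => ε * (-Real.log ε)) (nhdsWithin (0:ℝ) (Ioi 0)) (nhds 0) := by
      have h := (Real.continuous_mul_log.tendsto 0).mono_left
        (nhdsWithin_le_nhds (s := Ioi (0:ℝ)))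
      have h' := h.neg
      simp only [zero_mul, neg_zero] at h'
      exact h'.congr (fun ε => by ring)
    exact hm.eventually (gt_mem_nhds (by positivity))
  -- upper bound
  have hUpper : ∀ᶠ ε in nhdsWithin (0:ℝ) (Ioi 0),
      (-Real.log ε)⁻¹ * ∫ y in (0:ℝ)..r, y ^ (M - 1) * (ε + c * y ^ (1 + γ)) ^ (-q) ≤
      ((fun t : ℝ => t⁻¹ * (c ^ (-q) / M +
        c ^ (-q) * (Real.log r + (1+γ)⁻¹ * (t + Real.log c)))) ∘ fun ε => -Real.log ε) ε := by
    filter_upwards [e1, e2] with ε hε hεδ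
    have hεe : ε < Real.exp (-1) := lt_of_lt_of_le hεδ (min_le_left _ _)
    have hεc : ε < c * r ^ (1 + γ) := lt_of_lt_of_le hεδ (min_le_right _ _)
    have ht1 : 1 < -Real.log ε := by
      have := Real.log_lt_log hε hεe
      rw [Real.log_exp] at this; linarith
    have ht0 : 0 < -Real.log ε := by linarith
    set t := -Real.log ε with htdef
    set s0 := (ε / c) ^ ((1 + γ)⁻¹) with hs0def
    have hεcpos : 0 < ε / c := div_pos hε hc
    have hs0pos : 0 < s0 := Real.rpow_pos_of_pos hεcpos _
    have hs0r : s0 ≤ r := by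
      have h1 : ε / c ≤ r ^ (1 + γ) := (div_le_iff₀ hc).mpr (by linarith [mul_comm c (r ^ (1+γ))])
      calc s0 ≤ (r ^ (1 + γ)) ^ ((1 + γ)⁻¹) :=
            Real.rpow_le_rpow hεcpos.le h1 (inv_nonneg.mpr h1γ.le)
        _ = r := Real.rpow_rpow_inv hr.le h1γ.ne'
    have hint1 : IntervalIntegrable (fun y : ℝ => y ^ (M - 1) * (ε + c * y ^ (1 + γ)) ^ (-q))
        volume 0 s0 := aux_intg hγ hc hε hM le_rfl hs0pos.le
    have hint2 : IntervalIntegrable (fun y : ℝ => y ^ (M - 1) * (ε + c * y ^ (1 + γ)) ^ (-q))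
        volume s0 r := aux_intg hγ hc hε hM hs0pos.le hs0r
    have hsplit : (∫ y in (0:ℝ)..r, y ^ (M - 1) * (ε + c * y ^ (1 + γ)) ^ (-q)) =
        (∫ y in (0:ℝ)..s0, y ^ (M - 1) * (ε + c * y ^ (1 + γ)) ^ (-q)) +
        ∫ y in s0..r, y ^ (M - 1) * (ε + c * y ^ (1 + γ)) ^ (-q) :=
      (intervalIntegral.integral_add_adjacent_intervals hint1 hint2).symm
    have hb1 : (∫ y in (0:ℝ)..s0, y ^ (M - 1) * (ε + c * y ^ (1 + γ)) ^ (-q)) ≤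
        ∫ y in (0:ℝ)..s0, y ^ (M - 1) * ε ^ (-q) := by
      apply intervalIntegral.integral_mono_on hs0pos.le hint1
        ((intervalIntegral.intervalIntegrable_rpow' (by linarith)).mul_const _)
      intro y hy
      have hbase : ε ≤ ε + c * y ^ (1 + γ) :=
        le_add_of_nonneg_right (mul_nonneg hc.le (Real.rpow_nonneg hy.1 _))
      exact mul_le_mul_of_nonneg_left
        (Real.rpow_le_rpow_of_nonpos hε hbase (neg_nonpos.mpr hq.le))
        (Real.rpow_nonneg hy.1 _)
    have hv1 : (∫ y in (0:ℝ)..s0, y ^ (M - 1) * ε ^ (-q)) = c ^ (-q) / M := by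
      rw [intervalIntegral.integral_mul_const,
        integral_rpow (Or.inl (by linarith : (-1:ℝ) < M - 1)), sub_add_cancel,
        Real.zero_rpow hM0.ne', sub_zero]
      have hs0M : s0 ^ M = ε ^ q / c ^ q := by
        rw [hs0def, ← Real.rpow_mul hεcpos.le]
        have : (1 + γ)⁻¹ * M = q := by rw [hqdef]; field_simp
        rw [this, Real.div_rpow hε.le hc.le]
      rw [hs0M, Real.rpow_neg hε.le, Real.rpow_neg hc.le]
      have h1 : ε ^ q ≠ 0 := (Real.rpow_pos_of_pos hε q).ne'
      field_simp
    have hb2 : (∫ y in s0..r, y ^ (M - 1) * (ε + c * y ^ (1 + γ)) ^ (-q)) ≤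
        ∫ y in s0..r, c ^ (-q) * y⁻¹ := by
      apply intervalIntegral.integral_mono_on hs0r hint2
      · apply ContinuousOn.intervalIntegrable
        apply continuousOn_const.mul (continuousOn_inv₀.mono ?_)
        intro x hx
        rw [uIcc_of_le hs0r] at hx
        exact (lt_of_lt_of_le hs0pos hx.1).ne'
      · intro y hy
        have hy0 : 0 < y := lt_of_lt_of_le hs0pos hy.1
        have hbase : c * y ^ (1 + γ) ≤ ε + c * y ^ (1 + γ) := le_add_of_nonneg_left hε.le
        have hcy : 0 < c * y ^ (1 + γ) := by
          have := Real.rpow_pos_of_pos hy0 (1 + γ); positivity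
        calc y ^ (M - 1) * (ε + c * y ^ (1 + γ)) ^ (-q)
            ≤ y ^ (M - 1) * (c * y ^ (1 + γ)) ^ (-q) :=
              mul_le_mul_of_nonneg_left
                (Real.rpow_le_rpow_of_nonpos hcy hbase (neg_nonpos.mpr hq.le))
                (Real.rpow_nonneg hy0.le _)
          _ = c ^ (-q) * y⁻¹ := aux_key h1γ hqdef hc hy0
    have hv2 : (∫ y in s0..r, c ^ (-q) * y⁻¹) = c ^ (-q) * (Real.log r - Real.log s0) := by
      rw [intervalIntegral.integral_const_mul, integral_inv_of_pos hs0pos hr,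
        Real.log_div hr.ne' hs0pos.ne']
    have hlogs0 : Real.log s0 = (1 + γ)⁻¹ * (Real.log ε - Real.log c) := by
      rw [hs0def, Real.log_rpow hεcpos, Real.log_div hε.ne' hc.ne']
    simp only [Function.comp]
    apply mul_le_mul_of_nonneg_left _ (inv_nonneg.mpr ht0.le)
    rw [hsplit]
    calc (∫ y in (0:ℝ)..s0, y ^ (M - 1) * (ε + c * y ^ (1 + γ)) ^ (-q)) +
        ∫ y in s0..r, y ^ (M - 1) * (ε + c * y ^ (1 + γ)) ^ (-q)
        ≤ c ^ (-q) / M + c ^ (-q) * (Real.log r - Real.log s0) := by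
          rw [← hv1, ← hv2]; exact add_le_add hb1 hb2
      _ = c ^ (-q) / M + c ^ (-q) * (Real.log r + (1+γ)⁻¹ * (t + Real.log c)) := by
          rw [hlogs0]
          have hlε : Real.log ε = -t := by rw [htdef]; ring
          rw [hlε]; ring
  -- lower bound
  have hLower : ∀ᶠ ε in nhdsWithin (0:ℝ) (Ioi 0),
      ((fun t : ℝ => t⁻¹ * (((1 + t⁻¹) * c) ^ (-q) *
        (Real.log r + (1+γ)⁻¹ * (t - Real.log t + Real.log c)))) ∘ fun ε => -Real.log ε) ε ≤
      (-Real.log ε)⁻¹ * ∫ y in (0:ℝ)..r, y ^ (M - 1) * (ε + c * y ^ (1 + γ)) ^ (-q) := by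
    filter_upwards [e1, e2, e3] with ε hε hεδ hεm
    have hεe : ε < Real.exp (-1) := lt_of_lt_of_le hεδ (min_le_left _ _)
    have ht1 : 1 < -Real.log ε := by
      have := Real.log_lt_log hε hεe
      rw [Real.log_exp] at this; linarith
    have ht0 : 0 < -Real.log ε := by linarith
    set t := -Real.log ε with htdef
    have hX : 0 < ε * t / c := by positivity
    set s1 := (ε * t / c) ^ ((1 + γ)⁻¹) with hs1def
    have hs1pos : 0 < s1 := Real.rpow_pos_of_pos hX _
    have hs1r : s1 ≤ r := by
      have h1 : ε * t / c ≤ r ^ (1 + γ) :=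
        (div_le_iff₀ hc).mpr (by linarith [mul_comm c (r ^ (1+γ))])
      calc s1 ≤ (r ^ (1 + γ)) ^ ((1 + γ)⁻¹) :=
            Real.rpow_le_rpow hX.le h1 (inv_nonneg.mpr h1γ.le)
        _ = r := Real.rpow_rpow_inv hr.le h1γ.ne'
    have hint1 : IntervalIntegrable (fun y : ℝ => y ^ (M - 1) * (ε + c * y ^ (1 + γ)) ^ (-q))
        volume 0 s1 := aux_intg hγ hc hε hM le_rfl hs1pos.le
    have hint2 : IntervalIntegrable (fun y : ℝ => y ^ (M - 1) * (ε + c * y ^ (1 + γ)) ^ (-q))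
        volume s1 r := aux_intg hγ hc hε hM hs1pos.le hs1r
    have hsplit : (∫ y in (0:ℝ)..r, y ^ (M - 1) * (ε + c * y ^ (1 + γ)) ^ (-q)) =
        (∫ y in (0:ℝ)..s1, y ^ (M - 1) * (ε + c * y ^ (1 + γ)) ^ (-q)) +
        ∫ y in s1..r, y ^ (M - 1) * (ε + c * y ^ (1 + γ)) ^ (-q) :=
      (intervalIntegral.integral_add_adjacent_intervals hint1 hint2).symm
    have hnn : 0 ≤ ∫ y in (0:ℝ)..s1, y ^ (M - 1) * (ε + c * y ^ (1 + γ)) ^ (-q) := by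
      apply intervalIntegral.integral_nonneg hs1pos.le
      intro y hy
      have h2 : (0:ℝ) ≤ ε + c * y ^ (1 + γ) := by
        have := Real.rpow_nonneg hy.1 (1 + γ); positivity
      exact mul_nonneg (Real.rpow_nonneg hy.1 _) (Real.rpow_nonneg h2 _)
    have hccpos : 0 < (1 + t⁻¹) * c := by positivity
    have hb3 : (∫ y in s1..r, ((1 + t⁻¹) * c) ^ (-q) * y⁻¹) ≤
        ∫ y in s1..r, y ^ (M - 1) * (ε + c * y ^ (1 + γ)) ^ (-q) := by
      apply intervalIntegral.integral_mono_on hs1r _ hint2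
      · intro y hy
        have hy0 : 0 < y := lt_of_lt_of_le hs1pos hy.1
        have hy1γ : 0 < y ^ (1 + γ) := Real.rpow_pos_of_pos hy0 _
        have hbase0 : 0 < ε + c * y ^ (1 + γ) := by positivity
        have hyX : ε * t / c ≤ y ^ (1 + γ) := by
          have := Real.rpow_le_rpow hs1pos.le hy.1 h1γ.le
          rwa [hs1def, Real.rpow_inv_rpow hX.le h1γ.ne'] at this
        have hεle : ε ≤ t⁻¹ * c * y ^ (1 + γ) := by
          have h2 : t⁻¹ * c * (ε * t / c) = ε := by field_simp
          calc ε = t⁻¹ * c * (ε * t / c) := h2.symm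
            _ ≤ t⁻¹ * c * y ^ (1 + γ) :=
                mul_le_mul_of_nonneg_left hyX (by positivity)
        have hbase : ε + c * y ^ (1 + γ) ≤ (1 + t⁻¹) * c * y ^ (1 + γ) := by
          have : (1 + t⁻¹) * c * y ^ (1 + γ)
              = t⁻¹ * c * y ^ (1 + γ) + c * y ^ (1 + γ) := by ring
          rw [this]; linarith
        calc ((1 + t⁻¹) * c) ^ (-q) * y⁻¹
            = y ^ (M - 1) * ((1 + t⁻¹) * c * y ^ (1 + γ)) ^ (-q) :=
              (aux_key h1γ hqdef hccpos hy0).symm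
          _ ≤ y ^ (M - 1) * (ε + c * y ^ (1 + γ)) ^ (-q) :=
              mul_le_mul_of_nonneg_left
                (Real.rpow_le_rpow_of_nonpos hbase0 hbase (neg_nonpos.mpr hq.le))
                (Real.rpow_nonneg hy0.le _)
      · apply ContinuousOn.intervalIntegrable
        apply continuousOn_const.mul (continuousOn_inv₀.mono ?_)
        intro x hx
        rw [uIcc_of_le hs1r] at hx
        exact (lt_of_lt_of_le hs1pos hx.1).ne'
    have hv3 : (∫ y in s1..r, ((1 + t⁻¹) * c) ^ (-q) * y⁻¹) =
        ((1 + t⁻¹) * c) ^ (-q) * (Real.log r - Real.log s1) := by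
      rw [intervalIntegral.integral_const_mul, integral_inv_of_pos hs1pos hr,
        Real.log_div hr.ne' hs1pos.ne']
    have hlogs1 : Real.log s1 = (1 + γ)⁻¹ * (Real.log ε + Real.log t - Real.log c) := by
      rw [hs1def, Real.log_rpow hX, Real.log_div (by positivity) hc.ne',
        Real.log_mul hε.ne' (by positivity : t ≠ 0)]
    simp only [Function.comp]
    apply mul_le_mul_of_nonneg_left _ (inv_nonneg.mpr ht0.le)
    have hstep : ((1 + t⁻¹) * c) ^ (-q) *
        (Real.log r + (1+γ)⁻¹ * (t - Real.log t + Real.log c)) =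
        ((1 + t⁻¹) * c) ^ (-q) * (Real.log r - Real.log s1) := by
      rw [hlogs1]
      have hlε : Real.log ε = -t := by rw [htdef]; ring
      rw [hlε]; ring
    rw [hstep, ← hv3, hsplit]
    linarith [hb3, hnn]
  have hLoT := (aux_lo (M := M) (r := r) h1γ hc).comp hT
  have hHiT := (aux_hi (M := M) (r := r) (c := c) h1γ).comp hT
  exact tendsto_of_tendsto_of_tendsto_of_le_of_le' hLoT hHiT hLower hUpper

private lemma aux_integrableOn {m : ℕ} {γ q r ε : ℝ} (hγ : 0 < γ) (hq : 0 < q) (hε : 0 < ε)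
    (b : EuclideanSpace ℝ (Fin m) → ℝ) (hb : Measurable b)
    (hb0 : ∀ x, ‖x‖ < r → 0 ≤ b x) :
    IntegrableOn (fun x => (ε + b x * ‖x‖ ^ (1 + γ)) ^ (-q))
      {x : EuclideanSpace ℝ (Fin m) | ‖x‖ < r} := by
  have hS : {x : EuclideanSpace ℝ (Fin m) | ‖x‖ < r} = Metric.ball 0 r := by
    ext x; simp [Metric.mem_ball, dist_zero_right]
  have hSm : MeasurableSet {x : EuclideanSpace ℝ (Fin m) | ‖x‖ < r} := by
    rw [hS]; exact measurableSet_ball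
  have hbase : Measurable fun x : EuclideanSpace ℝ (Fin m) => ε + b x * ‖x‖ ^ (1 + γ) := by
    apply measurable_const.add
    apply hb.mul
    have hcont : Continuous fun x : EuclideanSpace ℝ (Fin m) => ‖x‖ ^ (1 + γ) := by
      apply continuous_iff_continuousAt.mpr
      intro x
      exact (Real.continuousAt_rpow_const _ _ (Or.inr (by linarith))).comp
        (continuous_norm.continuousAt)
    exact hcont.measurable
  have hF : Measurable fun x : EuclideanSpace ℝ (Fin m) =>
      Real.exp (-q * Real.log (ε + b x * ‖x‖ ^ (1 + γ))) :=
    Real.measurable_exp.comp ((Real.measurable_log.comp hbase).const_mul (-q))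
  have hFint : IntegrableOn (fun x : EuclideanSpace ℝ (Fin m) =>
      Real.exp (-q * Real.log (ε + b x * ‖x‖ ^ (1 + γ))))
      {x : EuclideanSpace ℝ (Fin m) | ‖x‖ < r} := by
    apply Measure.integrableOn_of_bounded (M := ε ^ (-q))
    · rw [hS]; exact measure_ball_lt_top.ne
    · exact hF.aestronglyMeasurable
    · filter_upwards [ae_restrict_mem hSm] with x hx
      have hxS : ‖x‖ < r := hx
      have hb' : 0 ≤ b x * ‖x‖ ^ (1 + γ) :=
        mul_nonneg (hb0 x hxS) (Real.rpow_nonneg (norm_nonneg _) _)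
      have hpos : 0 < ε + b x * ‖x‖ ^ (1 + γ) := by linarith
      rw [Real.norm_eq_abs, mul_comm (-q) _, ← Real.rpow_def_of_pos hpos]
      rw [abs_of_nonneg (Real.rpow_nonneg hpos.le _)]
      exact Real.rpow_le_rpow_of_nonpos hε (by linarith) (neg_nonpos.mpr hq.le)
  apply hFint.congr_fun _ hSm
  intro x hx
  have hxS : ‖x‖ < r := hx
  have hb' : 0 ≤ b x * ‖x‖ ^ (1 + γ) :=
    mul_nonneg (hb0 x hxS) (Real.rpow_nonneg (norm_nonneg _) _)
  have hpos : 0 < ε + b x * ‖x‖ ^ (1 + γ) := by linarith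
  simp only
  rw [mul_comm (-q) _, ← Real.rpow_def_of_pos hpos]

private lemma aux_sandwich {m : ℕ} {γ q r c0 ε : ℝ} (hγ : 0 < γ) (hq : 0 < q) (hε : 0 < ε)
    (hc0 : 1 < c0)
    (a : EuclideanSpace ℝ (Fin m) → ℝ) (ha_meas : Measurable a)
    (ha : ∀ x : EuclideanSpace ℝ (Fin m), ‖x‖ < r → a x ∈ Icc (c0⁻¹) c0) :
    (∫ x in {x : EuclideanSpace ℝ (Fin m) | ‖x‖ < r}, (ε + c0 * ‖x‖ ^ (1 + γ)) ^ (-q)) ≤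
      (∫ x in {x : EuclideanSpace ℝ (Fin m) | ‖x‖ < r}, (ε + a x * ‖x‖ ^ (1 + γ)) ^ (-q)) ∧
    (∫ x in {x : EuclideanSpace ℝ (Fin m) | ‖x‖ < r}, (ε + a x * ‖x‖ ^ (1 + γ)) ^ (-q)) ≤
      ∫ x in {x : EuclideanSpace ℝ (Fin m) | ‖x‖ < r}, (ε + c0⁻¹ * ‖x‖ ^ (1 + γ)) ^ (-q) := by
  have hc0' : (0:ℝ) < c0⁻¹ := by positivity
  have hSm : MeasurableSet {x : EuclideanSpace ℝ (Fin m) | ‖x‖ < r} := by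
    have : {x : EuclideanSpace ℝ (Fin m) | ‖x‖ < r} = Metric.ball 0 r := by
      ext x; simp [Metric.mem_ball, dist_zero_right]
    rw [this]; exact measurableSet_ball
  have hIa : IntegrableOn (fun x => (ε + a x * ‖x‖ ^ (1 + γ)) ^ (-q))
      {x : EuclideanSpace ℝ (Fin m) | ‖x‖ < r} :=
    aux_integrableOn hγ hq hε a ha_meas (fun x hx => le_trans hc0'.le (ha x hx).1)
  have hIc0 : IntegrableOn (fun x => (ε + c0 * ‖x‖ ^ (1 + γ)) ^ (-q))
      {x : EuclideanSpace ℝ (Fin m) | ‖x‖ < r} :=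
    aux_integrableOn hγ hq hε _ measurable_const (fun x _ => by positivity)
  have hIc0' : IntegrableOn (fun x => (ε + c0⁻¹ * ‖x‖ ^ (1 + γ)) ^ (-q))
      {x : EuclideanSpace ℝ (Fin m) | ‖x‖ < r} :=
    aux_integrableOn hγ hq hε _ measurable_const (fun x _ => hc0'.le)
  constructor
  · apply setIntegral_mono_on hIc0 hIa hSm
    intro x hx
    have hx' : ‖x‖ < r := hx
    have hn : (0:ℝ) ≤ ‖x‖ ^ (1 + γ) := Real.rpow_nonneg (norm_nonneg _) _
    have h1 : 0 < ε + a x * ‖x‖ ^ (1 + γ) := by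
      have : 0 ≤ a x * ‖x‖ ^ (1 + γ) :=
        mul_nonneg (le_trans hc0'.le (ha x hx').1) hn
      linarith
    exact Real.rpow_le_rpow_of_nonpos h1
      (by nlinarith [(ha x hx').2]) (neg_nonpos.mpr hq.le)
  · apply setIntegral_mono_on hIa hIc0' hSm
    intro x hx
    have hx' : ‖x‖ < r := hx
    have hn : (0:ℝ) ≤ ‖x‖ ^ (1 + γ) := Real.rpow_nonneg (norm_nonneg _) _
    have h1 : 0 < ε + c0⁻¹ * ‖x‖ ^ (1 + γ) := by positivity
    exact Real.rpow_le_rpow_of_nonpos h1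
      (by nlinarith [(ha x hx').1]) (neg_nonpos.mpr hq.le)

private lemma aux_polar {m : ℕ} (hm : 1 ≤ m) {γ c q r ε : ℝ} (hγ : 0 < γ) (hc : 0 < c)
    (hr : 0 < r) (hε : 0 < ε) :
    (∫ x in {x : EuclideanSpace ℝ (Fin m) | ‖x‖ < r}, (ε + c * ‖x‖ ^ (1 + γ)) ^ (-q)) =
      ((m : ℝ) * (volume (Metric.ball (0 : EuclideanSpace ℝ (Fin m)) 1)).toReal) *
        ∫ y in (0:ℝ)..r, y ^ ((m:ℝ) - 1) * (ε + c * y ^ (1 + γ)) ^ (-q) := by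
  haveI : Nonempty (Fin m) := ⟨⟨0, hm⟩⟩
  haveI : Nontrivial (EuclideanSpace ℝ (Fin m)) := by
    refine nontrivial_of_ne (EuclideanSpace.single ⟨0, hm⟩ (1:ℝ)) 0 ?_
    intro h
    have := congrArg (fun f => f ⟨0, hm⟩) h
    simp [EuclideanSpace.single_apply] at this
  have hSm : MeasurableSet {x : EuclideanSpace ℝ (Fin m) | ‖x‖ < r} := by
    have hS : {x : EuclideanSpace ℝ (Fin m) | ‖x‖ < r} = Metric.ball 0 r := by
      ext x; simp [Metric.mem_ball, dist_zero_right]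
    rw [hS]; exact measurableSet_ball
  set g : ℝ → ℝ := fun y => if y < r then (ε + c * y ^ (1 + γ)) ^ (-q) else 0 with hgdef
  have h2 : (∫ x in {x : EuclideanSpace ℝ (Fin m) | ‖x‖ < r}, (ε + c * ‖x‖ ^ (1 + γ)) ^ (-q))
      = ∫ x : EuclideanSpace ℝ (Fin m), g ‖x‖ := by
    rw [← integral_indicator hSm]
    congr 1
  rw [h2, integral_fun_norm_addHaar volume g, finrank_euclideanSpace_fin]
  have h3 : (∫ y in Ioi (0:ℝ), y ^ (m - 1) • g y) =
      ∫ y in (0:ℝ)..r, y ^ ((m:ℝ) - 1) * (ε + c * y ^ (1 + γ)) ^ (-q) := by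
    have hpt : ∀ y : ℝ, y ^ (m - 1) • g y =
        indicator (Iio r) (fun y => y ^ ((m:ℝ) - 1) * (ε + c * y ^ (1 + γ)) ^ (-q)) y := by
      intro y
      have hcast : ((m:ℝ) - 1) = ((m - 1 : ℕ) : ℝ) := by
        rw [Nat.cast_sub hm, Nat.cast_one]
      simp only [hgdef, indicator_apply, mem_Iio, smul_eq_mul]
      split_ifs with h
      · rw [hcast, Real.rpow_natCast]
      · rw [mul_zero]
    simp_rw [hpt]
    rw [setIntegral_indicator measurableSet_Iio, Ioi_inter_Iio,
      intervalIntegral.integral_of_le hr.le, integral_Ioc_eq_integral_Ioo]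
  rw [h3, nsmul_eq_mul, smul_eq_mul]
  simp only [Measure.real]
  ring

private lemma aux_sigma {m : ℕ} (hm : 1 ≤ m) :
    (m : ℝ) * (volume (Metric.ball (0 : EuclideanSpace ℝ (Fin m)) 1)).toReal
      = 2 * Real.pi ^ ((m:ℝ)/2) / Real.Gamma ((m:ℝ)/2) := by
  haveI : Nonempty (Fin m) := ⟨⟨0, hm⟩⟩
  have hm0 : ((m:ℝ)/2) ≠ 0 := by positivity
  have hΓpos : 0 < Real.Gamma ((m:ℝ)/2) := Real.Gamma_pos_of_pos (by positivity)
  rw [EuclideanSpace.volume_ball, Fintype.card_fin]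
  rw [ENNReal.ofReal_one, one_pow, one_mul, ENNReal.toReal_ofReal (by positivity)]
  have hsq : (Real.sqrt Real.pi) ^ m = Real.pi ^ ((m:ℝ)/2) := by
    rw [Real.sqrt_eq_rpow, ← Real.rpow_natCast (Real.pi ^ ((1:ℝ)/2)) m,
      ← Real.rpow_mul Real.pi_pos.le]
    congr 1
    push_cast
    ring
  have hΓ : Real.Gamma ((m:ℝ)/2 + 1) = ((m:ℝ)/2) * Real.Gamma ((m:ℝ)/2) :=
    Real.Gamma_add_one hm0
  rw [hsq, hΓ]
  field_simp

/-- Lemma 4.1, critical case `p = (n+γ)/(1+γ)`. -/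
theorem liminf_limsup_scaled_integral_C1gamma_critical
    {n : ℕ} (hn : 2 ≤ n) (γ p r c0 : ℝ) (hγ : γ ∈ Ioo (0:ℝ) 1)
    (hp : p = ((n:ℝ) + γ) / (1 + γ)) (hr : r ∈ Ioo (0:ℝ) 1) (hc0 : 1 < c0)
    (a : EuclideanSpace ℝ (Fin (n-1)) → ℝ) (ha_meas : Measurable a)
    (ha : ∀ x' : EuclideanSpace ℝ (Fin (n-1)), ‖x'‖ < r → a x' ∈ Icc (c0⁻¹) c0) :
    let K : ℝ := (1 + γ) * Real.Gamma (((n:ℝ) - 1) / 2) /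
      (2 * Real.pi ^ (((n:ℝ) - 1) / 2))
    let I : ℝ → ℝ := fun ε =>
      |Real.log ε|⁻¹ *
        ∫ x' in {x' : EuclideanSpace ℝ (Fin (n-1)) | ‖x'‖ < r},
          (ε + a x' * ‖x'‖ ^ (1 + γ)) ^ (-(((n:ℝ) - 1) / (1 + γ)))
    c0 ^ (-(((n:ℝ) - 1) / (1 + γ))) / K ≤ liminf I (nhdsWithin 0 (Ioi 0)) ∧
      liminf I (nhdsWithin 0 (Ioi 0)) ≤ limsup I (nhdsWithin 0 (Ioi 0)) ∧
      limsup I (nhdsWithin 0 (Ioi 0)) ≤ c0 ^ (((n:ℝ) - 1) / (1 + γ)) / K := by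
  intro K I
  have hγ0 : 0 < γ := hγ.1
  have h1γ : (0:ℝ) < 1 + γ := by linarith
  have hm : 1 ≤ n - 1 := by omega
  have hcast : ((n:ℝ) - 1) = ((n - 1 : ℕ) : ℝ) := by
    rw [Nat.cast_sub (by omega : 1 ≤ n), Nat.cast_one]
  set M : ℝ := ((n - 1 : ℕ) : ℝ) with hMdef
  have hM : (1:ℝ) ≤ M := by rw [hMdef]; exact_mod_cast hm
  set q : ℝ := M / (1 + γ) with hqdef
  have hq : 0 < q := div_pos (by linarith) h1γ
  have hc0pos : (0:ℝ) < c0 := by linarith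
  have hc0' : (0:ℝ) < c0⁻¹ := by positivity
  set σ : ℝ := M * (volume (Metric.ball (0 : EuclideanSpace ℝ (Fin (n - 1))) 1)).toReal
    with hσdef
  have hσval : σ = 2 * Real.pi ^ (M/2) / Real.Gamma (M/2) := by
    rw [hσdef, hMdef]; exact_mod_cast aux_sigma hm
  have hσpos : 0 < σ := by
    rw [hσval]
    have h1 : 0 < Real.pi ^ (M/2) := Real.rpow_pos_of_pos Real.pi_pos _
    have h2 : 0 < Real.Gamma (M/2) := Real.Gamma_pos_of_pos (by positivity)
    positivity
  have hKval : K = (1 + γ) * Real.Gamma (M / 2) / (2 * Real.pi ^ (M / 2)) := by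
    show (1 + γ) * Real.Gamma (((n:ℝ) - 1) / 2) / (2 * Real.pi ^ (((n:ℝ) - 1) / 2)) = _
    rw [hcast]
  have hKpos : 0 < K := by
    rw [hKval]
    have h1 : 0 < Real.pi ^ (M/2) := Real.rpow_pos_of_pos Real.pi_pos _
    have h2 : 0 < Real.Gamma (M/2) := Real.Gamma_pos_of_pos (by positivity)
    positivity
  have hσK : ∀ x : ℝ, σ * (x / (1 + γ)) = x / K := by
    intro x
    rw [hσval, hKval]
    have h1 : (0:ℝ) < Real.pi ^ (M/2) := Real.rpow_pos_of_pos Real.pi_pos _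
    have h2 : (0:ℝ) < Real.Gamma (M/2) := Real.Gamma_pos_of_pos (by positivity)
    field_simp
  -- the sandwiching functions
  set L : ℝ → ℝ := fun ε => σ * ((-Real.log ε)⁻¹ *
    ∫ y in (0:ℝ)..r, y ^ (M - 1) * (ε + c0 * y ^ (1 + γ)) ^ (-q)) with hLdef
  set U : ℝ → ℝ := fun ε => σ * ((-Real.log ε)⁻¹ *
    ∫ y in (0:ℝ)..r, y ^ (M - 1) * (ε + c0⁻¹ * y ^ (1 + γ)) ^ (-q)) with hUdef
  have hLtend : Tendsto L (nhdsWithin 0 (Ioi 0)) (nhds (c0 ^ (-q) / K)) := by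
    have := (aux_oneDim hγ0 hc0pos hr.1 hM).const_mul σ
    rwa [hσK (c0 ^ (-q))] at this
  have hUtend : Tendsto U (nhdsWithin 0 (Ioi 0)) (nhds (c0 ^ q / K)) := by
    have := (aux_oneDim hγ0 hc0' hr.1 hM).const_mul σ
    have hinv : (c0⁻¹) ^ (-(M / (1 + γ))) = c0 ^ q := by
      rw [Real.inv_rpow hc0pos.le, ← Real.rpow_neg hc0pos.le, neg_neg]
    rwa [hinv, hσK (c0 ^ q)] at this
  -- eventual inequalities
  have e1 : ∀ᶠ ε in nhdsWithin (0:ℝ) (Ioi 0), (0:ℝ) < ε := eventually_mem_nhdsWithin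
  have e2 : ∀ᶠ ε in nhdsWithin (0:ℝ) (Ioi 0), ε < 1 :=
    (gt_mem_nhds one_pos).filter_mono nhdsWithin_le_nhds
  have hIeq : ∀ ε : ℝ, 0 < ε → ε < 1 → I ε = (-Real.log ε)⁻¹ *
      ∫ x in {x : EuclideanSpace ℝ (Fin (n - 1)) | ‖x‖ < r},
        (ε + a x * ‖x‖ ^ (1 + γ)) ^ (-q) := by
    intro ε hε hε1
    show |Real.log ε|⁻¹ * _ = _
    rw [abs_of_neg (Real.log_neg hε hε1), hcast]
  have hLI : ∀ᶠ ε in nhdsWithin (0:ℝ) (Ioi 0), L ε ≤ I ε := by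
    filter_upwards [e1, e2] with ε hε hε1
    rw [hIeq ε hε hε1, hLdef]
    have hpolar := aux_polar (γ := γ) (c := c0) (q := q) hm hγ0 hc0pos hr.1 hε
    have hsand := (aux_sandwich hγ0 hq hε hc0 a ha_meas ha).1
    have hlog : (0:ℝ) ≤ (-Real.log ε)⁻¹ :=
      inv_nonneg.mpr (by simpa using (Real.log_neg hε hε1).le)
    calc σ * ((-Real.log ε)⁻¹ *
          ∫ y in (0:ℝ)..r, y ^ (M - 1) * (ε + c0 * y ^ (1 + γ)) ^ (-q))
        = (-Real.log ε)⁻¹ * (σ *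
          ∫ y in (0:ℝ)..r, y ^ (M - 1) * (ε + c0 * y ^ (1 + γ)) ^ (-q)) := by ring
      _ = (-Real.log ε)⁻¹ *
          ∫ x in {x : EuclideanSpace ℝ (Fin (n - 1)) | ‖x‖ < r},
            (ε + c0 * ‖x‖ ^ (1 + γ)) ^ (-q) := by rw [hpolar]
      _ ≤ _ := mul_le_mul_of_nonneg_left hsand hlog
  have hIU : ∀ᶠ ε in nhdsWithin (0:ℝ) (Ioi 0), I ε ≤ U ε := by
    filter_upwards [e1, e2] with ε hε hε1
    rw [hIeq ε hε hε1, hUdef]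
    have hpolar := aux_polar (γ := γ) (c := c0⁻¹) (q := q) hm hγ0 hc0' hr.1 hε
    have hsand := (aux_sandwich hγ0 hq hε hc0 a ha_meas ha).2
    have hlog : (0:ℝ) ≤ (-Real.log ε)⁻¹ :=
      inv_nonneg.mpr (by simpa using (Real.log_neg hε hε1).le)
    calc (-Real.log ε)⁻¹ *
          ∫ x in {x : EuclideanSpace ℝ (Fin (n - 1)) | ‖x‖ < r},
            (ε + a x * ‖x‖ ^ (1 + γ)) ^ (-q)
        ≤ (-Real.log ε)⁻¹ *
          ∫ x in {x : EuclideanSpace ℝ (Fin (n - 1)) | ‖x‖ < r},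
            (ε + c0⁻¹ * ‖x‖ ^ (1 + γ)) ^ (-q) := mul_le_mul_of_nonneg_left hsand hlog
      _ = σ * ((-Real.log ε)⁻¹ *
          ∫ y in (0:ℝ)..r, y ^ (M - 1) * (ε + c0⁻¹ * y ^ (1 + γ)) ^ (-q)) := by
            rw [hpolar]; ring
  -- boundedness
  have hbddU : IsBoundedUnder (· ≤ ·) (nhdsWithin (0:ℝ) (Ioi 0)) I :=
    hUtend.isBoundedUnder_le.mono_le hIU
  have hbddL : IsBoundedUnder (· ≥ ·) (nhdsWithin (0:ℝ) (Ioi 0)) I :=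
    hLtend.isBoundedUnder_ge.mono_ge hLI
  have hexp : -(((n:ℝ) - 1) / (1 + γ)) = -q := by rw [hcast]
  have hexp2 : (((n:ℝ) - 1) / (1 + γ)) = q := by rw [hcast]
  refine ⟨?_, ?_, ?_⟩
  · rw [hexp]
    calc c0 ^ (-q) / K = liminf L (nhdsWithin (0:ℝ) (Ioi 0)) := (hLtend.liminf_eq).symm
      _ ≤ liminf I (nhdsWithin (0:ℝ) (Ioi 0)) :=
          liminf_le_liminf hLI hLtend.isBoundedUnder_ge hbddU.isCoboundedUnder_ge
  · exact liminf_le_limsup hbddU hbddL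
  · rw [hexp2]
    calc limsup I (nhdsWithin (0:ℝ) (Ioi 0))
        ≤ limsup U (nhdsWithin (0:ℝ) (Ioi 0)) :=
          limsup_le_limsup hIU hbddL.isCoboundedUnder_le hUtend.isBoundedUnder_le
      _ = c0 ^ q / K := hUtend.limsup_eq
end

section
/- Let n ≥ 2 be an integer and γ ∈ (0,1). Then the function s ↦ s^{n−2}/(1+s^{1+γ})^{(n−1)/(1+γ)} − s^{γ}/(1+s^{1+γ}) is absolutely integrable on (0,∞), i.e., ∫_0^∞ | s^{n−2}/(1+s^{1+γ})^{(n−1)/(1+γ)} − s^{γ}/(1+s^{1+γ}) | ds < ∞. -/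
open MeasureTheory Set

lemma aux_tp_sub (p t : ℝ) (hp : 0 < p) (ht0 : 0 < t) (ht1 : t ≤ 1) :
    |t ^ p - t| ≤ (p + 2) * (1 - t) := by
  have h1 : t ^ p ≤ 1 := Real.rpow_le_one ht0.le ht1 hp.le
  have h2 : 1 - t ^ p ≤ (p + 1) * (1 - t) := by
    rcases le_or_gt 1 p with h | h
    · have hb := one_add_mul_self_le_rpow_one_add (by linarith : (-1:ℝ) ≤ t - 1) h
      have he : (1 + (t - 1)) = t := by ring
      rw [he] at hb
      nlinarith
    · have ht : t ^ (1:ℝ) ≤ t ^ p := Real.rpow_le_rpow_of_exponent_ge ht0 ht1 h.le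
      rw [Real.rpow_one] at ht
      nlinarith
  rcases abs_cases (t ^ p - t) with ⟨he, _⟩ | ⟨he, _⟩ <;> rw [he] <;> nlinarith

/-- The term II in the proof of Lemma 4.1 (critical case): the difference between the
critical-case integrand and its logarithmic model is absolutely integrable on `(0, ∞)`. -/
theorem integrableOn_critical_integrand_sub_model
    {n : ℕ} (hn : 2 ≤ n) (γ : ℝ) (hγ : γ ∈ Ioo (0:ℝ) 1) :
    IntegrableOn
      (fun s : ℝ =>
        s ^ ((n:ℝ) - 2) / (1 + s ^ (1 + γ)) ^ (((n:ℝ) - 1) / (1 + γ)) -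
          s ^ γ / (1 + s ^ (1 + γ)))
      (Ioi 0) := by
  obtain ⟨hγ0, hγ1⟩ := hγ
  have h1γ : (0:ℝ) < 1 + γ := by linarith
  have hn2 : (2:ℝ) ≤ (n:ℝ) := by exact_mod_cast hn
  set p : ℝ := ((n:ℝ) - 1) / (1 + γ) with hpdef
  set q : ℝ := 1 / (1 + γ) with hqdef
  have hp : 0 < p := div_pos (by linarith) h1γ
  set F : ℝ → ℝ := fun s =>
      s ^ ((n:ℝ) - 2) / (1 + s ^ (1 + γ)) ^ p - s ^ γ / (1 + s ^ (1 + γ)) with hF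
  -- continuity on Ioi 0
  have hcont : ContinuousOn F (Ioi (0:ℝ)) := by
    have hden : ∀ s ∈ Ioi (0:ℝ), (0:ℝ) < 1 + s ^ (1 + γ) := fun s hs => by
      have := Real.rpow_pos_of_pos (mem_Ioi.mp hs) (1 + γ); linarith
    have hbase : ContinuousOn (fun s : ℝ => 1 + s ^ (1 + γ)) (Ioi 0) :=
      continuousOn_const.add (continuousOn_id.rpow_const
        (fun s hs => Or.inl (ne_of_gt (mem_Ioi.mp hs))))
    apply ContinuousOn.sub
    · exact (continuousOn_id.rpow_const
        (fun s hs => Or.inl (ne_of_gt (mem_Ioi.mp hs)))).div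
        (hbase.rpow_const (fun s hs => Or.inr (div_nonneg (by linarith) h1γ.le)))
        (fun s hs => ne_of_gt (Real.rpow_pos_of_pos (hden s hs) p))
    · exact (continuousOn_id.rpow_const
        (fun s hs => Or.inl (ne_of_gt (mem_Ioi.mp hs)))).div hbase
        (fun s hs => ne_of_gt (hden s hs))
  have hmeas : AEStronglyMeasurable F (volume.restrict (Ioi 0)) :=
    hcont.aestronglyMeasurable measurableSet_Ioi
  rw [show Ioi (0:ℝ) = Ioc 0 1 ∪ Ioi 1 from (Ioc_union_Ioi_eq_Ioi zero_le_one).symm]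
  apply IntegrableOn.union
  · -- bounded on Ioc 0 1
    apply Integrable.mono' (g := fun _ : ℝ => (1:ℝ))
      (integrableOn_const measure_Ioc_lt_top.ne)
      (hmeas.mono_set (by rw [← Ioc_union_Ioi_eq_Ioi (zero_le_one (α := ℝ))]; exact subset_union_left))
    filter_upwards [ae_restrict_mem measurableSet_Ioc] with s hs
    obtain ⟨hs0, hs1⟩ := hs
    have ha : (0:ℝ) < s ^ (1 + γ) := Real.rpow_pos_of_pos hs0 _
    have hA : (1:ℝ) ≤ 1 + s ^ (1 + γ) := by linarith
    have hAp : (1:ℝ) ≤ (1 + s ^ (1 + γ)) ^ p := Real.one_le_rpow hA hp.le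
    have hf0 : 0 ≤ s ^ ((n:ℝ) - 2) / (1 + s ^ (1 + γ)) ^ p :=
      div_nonneg (Real.rpow_nonneg hs0.le _) (by linarith)
    have hf1 : s ^ ((n:ℝ) - 2) / (1 + s ^ (1 + γ)) ^ p ≤ 1 := by
      rw [div_le_one (by linarith)]
      calc s ^ ((n:ℝ) - 2) ≤ 1 := Real.rpow_le_one hs0.le hs1 (by linarith)
        _ ≤ _ := hAp
    have hg0 : 0 ≤ s ^ γ / (1 + s ^ (1 + γ)) :=
      div_nonneg (Real.rpow_nonneg hs0.le _) (by linarith)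
    have hg1 : s ^ γ / (1 + s ^ (1 + γ)) ≤ 1 := by
      rw [div_le_one (by linarith)]
      calc s ^ γ ≤ 1 := Real.rpow_le_one hs0.le hs1 hγ0.le
        _ ≤ _ := hA
    simp only [hF, Real.norm_eq_abs]
    rw [abs_le]
    constructor <;> linarith
  · -- tail: bounded by (p+2) * s ^ (-(2+γ))
    apply Integrable.mono' (g := fun s : ℝ => (p + 2) * s ^ (-(2 + γ)))
      ((integrableOn_Ioi_rpow_of_lt (by linarith) one_pos).const_mul _)
      (hmeas.mono_set (by rw [← Ioc_union_Ioi_eq_Ioi (zero_le_one (α := ℝ))]; exact subset_union_right))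
    filter_upwards [ae_restrict_mem measurableSet_Ioi] with s hs
    have hs1 : (1:ℝ) < s := mem_Ioi.mp hs
    have hs0 : (0:ℝ) < s := by linarith
    simp only [hF, Real.norm_eq_abs]
    set a : ℝ := s ^ (1 + γ) with hadef
    have ha : 0 < a := Real.rpow_pos_of_pos hs0 _
    have hA : (0:ℝ) < 1 + a := by linarith
    set t : ℝ := a / (1 + a) with htdef
    have ht0 : 0 < t := div_pos ha hA
    have ht1 : t ≤ 1 := (div_le_one hA).mpr (by linarith)
    -- exponent arithmetic
    have hq1 : (1 + γ) * (p - q) = (n:ℝ) - 2 := by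
      rw [hpdef, hqdef]; field_simp; ring
    have hq2 : (1 + γ) * (1 - q) = γ := by
      rw [hqdef]; field_simp; ring
    have hq3 : (1 + γ) * (-(q + 1)) = -(2 + γ) := by
      rw [hqdef]; field_simp; ring
    have hapq : a ^ (p - q) = s ^ ((n:ℝ) - 2) := by
      rw [hadef, ← Real.rpow_mul hs0.le, hq1]
    have ha1q : a ^ (1 - q) = s ^ γ := by
      rw [hadef, ← Real.rpow_mul hs0.le, hq2]
    have haq1 : a ^ (-(q + 1)) = s ^ (-(2 + γ)) := by
      rw [hadef, ← Real.rpow_mul hs0.le, hq3]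
    have hid1 : s ^ ((n:ℝ) - 2) / (1 + a) ^ p = a ^ (-q) * t ^ p := by
      rw [← hapq, htdef, Real.div_rpow ha.le hA.le, ← mul_div_assoc,
        ← Real.rpow_add ha]
      congr 2
      ring
    have hid2 : s ^ γ / (1 + a) = a ^ (-q) * t := by
      rw [← ha1q, htdef, ← mul_div_assoc]
      congr 1
      rw [← Real.rpow_add_one ha.ne']
      congr 1
      ring
    rw [hid1, hid2, ← mul_sub, abs_mul, abs_of_pos (Real.rpow_pos_of_pos ha _)]
    have h1t : 1 - t = 1 / (1 + a) := by rw [htdef]; field_simp; ring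
    calc a ^ (-q) * |t ^ p - t|
        ≤ a ^ (-q) * ((p + 2) * (1 - t)) :=
          mul_le_mul_of_nonneg_left (aux_tp_sub p t hp ht0 ht1)
            (Real.rpow_nonneg ha.le _)
      _ ≤ a ^ (-q) * ((p + 2) * a ^ (-1 : ℝ)) := by
          apply mul_le_mul_of_nonneg_left _ (Real.rpow_nonneg ha.le _)
          apply mul_le_mul_of_nonneg_left _ (by linarith : (0:ℝ) ≤ p + 2)
          rw [h1t, Real.rpow_neg_one, ← one_div]
          exact one_div_le_one_div_of_le ha (by linarith)
      _ = (p + 2) * s ^ (-(2 + γ)) := by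
          rw [show a ^ (-q) * ((p + 2) * a ^ (-1:ℝ)) =
            (p + 2) * (a ^ (-q) * a ^ (-1:ℝ)) by ring, ← Real.rpow_add ha,
            show -q + -1 = -(q + 1) by ring, haq1]
end

section
/- Let n ≥ 2 be an integer, p > 1, and r > 0. Then there exist constants c > 0 and ε0 ∈ (0,1), depending only on n, p, and r, such that for all ε ∈ (0, ε0): ∫_0^r s^{n−2}/(ε+s²)^{p−1} ds ≥ c·ε^{(n+1)/2−p} if p > (n+1)/2; ∫_0^r s^{n−2}/(ε+s²)^{p−1} ds ≥ c·|ln ε| if p = (n+1)/2; and ∫_0^r s^{n−2}/(ε+s²)^{p−1} ds ≥ c if 1 < p < (n+1)/2. -/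
open MeasureTheory Set intervalIntegral

set_option linter.deprecated false

lemma aux_cont {ε p : ℝ} (hε : 0 < ε) (m : ℕ) :
    Continuous fun s : ℝ => (s ^ m) / (ε + s ^ 2) ^ (p - 1) := by
  apply Continuous.div (continuous_pow m)
  · exact (continuous_const.add (continuous_pow 2)).rpow_const
      (fun x => Or.inl (ne_of_gt (add_pos_of_pos_of_nonneg hε (sq_nonneg x))))
  · intro x; positivity

lemma aux_lower {f g : ℝ → ℝ} {a b r : ℝ} (ha : 0 ≤ a) (hab : a ≤ b) (hbr : b ≤ r)
    (hf : Continuous f) (hf0 : ∀ x ∈ Icc (0:ℝ) r, 0 ≤ f x)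
    (hg : IntervalIntegrable g volume a b)
    (hgf : ∀ x ∈ Icc a b, g x ≤ f x) :
    ∫ s in a..b, g s ≤ ∫ s in (0:ℝ)..r, f s := by
  have h1 : ∫ s in a..b, g s ≤ ∫ s in a..b, f s :=
    integral_mono_on hab hg (hf.intervalIntegrable a b) hgf
  have e1 : (∫ s in (0:ℝ)..a, f s) + ∫ s in a..r, f s = ∫ s in (0:ℝ)..r, f s :=
    integral_add_adjacent_intervals (hf.intervalIntegrable 0 a) (hf.intervalIntegrable a r)
  have e2 : (∫ s in a..b, f s) + ∫ s in b..r, f s = ∫ s in a..r, f s :=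
    integral_add_adjacent_intervals (hf.intervalIntegrable a b) (hf.intervalIntegrable b r)
  have n1 : 0 ≤ ∫ s in (0:ℝ)..a, f s :=
    integral_nonneg (by linarith) (fun u hu => hf0 u ⟨hu.1, hu.2.trans (hab.trans hbr)⟩)
  have n2 : 0 ≤ ∫ s in b..r, f s :=
    integral_nonneg hbr (fun u hu => hf0 u ⟨ha.trans (hab.trans hu.1), hu.2⟩)
  linarith

/-- Three-regime lower bound for `∫_0^r s^{n-2}/(ε+s²)^{p-1} ds`. -/
theorem integral_pow_div_eps_add_sq_lower_bound
    {n : ℕ} (hn : 2 ≤ n) (p r : ℝ) (hp : 1 < p) (hr : 0 < r) :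
    ∃ c > (0:ℝ), ∃ ε0 ∈ Ioo (0:ℝ) 1, ∀ ε ∈ Ioo (0:ℝ) ε0,
      ((((n:ℝ) + 1) / 2 < p →
        c * ε ^ (((n:ℝ) + 1) / 2 - p) ≤
          ∫ s in (0:ℝ)..r, s ^ ((n:ℝ) - 2) / (ε + s ^ 2) ^ (p - 1)) ∧
      (p = ((n:ℝ) + 1) / 2 →
        c * |Real.log ε| ≤
          ∫ s in (0:ℝ)..r, s ^ ((n:ℝ) - 2) / (ε + s ^ 2) ^ (p - 1)) ∧
      (p < ((n:ℝ) + 1) / 2 →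
        c ≤ ∫ s in (0:ℝ)..r, s ^ ((n:ℝ) - 2) / (ε + s ^ 2) ^ (p - 1))) := by
  obtain ⟨m, rfl⟩ : ∃ m, n = m + 2 := ⟨n - 2, by omega⟩
  set n := m + 2 with hn2
  have hm1 : (0:ℝ) < (m:ℝ) + 1 := by positivity
  have hp1 : (0:ℝ) < p - 1 := by linarith
  set c1 : ℝ := 1 / (((m:ℝ) + 1) * (2:ℝ) ^ (p-1)) with hc1
  set c2 : ℝ := (2:ℝ) ^ (1-p) / 4 with hc2
  set c3 : ℝ := r ^ (m+1) / (((m:ℝ) + 1) * (1 + r^2) ^ (p-1)) with hc3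
  have hc1p : 0 < c1 := by rw [hc1]; positivity
  have hc2p : 0 < c2 := by rw [hc2]; positivity
  have hc3p : 0 < c3 := by rw [hc3]; positivity
  refine ⟨min c1 (min c2 c3), by positivity, min (min (r^2) (r^4)) (1/2),
    ⟨by positivity, by
      calc min (min (r^2) (r^4)) (1/2) ≤ 1/2 := min_le_right _ _
      _ < 1 := by norm_num⟩, ?_⟩
  intro ε hε
  obtain ⟨hε0, hεlt⟩ := hε
  have hεr2 : ε < r^2 := lt_of_lt_of_le hεlt ((min_le_left _ _).trans (min_le_left _ _))
  have hεr4 : ε < r^4 := lt_of_lt_of_le hεlt ((min_le_left _ _).trans (min_le_right _ _))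
  have hεhalf : ε < 1/2 := lt_of_lt_of_le hεlt (min_le_right _ _)
  have hε1 : ε < 1 := by linarith
  -- rewrite the integrand
  have key : (∫ s in (0:ℝ)..r, s ^ ((n:ℝ) - 2) / (ε + s ^ 2) ^ (p - 1))
      = ∫ s in (0:ℝ)..r, s ^ m / (ε + s ^ 2) ^ (p - 1) := by
    apply intervalIntegral.integral_congr
    intro s _
    have : ((n:ℝ) - 2) = (m : ℝ) := by push_cast [hn2]; ring
    simp only [this, Real.rpow_natCast]
  rw [key]
  set f : ℝ → ℝ := fun s => s ^ m / (ε + s ^ 2) ^ (p - 1) with hf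
  have hfc : Continuous f := aux_cont hε0 m
  have hf0 : ∀ x ∈ Icc (0:ℝ) r, 0 ≤ f x := fun x hx => by
    have h1 : 0 ≤ x := hx.1
    simp only [hf]; positivity
  have hsq : Real.sqrt ε ≤ r := by
    rw [show r = Real.sqrt (r^2) by rw [Real.sqrt_sq hr.le]]
    exact Real.sqrt_le_sqrt hεr2.le
  have hsqpos : 0 < Real.sqrt ε := Real.sqrt_pos.mpr hε0
  refine ⟨?_, ?_, ?_⟩
  · -- case p > (n+1)/2
    intro hcase
    have hK : (0:ℝ) < (2*ε) ^ (p-1) := by positivity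
    have hint : ∫ s in (0:ℝ)..Real.sqrt ε, s ^ m / (2*ε) ^ (p-1)
        = (Real.sqrt ε) ^ (m+1) / ((m:ℝ)+1) / (2*ε) ^ (p-1) := by
      rw [intervalIntegral.integral_div, integral_pow]
      norm_num
    have hle : ∫ s in (0:ℝ)..Real.sqrt ε, s ^ m / (2*ε) ^ (p-1) ≤ ∫ s in (0:ℝ)..r, f s := by
      apply aux_lower le_rfl hsqpos.le hsq hfc hf0
      · exact Continuous.intervalIntegrable (by continuity) _ _
      · intro x hx
        have hx0 : 0 ≤ x := hx.1
        have hx2 : x^2 ≤ ε := by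
          have := pow_le_pow_left₀ hx0 hx.2 2
          rwa [Real.sq_sqrt hε0.le] at this
        simp only [hf]
        gcongr
        linarith
    have hsqe : (Real.sqrt ε)^(m+1) = ε ^ (((m:ℝ)+1)/2) := by
      rw [Real.sqrt_eq_rpow, ← Real.rpow_natCast (ε ^ ((1:ℝ)/2)) (m+1), ← Real.rpow_mul hε0.le]
      congr 1; push_cast; ring
    have hεne : ε ≠ 0 := hε0.ne'
    have h2ne : ((2:ℝ) ^ (p-1)) ≠ 0 := by positivity
    have hεpne : (ε ^ (p-1)) ≠ 0 := by positivity
    calc min c1 (min c2 c3) * ε ^ (((n:ℝ)+1)/2 - p)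
        ≤ c1 * ε ^ (((n:ℝ)+1)/2 - p) :=
          mul_le_mul_of_nonneg_right (min_le_left _ _) (by positivity)
      _ = (Real.sqrt ε) ^ (m+1) / ((m:ℝ)+1) / (2*ε) ^ (p-1) := by
          rw [hc1, show ((n:ℝ)+1)/2 - p = ((m:ℝ)+1)/2 - (p-1) by push_cast [hn2]; ring,
            Real.rpow_sub hε0, Real.mul_rpow (by norm_num) hε0.le, hsqe]
          have alg : ∀ A M B E : ℝ, M ≠ 0 → B ≠ 0 → E ≠ 0 →
              1/(M*B) * (A/E) = A/M/(B*E) := by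
            intros A M B E h1 h2 h3; field_simp
          exact alg _ _ _ _ hm1.ne' h2ne hεpne
      _ ≤ _ := by rw [← hint]; exact hle
  · -- case p = (n+1)/2
    intro hcase
    have h2p : 2 * (p - 1) = (m:ℝ) + 1 := by rw [hcase]; push_cast [hn2]; ring
    have hP : (0:ℝ) < (2:ℝ) ^ (1-p) := by positivity
    have h2ne : ((2:ℝ) ^ (p-1)) ≠ 0 := by positivity
    have hgint : IntervalIntegrable (fun s => (2:ℝ)^(1-p) * s⁻¹) volume (Real.sqrt ε) r := by
      apply ContinuousOn.intervalIntegrable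
      apply ContinuousOn.mul continuousOn_const
      apply ContinuousOn.inv₀ (continuousOn_id)
      intro x hx
      rw [uIcc_of_le hsq] at hx
      exact (lt_of_lt_of_le hsqpos hx.1).ne'
    have hgf : ∀ x ∈ Icc (Real.sqrt ε) r, (2:ℝ)^(1-p) * x⁻¹ ≤ f x := by
      intro x hx
      have hx0 : 0 < x := lt_of_lt_of_le hsqpos hx.1
      have hεx : ε ≤ x^2 := by
        have := pow_le_pow_left₀ hsqpos.le hx.1 2
        rwa [Real.sq_sqrt hε0.le] at this
      have hd : (ε + x^2)^(p-1) ≤ 2^(p-1) * x^(m+1) := by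
        calc (ε + x^2)^(p-1) ≤ (2*x^2)^(p-1) :=
              Real.rpow_le_rpow (by positivity) (by linarith) hp1.le
          _ = 2^(p-1) * x^(m+1) := by
              rw [Real.mul_rpow (by norm_num) (by positivity)]
              congr 1
              rw [← Real.rpow_natCast x 2, ← Real.rpow_natCast x (m+1),
                ← Real.rpow_mul hx0.le]
              congr 1
              push_cast
              linarith [h2p]
      have alg : ∀ X B : ℝ, X ≠ 0 → B ≠ 0 → B⁻¹ * X⁻¹ = X^m / (B * X^(m+1)) := by
        intros X B h1 h2
        rw [pow_succ]
        field_simp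
      calc (2:ℝ)^(1-p) * x⁻¹ = x^m / (2^(p-1) * x^(m+1)) := by
            rw [show (1-p) = -(p-1) by ring, Real.rpow_neg (by norm_num)]
            exact alg x _ hx0.ne' h2ne
        _ ≤ f x := by
            simp only [hf]
            gcongr
    have hci : ∫ s in Real.sqrt ε..r, (2:ℝ)^(1-p) * s⁻¹
        = 2^(1-p) * (Real.log r - Real.log (Real.sqrt ε)) := by
      rw [intervalIntegral.integral_const_mul, integral_inv, ← Real.log_div hr.ne' (by positivity)]
      rw [uIcc_of_le hsq]
      rintro ⟨h1, -⟩
      exact absurd h1 (not_le.mpr hsqpos)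
    have hlogε : Real.log ε < 0 := Real.log_neg hε0 hε1
    have habs : |Real.log ε| = -Real.log ε := abs_of_neg hlogε
    have hlsq : Real.log (Real.sqrt ε) = Real.log ε / 2 := Real.log_sqrt hε0.le
    have h4 : Real.log ε ≤ 4 * Real.log r := by
      have h := Real.log_le_log hε0 hεr4.le
      rwa [Real.log_pow, Nat.cast_ofNat] at h
    calc min c1 (min c2 c3) * |Real.log ε| ≤ c2 * |Real.log ε| :=
          mul_le_mul_of_nonneg_right ((min_le_right _ _).trans (min_le_left _ _)) (abs_nonneg _)
      _ ≤ 2^(1-p) * (Real.log r - Real.log (Real.sqrt ε)) := by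
          rw [hc2, habs, hlsq]
          have hq : (0:ℝ) ≤ Real.log r - Real.log ε/2 - (-Real.log ε)/4 := by linarith
          nlinarith [mul_nonneg hP.le hq]
      _ = ∫ s in Real.sqrt ε..r, (2:ℝ)^(1-p) * s⁻¹ := hci.symm
      _ ≤ _ := aux_lower hsqpos.le hsq le_rfl hfc hf0 hgint hgf
  · -- case p < (n+1)/2
    intro hcase
    have hD : (0:ℝ) < (1 + r^2) ^ (p-1) := by positivity
    have hgf : ∀ x ∈ Icc (0:ℝ) r, x^m / (1 + r^2)^(p-1) ≤ f x := by
      intro x hx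
      have hx2 : x^2 ≤ r^2 := pow_le_pow_left₀ hx.1 hx.2 2
      simp only [hf]
      gcongr
      exact pow_nonneg hx.1 m
    have hint : ∫ s in (0:ℝ)..r, s ^ m / (1 + r^2) ^ (p-1)
        = r ^ (m+1) / ((m:ℝ)+1) / (1 + r^2) ^ (p-1) := by
      rw [intervalIntegral.integral_div, integral_pow]
      norm_num
    calc min c1 (min c2 c3) ≤ c3 := (min_le_right _ _).trans (min_le_right _ _)
      _ = ∫ s in (0:ℝ)..r, s ^ m / (1 + r^2) ^ (p-1) := by
          rw [hint, hc3, div_div]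
      _ ≤ _ := aux_lower le_rfl hr.le le_rfl hfc hf0
          (Continuous.intervalIntegrable ((continuous_pow m).div_const _) _ _) hgf
end

section
/- Let n ≥ 2 be an integer, γ > 0, p > 1, r > 0, ε > 0, and c0 > 1. Let a : ℝ^{n−1} → ℝ be a measurable function with 1/c0 ≤ a(x') ≤ c0 for all |x'| < r, and set ω_{n−2} := 2π^{(n−1)/2}/Γ((n−1)/2) (the surface measure of the unit sphere in ℝ^{n−1}). Then ω_{n−2}·c0^{−(n−1)/(1+γ)}·ε^{(n+γ)/(1+γ)−p}·∫_0^{r(c0^{−1}ε)^{−1/(1+γ)}} s^{n−2}/(1+s^{1+γ})^{p−1} ds ≤ ∫_{{|x'|<r}} (ε + a(x')|x'|^{1+γ})^{1−p} dx' ≤ ω_{n−2}·c0^{(n−1)/(1+γ)}·ε^{(n+γ)/(1+γ)−p}·∫_0^{r(c0·ε)^{−1/(1+γ)}} s^{n−2}/(1+s^{1+γ})^{p−1} ds. -/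
open MeasureTheory Set


lemma radial_subst {d : ℕ} (hd : 0 < d) (γ p r ε c : ℝ) (hγ : 0 < γ) (hr : 0 < r)
    (hε : 0 < ε) (hc : 0 < c) :
    (∫ y in (0:ℝ)..r, y ^ (d - 1) * (ε + c * y ^ (1+γ)) ^ (1-p))
      = ((c⁻¹*ε) ^ (1/(1+γ))) ^ d * ε ^ (1-p) *
        ∫ s in (0:ℝ)..(r * (c⁻¹*ε) ^ (-(1/(1+γ)))), s ^ (d - 1) * (1 + s ^ (1+γ)) ^ (1-p) := by
  set k : ℝ := (c⁻¹*ε) ^ (1/(1+γ)) with hk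
  have h1γ : (0:ℝ) < 1 + γ := by linarith
  have hkpos : 0 < k := Real.rpow_pos_of_pos (by positivity) _
  have hlim : r * (c⁻¹*ε) ^ (-(1/(1+γ))) = r / k := by
    rw [Real.rpow_neg (by positivity), hk]; exact (div_eq_mul_inv r _).symm
  have hck : c * k ^ (1+γ) = ε := by
    rw [hk, ← Real.rpow_mul (by positivity), one_div, inv_mul_cancel₀ h1γ.ne',
      Real.rpow_one, ← mul_assoc, mul_inv_cancel₀ hc.ne', one_mul]
  rw [hlim]
  have hsub := intervalIntegral.integral_comp_mul_left
    (f := fun y => y ^ (d - 1) * (ε + c * y ^ (1+γ)) ^ (1-p)) (a := 0) (b := r / k)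
    (c := k) hkpos.ne'
  rw [mul_zero, mul_div_cancel₀ _ hkpos.ne'] at hsub
  have hcong : (∫ s in (0:ℝ)..(r/k), (k*s) ^ (d - 1) * (ε + c * (k*s) ^ (1+γ)) ^ (1-p))
      = ∫ s in (0:ℝ)..(r/k), k ^ (d-1) * ε ^ (1-p) * (s ^ (d - 1) * (1 + s ^ (1+γ)) ^ (1-p)) := by
    apply intervalIntegral.integral_congr
    intro s hs
    have hs0 : 0 ≤ s := by
      have := hs.1
      rwa [min_eq_left (by positivity : (0:ℝ) ≤ r/k)] at this
    have h1 : (k*s) ^ (1+γ) = k ^ (1+γ) * s ^ (1+γ) := Real.mul_rpow hkpos.le hs0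
    have h2 : ε + c * (k*s) ^ (1+γ) = ε * (1 + s ^ (1+γ)) := by
      rw [h1, ← mul_assoc, hck]; ring
    simp only [h2, mul_pow, Real.mul_rpow hε.le (by positivity : (0:ℝ) ≤ 1 + s ^ (1+γ))]
    ring
  rw [hcong, intervalIntegral.integral_const_mul] at hsub
  -- hsub : ∫ s in 0..r/k, ... = k⁻¹ • ∫ y in 0..r, f y
  rw [smul_eq_mul] at hsub
  have : (∫ y in (0:ℝ)..r, y ^ (d - 1) * (ε + c * y ^ (1+γ)) ^ (1-p))
      = k * (k ^ (d-1) * ε ^ (1-p) * ∫ s in (0:ℝ)..(r/k), s ^ (d - 1) * (1 + s ^ (1+γ)) ^ (1-p)) := by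
    beta_reduce at hsub
    calc (∫ y in (0:ℝ)..r, y ^ (d - 1) * (ε + c * y ^ (1+γ)) ^ (1-p))
        = k * (k⁻¹ * ∫ y in (0:ℝ)..r, y ^ (d - 1) * (ε + c * y ^ (1+γ)) ^ (1-p)) := by
          field_simp
      _ = _ := by rw [← hsub]
  rw [this, ← mul_assoc, ← mul_assoc, ← pow_succ', Nat.sub_add_cancel hd]

lemma ball_polar {d : ℕ} (hd : 0 < d) (r : ℝ) (hr : 0 < r) (g : ℝ → ℝ) :
    (∫ x in Metric.ball (0 : EuclideanSpace ℝ (Fin d)) r, g ‖x‖)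
      = (2 * Real.pi ^ ((d:ℝ)/2) / Real.Gamma ((d:ℝ)/2)) * ∫ y in (0:ℝ)..r, y ^ (d-1) * g y := by
  haveI : Nonempty (Fin d) := ⟨⟨0, hd⟩⟩
  haveI : Nontrivial (EuclideanSpace ℝ (Fin d)) := by
    infer_instance
  set E := EuclideanSpace ℝ (Fin d)
  set f : ℝ → ℝ := (Iio r).indicator g with hf
  have h1 : (∫ x in Metric.ball (0 : E) r, g ‖x‖) = ∫ x : E, f ‖x‖ := by
    rw [← integral_indicator measurableSet_ball]
    congr 1
    ext x
    by_cases h : ‖x‖ < r <;>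
      simp [hf, Set.indicator_apply, Metric.mem_ball, dist_zero_right, h]
  have h2 := integral_fun_norm_addHaar (volume : Measure E) f
  have hdim : Module.finrank ℝ E = d := finrank_euclideanSpace_fin
  rw [hdim] at h2
  have h3 : (∫ y in Ioi (0:ℝ), y ^ (d-1) • f y) = ∫ y in (0:ℝ)..r, y ^ (d-1) * g y := by
    have : ∀ y : ℝ, y ^ (d-1) • f y = (Iio r).indicator (fun y => y ^ (d-1) * g y) y := by
      intro y
      simp only [hf, indicator_apply, smul_eq_mul]
      by_cases h : y ∈ Iio r <;> simp [h]
    simp_rw [this]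
    rw [setIntegral_indicator measurableSet_Iio, Set.Ioi_inter_Iio,
      ← integral_Ioc_eq_integral_Ioo, ← intervalIntegral.integral_of_le hr.le]
  rw [h1, h2, h3]
  rw [nsmul_eq_mul, smul_eq_mul, measureReal_def, EuclideanSpace.volume_ball, ← mul_assoc]
  congr 1
  have hΓ1 : (0:ℝ) < Real.Gamma ((d:ℝ)/2 + 1) := Real.Gamma_pos_of_pos (by positivity)
  have hΓ : (0:ℝ) < Real.Gamma ((d:ℝ)/2) := Real.Gamma_pos_of_pos (by positivity)
  rw [ENNReal.ofReal_one, one_pow, one_mul, ENNReal.toReal_ofReal (by positivity)]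
  have hcard : (Fintype.card (Fin d) : ℝ) = (d:ℝ) := by simp
  have hsq : Real.sqrt Real.pi ^ (Fintype.card (Fin d)) = Real.pi ^ ((d:ℝ)/2) := by
    rw [Fintype.card_fin, Real.sqrt_eq_rpow, ← Real.rpow_natCast (Real.pi ^ ((1:ℝ)/2)) d,
      ← Real.rpow_mul Real.pi_nonneg]
    rw [show (1:ℝ)/2 * (d:ℝ) = (d:ℝ)/2 by ring]
  rw [hsq, Fintype.card_fin, Real.Gamma_add_one (by positivity)]
  field_simp
lemma ball_int {d : ℕ} (hd : 0 < d) (γ p r ε c : ℝ) (hγ : 0 < γ) (hp : 1 < p)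
    (hr : 0 < r) (hε : 0 < ε) (hc : 0 < c) :
    (∫ x in Metric.ball (0 : EuclideanSpace ℝ (Fin d)) r, (ε + c * ‖x‖ ^ (1+γ)) ^ (1-p))
      = (2 * Real.pi ^ ((d:ℝ)/2) / Real.Gamma ((d:ℝ)/2)) * c ^ (-((d:ℝ)/(1+γ))) *
        ε ^ (((d:ℝ)+1+γ)/(1+γ) - p) *
        ∫ s in (0:ℝ)..(r * (c⁻¹*ε) ^ (-(1/(1+γ)))), s ^ ((d:ℝ)-1) / (1 + s ^ (1+γ)) ^ (p-1) := by
  have h1γ : (0:ℝ) < 1 + γ := by linarith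
  have hpolar := ball_polar hd r hr (fun y => (ε + c * y ^ (1+γ)) ^ (1-p))
  rw [hpolar, radial_subst hd γ p r ε c hγ hr hε hc]
  have hL : 0 < r * (c⁻¹*ε) ^ (-(1/(1+γ))) := by positivity
  have hcong : (∫ s in (0:ℝ)..(r * (c⁻¹*ε) ^ (-(1/(1+γ)))), s ^ (d - 1) * (1 + s ^ (1+γ)) ^ (1-p))
      = ∫ s in (0:ℝ)..(r * (c⁻¹*ε) ^ (-(1/(1+γ)))), s ^ ((d:ℝ)-1) / (1 + s ^ (1+γ)) ^ (p-1) := by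
    apply intervalIntegral.integral_congr
    intro s hs
    have hs0 : 0 ≤ s := by
      have := hs.1; rwa [min_eq_left hL.le] at this
    have hb : (0:ℝ) ≤ 1 + s ^ (1+γ) := by positivity
    beta_reduce
    rw [show (1:ℝ)-p = -(p-1) by ring, Real.rpow_neg hb, ← Real.rpow_natCast s (d-1),
      Nat.cast_sub hd, Nat.cast_one, div_eq_mul_inv]
  rw [hcong]
  have hconst : (((c⁻¹*ε) ^ (1/(1+γ))) ^ d * ε ^ (1-p))
      = c ^ (-((d:ℝ)/(1+γ))) * ε ^ (((d:ℝ)+1+γ)/(1+γ) - p) := by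
    rw [← Real.rpow_natCast ((c⁻¹*ε) ^ (1/(1+γ))) d, ← Real.rpow_mul (by positivity),
      Real.mul_rpow (by positivity) hε.le, Real.inv_rpow hc.le, ← Real.rpow_neg hc.le,
      mul_assoc, ← Real.rpow_add hε]
    congr 2
    · congr 1; field_simp
    · field_simp; ring
  rw [hconst]; ring


/-- The key sandwich (equations (4.2)-(4.3)) in the proof of Lemma 4.1. -/
theorem polar_sandwich_C1gamma
    {n : ℕ} (hn : 2 ≤ n) (γ p r ε c0 : ℝ) (hγ : 0 < γ) (hp : 1 < p)
    (hr : 0 < r) (hε : 0 < ε) (hc0 : 1 < c0)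
    (a : EuclideanSpace ℝ (Fin (n-1)) → ℝ) (ha_meas : Measurable a)
    (ha : ∀ x' : EuclideanSpace ℝ (Fin (n-1)), ‖x'‖ < r → a x' ∈ Icc (c0⁻¹) c0) :
    let ω : ℝ := 2 * Real.pi ^ (((n:ℝ) - 1) / 2) / Real.Gamma (((n:ℝ) - 1) / 2)
    ω * c0 ^ (-(((n:ℝ) - 1) / (1 + γ))) * ε ^ (((n:ℝ) + γ) / (1 + γ) - p) *
        (∫ s in (0:ℝ)..(r * (c0⁻¹ * ε) ^ (-(1 / (1 + γ)))),
          s ^ ((n:ℝ) - 2) / (1 + s ^ (1 + γ)) ^ (p - 1)) ≤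
      (∫ x' in {x' : EuclideanSpace ℝ (Fin (n-1)) | ‖x'‖ < r},
        (ε + a x' * ‖x'‖ ^ (1 + γ)) ^ (1 - p)) ∧
    (∫ x' in {x' : EuclideanSpace ℝ (Fin (n-1)) | ‖x'‖ < r},
        (ε + a x' * ‖x'‖ ^ (1 + γ)) ^ (1 - p)) ≤
      ω * c0 ^ (((n:ℝ) - 1) / (1 + γ)) * ε ^ (((n:ℝ) + γ) / (1 + γ) - p) *
        ∫ s in (0:ℝ)..(r * (c0 * ε) ^ (-(1 / (1 + γ)))),
          s ^ ((n:ℝ) - 2) / (1 + s ^ (1 + γ)) ^ (p - 1) := by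
  intro ω
  have hd : 0 < n - 1 := by omega
  have hc0p : 0 < c0 := by linarith
  have h1γ : (0:ℝ) < 1 + γ := by linarith
  have hcast : ((n - 1 : ℕ):ℝ) = (n:ℝ) - 1 := by
    rw [Nat.cast_sub (by omega : 1 ≤ n), Nat.cast_one]
  have hset : {x' : EuclideanSpace ℝ (Fin (n-1)) | ‖x'‖ < r} = Metric.ball 0 r := by
    ext x; simp [Metric.mem_ball, dist_zero_right]
  -- the two comparison integrals
  have Elow := ball_int hd γ p r ε c0 hγ hp hr hε hc0p
  have Ehigh := ball_int hd γ p r ε c0⁻¹ hγ hp hr hε (by positivity)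
  rw [hcast, show (n:ℝ)-1+1+γ = (n:ℝ)+γ by ring, show (n:ℝ)-1-1 = (n:ℝ)-2 by ring] at Elow Ehigh
  rw [inv_inv, Real.inv_rpow hc0p.le, ← Real.rpow_neg hc0p.le, neg_neg] at Ehigh
  -- integrability
  have hball : volume (Metric.ball (0 : EuclideanSpace ℝ (Fin (n-1))) r) ≠ ⊤ :=
    MeasureTheory.measure_ball_lt_top.ne
  have hnorm_meas : Measurable fun x : EuclideanSpace ℝ (Fin (n-1)) => ‖x‖ ^ (1+γ) := by
    fun_prop
  have key_bound : ∀ (b : EuclideanSpace ℝ (Fin (n-1)) → ℝ), Measurable b →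
      (∀ x ∈ Metric.ball (0 : EuclideanSpace ℝ (Fin (n-1))) r, 0 ≤ b x) →
      IntegrableOn (fun x => (ε + b x * ‖x‖ ^ (1+γ)) ^ (1-p))
        (Metric.ball (0 : EuclideanSpace ℝ (Fin (n-1))) r) volume := by
    intro b hb hb0
    apply Measure.integrableOn_of_bounded hball
    · have : Measurable fun x => (ε + b x * ‖x‖ ^ (1+γ)) ^ (1-p) := by fun_prop
      exact this.aestronglyMeasurable
    · rw [MeasureTheory.ae_restrict_iff' measurableSet_ball]
      refine Filter.Eventually.of_forall fun x hx => ?_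
      have ht : 0 ≤ b x * ‖x‖ ^ (1+γ) := mul_nonneg (hb0 x hx) (by positivity)
      have hpos : 0 < ε + b x * ‖x‖ ^ (1+γ) := by linarith
      rw [Real.norm_eq_abs, abs_of_nonneg (Real.rpow_nonneg hpos.le _)]
      exact Real.rpow_le_rpow_of_nonpos hε (by linarith) (by linarith)
  have haxpos : ∀ x ∈ Metric.ball (0 : EuclideanSpace ℝ (Fin (n-1))) r, 0 ≤ a x := by
    intro x hx
    have h1 := (ha x (mem_ball_zero_iff.1 hx)).1
    have h2 : (0:ℝ) < c0⁻¹ := by positivity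
    linarith
  have Imid := key_bound a ha_meas haxpos
  have Ilow := key_bound (fun _ => c0) measurable_const (fun x _ => hc0p.le)
  have Ihigh := key_bound (fun _ => c0⁻¹) measurable_const (fun x _ => by positivity)
  -- pointwise comparison
  have comp_low : ∀ x ∈ Metric.ball (0 : EuclideanSpace ℝ (Fin (n-1))) r,
      (ε + c0 * ‖x‖ ^ (1+γ)) ^ (1-p) ≤ (ε + a x * ‖x‖ ^ (1+γ)) ^ (1-p) := by
    intro x hx
    have haI := ha x (mem_ball_zero_iff.1 hx)
    have ht : (0:ℝ) ≤ ‖x‖ ^ (1+γ) := by positivity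
    have h0 : 0 < ε + a x * ‖x‖ ^ (1+γ) := by nlinarith [haI.1, haI.2, inv_pos.2 hc0p]
    exact Real.rpow_le_rpow_of_nonpos h0
      (by nlinarith [haI.2]) (by linarith)
  have comp_high : ∀ x ∈ Metric.ball (0 : EuclideanSpace ℝ (Fin (n-1))) r,
      (ε + a x * ‖x‖ ^ (1+γ)) ^ (1-p) ≤ (ε + c0⁻¹ * ‖x‖ ^ (1+γ)) ^ (1-p) := by
    intro x hx
    have haI := ha x (mem_ball_zero_iff.1 hx)
    have ht : (0:ℝ) ≤ ‖x‖ ^ (1+γ) := by positivity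
    have h0 : 0 < ε + c0⁻¹ * ‖x‖ ^ (1+γ) := by
      have : (0:ℝ) < c0⁻¹ := by positivity
      nlinarith
    exact Real.rpow_le_rpow_of_nonpos h0 (by nlinarith [haI.1]) (by linarith)
  have mono_low := setIntegral_mono_on Ilow Imid measurableSet_ball comp_low
  have mono_high := setIntegral_mono_on Imid Ihigh measurableSet_ball comp_high
  constructor
  · show (2 * Real.pi ^ (((n:ℝ) - 1) / 2) / Real.Gamma (((n:ℝ) - 1) / 2))
        * c0 ^ (-(((n:ℝ) - 1) / (1 + γ))) * ε ^ (((n:ℝ) + γ) / (1 + γ) - p) *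
        (∫ s in (0:ℝ)..(r * (c0⁻¹ * ε) ^ (-(1 / (1 + γ)))),
          s ^ ((n:ℝ) - 2) / (1 + s ^ (1 + γ)) ^ (p - 1)) ≤ _
    rw [hset, ← Elow]
    exact mono_low
  · show _ ≤ (2 * Real.pi ^ (((n:ℝ) - 1) / 2) / Real.Gamma (((n:ℝ) - 1) / 2))
        * c0 ^ ((((n:ℝ) - 1) / (1 + γ))) * ε ^ (((n:ℝ) + γ) / (1 + γ) - p) *
        ∫ s in (0:ℝ)..(r * (c0 * ε) ^ (-(1 / (1 + γ)))),
          s ^ ((n:ℝ) - 2) / (1 + s ^ (1 + γ)) ^ (p - 1)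
    rw [hset, ← Ehigh]
    exact mono_high
end

section
/- Let n ≥ 2 be an integer, γ ∈ (0,1), p > (n+γ)/(1+γ), r > 0, and a0 > 0. Define K := ((1+γ)/(2π^{(n−1)/2})) · Γ((n−1)/2)·Γ(p−1) / (Γ((n−1)/(1+γ))·Γ(p−(n+γ)/(1+γ))). Then lim_{ε→0⁺} ε^{(p−1)−(n−1)/(1+γ)} · ∫_{{|x'|<r}} (ε + a0·|x'|^{1+γ})^{1−p} dx' = a0^{(1−n)/(1+γ)}/K. -/
open MeasureTheory Filter Set

section AuxiliaryLemmas
open Real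

private lemma real_beta {a b : ℝ} (ha : 0 < a) (hb : 0 < b) :
    ∫ x in Ioo (0:ℝ) 1, x ^ (a-1) * (1-x) ^ (b-1) = Gamma a * Gamma b / Gamma (a+b) := by
  have hab : 0 < Gamma (a+b) := Gamma_pos_of_pos (by linarith)
  rw [eq_div_iff hab.ne']
  have hc := Complex.Gamma_mul_Gamma_eq_betaIntegral (s := (a:ℂ)) (t := (b:ℂ))
    (by simpa using ha) (by simpa using hb)
  have hbeta : Complex.betaIntegral a b
      = ((∫ x in Ioo (0:ℝ) 1, x ^ (a-1) * (1-x) ^ (b-1) : ℝ) : ℂ) := by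
    rw [Complex.betaIntegral, intervalIntegral.integral_of_le zero_le_one,
      integral_Ioc_eq_integral_Ioo]
    rw [setIntegral_congr_fun measurableSet_Ioo
      (g := fun x : ℝ => ((x ^ (a-1) * (1-x) ^ (b-1) : ℝ) : ℂ)) (fun x hx => by
        dsimp only
        rw [Complex.ofReal_mul, Complex.ofReal_cpow hx.1.le, Complex.ofReal_cpow (by linarith [hx.2] : (0:ℝ) ≤ 1 - x)]
        push_cast; ring)]
    exact integral_ofReal
  rw [hbeta, Complex.Gamma_ofReal, Complex.Gamma_ofReal, ← Complex.ofReal_add,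
    Complex.Gamma_ofReal] at hc
  have : Gamma a * Gamma b = Gamma (a+b) * ∫ x in Ioo (0:ℝ) 1, x ^ (a-1) * (1-x) ^ (b-1) := by
    exact_mod_cast hc
  rw [this]; ring

private lemma beta_Ioi {a b : ℝ} (ha : 0 < a) (hb : 0 < b) :
    ∫ u in Ioi (0:ℝ), u ^ (a-1) * (1+u) ^ (-(a+b)) = Gamma a * Gamma b / Gamma (a+b) := by
  have himg : (fun x : ℝ => x / (1 - x)) '' Ioo 0 1 = Ioi 0 := by
    ext u; simp only [mem_image, mem_Ioo, mem_Ioi]; constructor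
    · rintro ⟨x, ⟨hx0, hx1⟩, rfl⟩; exact div_pos hx0 (by linarith)
    · intro hu
      exact ⟨u/(1+u), ⟨div_pos hu (by linarith), by
        rw [div_lt_one (by linarith)]; linarith⟩, by
        have h1 : (1:ℝ) + u ≠ 0 := by linarith
        have h2 : (1:ℝ) - u / (1 + u) = (1+u)⁻¹ := by field_simp; ring
        rw [h2]; field_simp⟩
  have hderiv : ∀ x ∈ Ioo (0:ℝ) 1,
      HasDerivWithinAt (fun x : ℝ => x / (1-x)) (((1-x)^2)⁻¹) (Ioo 0 1) x := by
    intro x hx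
    have h1 : (1:ℝ) - x ≠ 0 := by have := hx.2; intro h; rw [sub_eq_zero] at h; linarith
    have h := (hasDerivAt_id x).div ((hasDerivAt_const x (1:ℝ)).sub (hasDerivAt_id x)) h1
    exact (h.congr_deriv (by simp only [Pi.sub_apply, id]; field_simp; ring)).hasDerivWithinAt
  have hinj : InjOn (fun x : ℝ => x / (1-x)) (Ioo 0 1) := by
    intro x hx y hy hxy
    have h1 : (1:ℝ) - x ≠ 0 := by have := hx.2; intro h; rw [sub_eq_zero] at h; linarith
    have h2 : (1:ℝ) - y ≠ 0 := by have := hy.2; intro h; rw [sub_eq_zero] at h; linarith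
    field_simp at hxy; linarith
  have key := integral_image_eq_integral_abs_deriv_smul measurableSet_Ioo hderiv hinj
      (fun u => u ^ (a-1) * (1+u) ^ (-(a+b)))
  rw [himg] at key
  rw [key, ← real_beta ha hb]
  refine setIntegral_congr_fun measurableSet_Ioo (fun x hx => ?_)
  have hx0 := hx.1
  have hy : (0:ℝ) < 1 - x := by linarith [hx.2]
  have e1 : 1 + x/(1-x) = (1-x)⁻¹ := by field_simp; ring
  have e2 : ((1-x)^2)⁻¹ = (1-x) ^ (-2 : ℝ) := by
    rw [Real.rpow_neg hy.le, Real.rpow_two]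
  rw [smul_eq_mul, e1, Real.div_rpow hx0.le hy.le, Real.inv_rpow hy.le,
    ← Real.rpow_neg hy.le, neg_neg, abs_of_pos (by positivity), e2,
    div_eq_mul_inv, ← Real.rpow_neg hy.le]
  rw [show (1-x) ^ (-2:ℝ) * (x ^ (a-1) * (1-x) ^ (-(a-1)) * (1-x) ^ (a+b))
      = x ^ (a-1) * ((1-x) ^ (-2:ℝ) * (1-x) ^ (-(a-1)) * (1-x) ^ (a+b)) by ring,
    ← Real.rpow_add hy, ← Real.rpow_add hy, show (-2:ℝ) + -(a-1) + (a+b) = b-1 by ring]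

private lemma radial_meas {γ p : ℝ} (k : ℕ) :
    Measurable (fun t : ℝ => t^k * (1 + t^(1+γ))^(1-p)) := by
  fun_prop

private lemma radial_val {γ p : ℝ} (k : ℕ) (hγ : 0 < γ)
    (hb : 0 < p - 1 - ((k:ℝ)+1)/(1+γ)) :
    ∫ t in Ioi (0:ℝ), t^k * (1 + t^(1+γ))^(1-p)
      = Gamma (((k:ℝ)+1)/(1+γ)) * Gamma (p - 1 - ((k:ℝ)+1)/(1+γ)) / ((1+γ) * Gamma (p-1)) := by
  set q := 1 + γ with hq
  have hq0 : 0 < q := by linarith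
  set a := ((k:ℝ)+1)/q with ha'
  set b := p - 1 - a with hb'
  have ha : 0 < a := by positivity
  have hab : a + b = p - 1 := by rw [hb']; ring
  have key := integral_comp_rpow_Ioi (fun u => u ^ (a-1) * (1+u) ^ (-(a+b))) hq0.ne'
  have congr1 : ∫ x in Ioi (0:ℝ), (|q| * x ^ (q - 1)) • ((x^q) ^ (a-1) * (1+x^q) ^ (-(a+b)))
      = ∫ x in Ioi (0:ℝ), q * (x^k * (1 + x^q)^(1-p)) := by
    refine setIntegral_congr_fun measurableSet_Ioi (fun x hx => ?_)
    have hx0 : (0:ℝ) < x := hx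
    have e3 : x ^ (q-1) * x ^ (q*(a-1)) = x ^ k := by
      rw [← Real.rpow_add hx0, show q-1+q*(a-1) = (k:ℝ) by
        rw [ha']; field_simp; ring, Real.rpow_natCast]
    rw [smul_eq_mul, abs_of_pos hq0, ← Real.rpow_mul hx0.le,
      show -(a+b) = 1-p by rw [hab]; ring, ← e3]
    ring
  rw [congr1, integral_const_mul] at key
  rw [beta_Ioi ha hb, hab] at key
  have hΓ : 0 < Gamma (p-1) := Gamma_pos_of_pos (by rw [← hab]; positivity)
  field_simp at key ⊢
  linarith [key]

private lemma radial_integrable {γ p : ℝ} (k : ℕ) (hγ : 0 < γ)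
    (hb : 0 < p - 1 - ((k:ℝ)+1)/(1+γ)) :
    IntegrableOn (fun t : ℝ => t^k * (1 + t^(1+γ))^(1-p)) (Ioi 0) := by
  have hq0 : (0:ℝ) < 1 + γ := by linarith
  have hp1 : 1 - p ≤ 0 := by
    have : 0 < ((k:ℝ)+1)/(1+γ) := by positivity
    linarith
  rw [show (Ioi (0:ℝ)) = Ioc 0 1 ∪ Ioi 1 from (Ioc_union_Ioi_eq_Ioi zero_le_one).symm]
  refine IntegrableOn.union ?_ ?_
  · refine Measure.integrableOn_of_bounded (s := Ioc (0:ℝ) 1)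
      (by simp [measure_Ioc_lt_top.ne]) (radial_meas k).aestronglyMeasurable (M := 1) ?_
    filter_upwards [ae_restrict_mem measurableSet_Ioc] with t ht
    have ht0 : 0 < t := ht.1
    have h1 : t^k ≤ 1 := pow_le_one₀ ht0.le ht.2
    have h2 : (1 + t^(1+γ)) ^ (1-p) ≤ 1 :=
      Real.rpow_le_one_of_one_le_of_nonpos
        (by nlinarith [Real.rpow_nonneg ht0.le (1+γ)]) hp1
    have h3 : 0 ≤ (1 + t^(1+γ)) ^ (1-p) := Real.rpow_nonneg
        (by nlinarith [Real.rpow_nonneg ht0.le (1+γ)]) _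
    rw [Real.norm_eq_abs, abs_of_nonneg (by positivity)]
    nlinarith [pow_nonneg ht0.le k]
  · have he : (k:ℝ) + (1+γ)*(1-p) < -1 := by
      have := (div_lt_iff₀ hq0).mp (by linarith : ((k:ℝ)+1)/(1+γ) < p - 1)
      nlinarith
    refine Integrable.mono' (g := fun t : ℝ => t ^ ((k:ℝ) + (1+γ)*(1-p)))
      (integrableOn_Ioi_rpow_of_lt he zero_lt_one)
      (radial_meas k).aestronglyMeasurable ?_
    filter_upwards [ae_restrict_mem measurableSet_Ioi] with t ht
    have ht1 : (1:ℝ) < t := ht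
    have ht0 : (0:ℝ) < t := by linarith
    have htp : 0 < t ^ (1+γ) := Real.rpow_pos_of_pos ht0 _
    have h2 : (1 + t^(1+γ)) ^ (1-p) ≤ (t^(1+γ)) ^ (1-p) :=
      Real.rpow_le_rpow_of_nonpos htp (by linarith) hp1
    have h3 : 0 ≤ (1 + t^(1+γ)) ^ (1-p) := Real.rpow_nonneg (by positivity) _
    rw [Real.norm_eq_abs, abs_of_nonneg (by positivity)]
    calc t^k * (1 + t^(1+γ))^(1-p) ≤ t^k * (t^(1+γ))^(1-p) := by
          exact mul_le_mul_of_nonneg_left h2 (by positivity)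
      _ = t ^ ((k:ℝ) + (1+γ)*(1-p)) := by
          rw [Real.rpow_add ht0 (k:ℝ) ((1+γ)*(1-p)), Real.rpow_natCast, Real.rpow_mul ht0.le]

end AuxiliaryLemmas

/-- The constant `K` from the paper (supercritical case `p > (n+γ)/(1+γ)`). -/
noncomputable def Kconst (n : ℕ) (γ p : ℝ) : ℝ :=
  ((1 + γ) / (2 * Real.pi ^ (((n:ℝ) - 1) / 2))) *
    (Real.Gamma (((n:ℝ) - 1) / 2) * Real.Gamma (p - 1)) /
    (Real.Gamma (((n:ℝ) - 1) / (1 + γ)) * Real.Gamma (p - ((n:ℝ) + γ) / (1 + γ)))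

/-- Remark 4.5, supercritical case with constant coefficient `a₀`. -/
theorem tendsto_scaled_integral_constant_coeff
    {n : ℕ} (hn : 2 ≤ n) (γ p r a0 : ℝ) (hγ : γ ∈ Ioo (0:ℝ) 1)
    (hp : ((n:ℝ) + γ) / (1 + γ) < p) (hr : 0 < r) (ha0 : 0 < a0) :
    Tendsto (fun ε : ℝ =>
      ε ^ ((p - 1) - ((n:ℝ) - 1) / (1 + γ)) *
        ∫ x' in {x' : EuclideanSpace ℝ (Fin (n-1)) | ‖x'‖ < r},
          (ε + a0 * ‖x'‖ ^ (1 + γ)) ^ (1 - p))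
      (nhdsWithin 0 (Ioi 0))
      (nhds (a0 ^ ((1 - (n:ℝ)) / (1 + γ)) / Kconst n γ p)) := by
  obtain ⟨hγ0, hγ1⟩ := hγ
  have hq0 : (0:ℝ) < 1 + γ := by linarith
  have hn2 : (2:ℝ) ≤ (n:ℝ) := by exact_mod_cast hn
  set m : ℕ := n - 1 with hm
  have hm1 : 1 ≤ m := by omega
  have hmcast : (m:ℝ) = (n:ℝ) - 1 := by
    have h : n = m + 1 := by omega
    rw [h]; push_cast; ring
  set k : ℕ := m - 1 with hk
  have hkcast : (k:ℝ) + 1 = (m:ℝ) := by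
    have h : m = k + 1 := by omega
    rw [h]; push_cast; ring
  set A : ℝ := ((n:ℝ)-1)/(1+γ) with hA
  have hApos : 0 < A := by rw [hA]; apply div_pos <;> linarith
  have hnp : ((n:ℝ)+γ)/(1+γ) = 1 + A := by rw [hA]; field_simp; ring
  have hB : 0 < p - 1 - A := by rw [hnp] at hp; linarith
  have hbk : 0 < p - 1 - ((k:ℝ)+1)/(1+γ) := by rw [hkcast, hmcast]; exact hB
  have hp1 : p - 1 > 0 := by linarith
  haveI : Nonempty (Fin m) := Fin.pos_iff_nonempty.mp (by omega)
  set E := EuclideanSpace ℝ (Fin m) with hE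
  haveI : Nontrivial E := by
    rw [hE]; infer_instance
  set c : ℝ := (volume (Metric.ball (0:E) 1)).toReal with hc
  set h : ℝ → ℝ := fun t => t^k * (1 + t^(1+γ))^(1-p) with hh
  set R : ℝ → ℝ := fun ε => r * (a0/ε) ^ ((1:ℝ)/(1+γ)) with hR
  set C : ℝ := (m:ℝ) * c * a0 ^ (-A) with hC
  have main_eq : ∀ ε : ℝ, ε ∈ Ioi (0:ℝ) →
      ε ^ ((p - 1) - ((n:ℝ) - 1) / (1 + γ)) *
        ∫ x' in {x' : E | ‖x'‖ < r}, (ε + a0 * ‖x'‖ ^ (1 + γ)) ^ (1 - p)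
      = C * ∫ t in (0:ℝ)..(R ε), h t := by
    intro ε hε
    have hε0 : (0:ℝ) < ε := hε
    set lam : ℝ := (ε/a0) ^ ((1:ℝ)/(1+γ)) with hlam
    have hlam0 : 0 < lam := Real.rpow_pos_of_pos (by positivity) _
    set f : ℝ → ℝ := fun s => if s < r then (ε + a0 * s^(1+γ))^(1-p) else 0 with hf
    have step1 : (∫ x' in {x' : E | ‖x'‖ < r}, (ε + a0 * ‖x'‖ ^ (1 + γ)) ^ (1 - p))
        = ∫ x : E, f ‖x‖ := by
      rw [← integral_indicator ((isOpen_lt continuous_norm continuous_const).measurableSet)]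
      congr 1
    have step2 : (∫ x : E, f ‖x‖)
        = (m:ℝ) * (c * ∫ y in Ioi (0:ℝ), y ^ k * f y) := by
      have h2 := MeasureTheory.integral_fun_norm_addHaar (volume : Measure E) f
      have hfr : Module.finrank ℝ E = m := finrank_euclideanSpace_fin
      simp only [hfr, nsmul_eq_mul, smul_eq_mul, ← hk] at h2
      rw [h2, hc, measureReal_def]
    have step3 : (∫ y in Ioi (0:ℝ), y ^ k * f y)
        = ∫ y in (0:ℝ)..r, y ^ k * (ε + a0 * y^(1+γ))^(1-p) := by
      have e : ∀ y : ℝ, y ^ k * f y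
          = (Iio r).indicator (fun y => y ^ k * (ε + a0 * y^(1+γ))^(1-p)) y := by
        intro y
        simp only [hf, indicator_apply, mem_Iio]
        split_ifs <;> simp
      simp_rw [e]
      rw [setIntegral_indicator measurableSet_Iio, Ioi_inter_Iio,
        intervalIntegral.integral_of_le hr.le, integral_Ioc_eq_integral_Ioo]
    have hR0 : 0 < R ε := by
      rw [hR]; positivity
    have hlamR : lam * R ε = r := by
      have e1 : (ε/a0) * (a0/ε) = 1 := by field_simp
      have : lam * (r * (a0/ε) ^ ((1:ℝ)/(1+γ)))
          = r * ((ε/a0) ^ ((1:ℝ)/(1+γ)) * (a0/ε) ^ ((1:ℝ)/(1+γ))) := by rw [hlam]; ring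
      rw [hR, this, ← Real.mul_rpow (by positivity) (by positivity), e1, Real.one_rpow,
        mul_one]
    have hlampow : lam ^ (1+γ) = ε / a0 := by
      rw [hlam, ← Real.rpow_mul (by positivity),
        show (1:ℝ)/(1+γ) * (1+γ) = 1 by field_simp, Real.rpow_one]
    have step4 : (∫ y in (0:ℝ)..r, y ^ k * (ε + a0 * y^(1+γ))^(1-p))
        = lam * (lam ^ k * ε ^ (1-p)) * ∫ t in (0:ℝ)..(R ε), h t := by
      have hsub := intervalIntegral.integral_comp_mul_left
        (f := fun y => y ^ k * (ε + a0 * y^(1+γ))^(1-p)) (a := 0) (b := R ε)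
        (c := lam) hlam0.ne'
      rw [mul_zero, hlamR, smul_eq_mul] at hsub
      have hcongr : (∫ t in (0:ℝ)..(R ε), (lam*t) ^ k * (ε + a0 * (lam*t)^(1+γ))^(1-p))
          = ∫ t in (0:ℝ)..(R ε), lam ^ k * ε ^ (1-p) * h t := by
        refine intervalIntegral.integral_congr (fun t ht => ?_)
        rw [uIcc_of_le hR0.le] at ht
        have ht0 : 0 ≤ t := ht.1
        have e2 : ε + a0 * (lam*t)^(1+γ) = ε * (1 + t^(1+γ)) := by
          rw [Real.mul_rpow hlam0.le ht0, hlampow]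
          field_simp
        rw [e2, Real.mul_rpow hε0.le (by positivity), mul_pow, hh]
        ring
      rw [hcongr, intervalIntegral.integral_const_mul] at hsub
      have e5 : (∫ y in (0:ℝ)..r, y ^ k * (ε + a0 * y^(1+γ))^(1-p))
          = lam * (lam⁻¹ * ∫ y in (0:ℝ)..r, y ^ k * (ε + a0 * y^(1+γ))^(1-p)) := by
        field_simp
      rw [e5, ← hsub]
      ring
    have hscalar : ε ^ ((p - 1) - ((n:ℝ) - 1) / (1 + γ)) * (lam * lam ^ k * ε ^ (1-p))
        = a0 ^ (-A) := by
      have e3 : lam * lam ^ k = lam ^ m := by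
        rw [show m = k + 1 from by omega, pow_succ]; ring
      have e4 : lam ^ m = (ε/a0) ^ A := by
        rw [← Real.rpow_natCast lam m, hlam, ← Real.rpow_mul (by positivity),
          show (1:ℝ)/(1+γ) * (m:ℕ) = A from by rw [hA, ← hmcast]; ring]
      rw [e3, e4, Real.div_rpow hε0.le ha0.le, ← hA]
      rw [div_eq_mul_inv, ← Real.rpow_neg ha0.le]
      rw [show ε ^ (p - 1 - A) * (ε ^ A * a0 ^ (-A) * ε ^ (1-p))
          = ε ^ (p - 1 - A) * ε ^ A * ε ^ (1-p) * a0 ^ (-A) from by ring,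
        ← Real.rpow_add hε0, ← Real.rpow_add hε0,
        show p - 1 - A + A + (1-p) = 0 from by ring, Real.rpow_zero, one_mul]
    rw [step1, step2, step3, step4, hC]
    rw [show ε ^ (p - 1 - ((n:ℝ) - 1) / (1 + γ)) *
        ((m:ℝ) * (c * (lam * (lam ^ k * ε ^ (1-p)) * ∫ t in (0:ℝ)..(R ε), h t)))
        = (ε ^ ((p - 1) - ((n:ℝ) - 1) / (1 + γ)) * (lam * lam ^ k * ε ^ (1-p)))
          * ((m:ℝ) * c) * ∫ t in (0:ℝ)..(R ε), h t from by ring, hscalar]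
    ring
  -- the limit
  have hRtop : Tendsto R (nhdsWithin 0 (Ioi 0)) atTop := by
    have h1 : Tendsto (fun ε : ℝ => a0/ε) (nhdsWithin 0 (Ioi 0)) atTop := by
      simp_rw [div_eq_mul_inv]
      exact tendsto_inv_nhdsGT_zero.const_mul_atTop ha0
    have h2 := (tendsto_rpow_atTop (by positivity : (0:ℝ) < 1/(1+γ))).comp h1
    exact h2.const_mul_atTop hr
  have hInt := radial_integrable (γ := γ) (p := p) k hγ0 hbk
  have hlim : Tendsto (fun ε => ∫ t in (0:ℝ)..(R ε), h t) (nhdsWithin 0 (Ioi 0))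
      (nhds (∫ t in Ioi (0:ℝ), h t)) := by
    rw [hh]
    exact intervalIntegral_tendsto_integral_Ioi 0 hInt hRtop
  have hfinal : C * (∫ t in Ioi (0:ℝ), h t)
      = a0 ^ ((1 - (n:ℝ)) / (1 + γ)) / Kconst n γ p := by
    have hI := radial_val (γ := γ) (p := p) k hγ0 hbk
    have hhalf : (0:ℝ) < (m:ℝ)/2 := by positivity
    have hcval : c = Real.pi ^ ((m:ℝ)/2) / Real.Gamma ((m:ℝ)/2 + 1) := by
      have hv := EuclideanSpace.volume_ball (Fin m) (0 : EuclideanSpace ℝ (Fin m)) 1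
      have hsqrt : Real.sqrt Real.pi ^ (Fintype.card (Fin m))
          = Real.pi ^ ((m:ℝ)/2) := by
        rw [Fintype.card_fin, Real.sqrt_eq_rpow,
          ← Real.rpow_natCast (Real.pi ^ ((1:ℝ)/2)) m, ← Real.rpow_mul Real.pi_pos.le,
          show (1:ℝ)/2 * (m:ℕ) = (m:ℝ)/2 from by ring]
      rw [hc, hv, hsqrt, Fintype.card_fin]
      rw [ENNReal.ofReal_one, one_pow, one_mul, ENNReal.toReal_ofReal (by positivity)]
    simp only [hh]
    rw [hI, hC, hcval]
    rw [Real.Gamma_add_one hhalf.ne']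
    rw [hkcast, hmcast, ← hA]
    simp only [Kconst]
    rw [show (1 - (n:ℝ))/(1+γ) = -A from by rw [hA]; ring,
      show p - ((n:ℝ)+γ)/(1+γ) = p - 1 - A from by rw [hnp]; ring, ← hA, ← hmcast]
    have hG1 : 0 < Real.Gamma ((m:ℝ)/2) := Real.Gamma_pos_of_pos hhalf
    have hG2 : 0 < Real.Gamma (p-1) := Real.Gamma_pos_of_pos hp1
    have hG3 : 0 < Real.Gamma A := Real.Gamma_pos_of_pos hApos
    have hG4 : 0 < Real.Gamma (p-1-A) := Real.Gamma_pos_of_pos hB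
    have hpi : (0:ℝ) < Real.pi ^ ((m:ℝ)/2) := Real.rpow_pos_of_pos Real.pi_pos _
    have hm0 : ((m:ℝ)) ≠ 0 := by positivity
    field_simp
  rw [← hfinal]
  exact Tendsto.congr' (EventuallyEq.symm (eventually_mem_nhdsWithin.mono main_eq))
    (hlim.const_mul C)
end

section
/- Let n ≥ 2 be an integer, γ ∈ (0,1), r > 0, and a0 > 0. Then lim_{ε→0⁺} |ln ε|^{−1} · ∫_{{|x'|<r}} (ε + a0·|x'|^{1+γ})^{−(n−1)/(1+γ)} dx' = a0^{(1−n)/(1+γ)} · 2π^{(n−1)/2} / ((1+γ)·Γ((n−1)/2)). -/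
open MeasureTheory Filter Set

private lemma bernoulli_rpow {β t : ℝ} (hβ : 0 ≤ β) (ht : 0 ≤ t) :
    1 - β * t ≤ (1 + t) ^ (-β) := by
  have h1 : (0:ℝ) < 1 + t := by linarith
  have h2 : Real.log (1 + t) ≤ t := by
    have := Real.log_le_sub_one_of_pos h1; linarith
  have h3 : Real.log (1 + t) * (-β) ≥ -β * t := by nlinarith
  calc 1 - β * t = -β * t + 1 := by ring
    _ ≤ Real.exp (-β * t) := Real.add_one_le_exp _
    _ ≤ Real.exp (Real.log (1 + t) * (-β)) := Real.exp_le_exp.2 h3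
    _ = (1 + t) ^ (-β) := (Real.rpow_def_of_pos h1 _).symm

section PerEps

variable {d : ℕ} {γ r a0 ε : ℝ}

-- key pointwise identity
private lemma key1 (hd : 1 ≤ d) (hγ0 : 0 < γ) (ha0 : 0 < a0) {y : ℝ} (hy : 0 < y) :
    (y:ℝ) ^ (d - 1) * (a0 * y ^ (1 + γ)) ^ (-((d:ℝ) / (1 + γ))) = a0 ^ (-((d:ℝ) / (1 + γ))) * y⁻¹ := by
  have hg : (0:ℝ) < 1 + γ := by linarith
  have h1 : (a0 * y ^ (1 + γ)) ^ (-((d:ℝ) / (1 + γ)))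
      = a0 ^ (-((d:ℝ) / (1 + γ))) * (y ^ (1 + γ)) ^ (-((d:ℝ) / (1 + γ))) :=
    Real.mul_rpow ha0.le (Real.rpow_nonneg hy.le _)
  have h2 : (y ^ (1 + γ)) ^ (-((d:ℝ) / (1 + γ))) = y ^ (-(d:ℝ)) := by
    rw [← Real.rpow_mul hy.le]
    congr 1
    field_simp
  have h3 : (y:ℝ) ^ (d - 1) = y ^ ((d:ℝ) - 1) := by
    rw [← Real.rpow_natCast y (d - 1), Nat.cast_sub hd, Nat.cast_one]
  rw [h1, h3, h2, mul_left_comm, ← Real.rpow_add hy]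
  rw [show (d:ℝ) - 1 + -(d:ℝ) = -1 by ring, Real.rpow_neg_one]

private lemma phi_contOn (hγ0 : 0 < γ) (hr : 0 < r) (ha0 : 0 < a0) (hε : 0 < ε) :
    ContinuousOn (fun y : ℝ => y ^ (d - 1) * (ε + a0 * y ^ (1 + γ)) ^ (-((d:ℝ) / (1 + γ))))
      (Icc 0 r) := by
  have c1 : Continuous fun y : ℝ => ε + a0 * y ^ (1 + γ) := by
    apply continuous_const.add
    apply continuous_const.mul
    rw [continuous_iff_continuousAt]
    intro y
    exact Real.continuousAt_rpow_const y _ (Or.inr (by positivity))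
  apply ContinuousOn.mul (continuous_pow _).continuousOn
  apply ContinuousOn.rpow_const c1.continuousOn
  intro y hy
  left
  have : 0 ≤ a0 * y ^ (1 + γ) := mul_nonneg ha0.le (Real.rpow_nonneg hy.1 _)
  positivity

-- value of ε^(-β) * A^d
private lemma Aval (hd : 1 ≤ d) (hγ0 : 0 < γ) (ha0 : 0 < a0) (hε : 0 < ε) :
    ε ^ (-((d:ℝ) / (1 + γ))) * ((ε / a0) ^ ((1 + γ)⁻¹)) ^ d = a0 ^ (-((d:ℝ) / (1 + γ))) := by
  have hg : (0:ℝ) < 1 + γ := by linarith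
  have h4 : ((ε / a0) ^ ((1 + γ)⁻¹)) ^ d = (ε / a0) ^ ((d:ℝ) / (1 + γ)) := by
    rw [← Real.rpow_natCast ((ε / a0) ^ ((1 + γ)⁻¹)) d,
      ← Real.rpow_mul (by positivity : (0:ℝ) ≤ ε / a0)]
    congr 1
    field_simp
  have hεβ : (0:ℝ) < ε ^ ((d:ℝ) / (1 + γ)) := Real.rpow_pos_of_pos hε _
  have ha0β : (0:ℝ) < a0 ^ ((d:ℝ) / (1 + γ)) := Real.rpow_pos_of_pos ha0 _
  rw [h4, Real.div_rpow hε.le ha0.le, Real.rpow_neg hε.le, Real.rpow_neg ha0.le]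
  field_simp


private lemma J_upper (hd : 1 ≤ d) (hγ0 : 0 < γ) (hr : 0 < r) (ha0 : 0 < a0)
    (hε0 : 0 < ε) (hεr : ε < a0 * r ^ (1 + γ)) :
    (∫ y in Ioo (0:ℝ) r, y ^ (d - 1) * (ε + a0 * y ^ (1 + γ)) ^ (-((d:ℝ) / (1 + γ))))
      ≤ a0 ^ (-((d:ℝ) / (1 + γ))) * (d:ℝ)⁻¹
        + a0 ^ (-((d:ℝ) / (1 + γ))) * (Real.log r - Real.log ((ε / a0) ^ ((1 + γ)⁻¹))) := by
  have hg : (0:ℝ) < 1 + γ := by linarith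
  set β : ℝ := (d:ℝ) / (1 + γ) with hβdef
  set A : ℝ := (ε / a0) ^ ((1 + γ)⁻¹) with hAdef
  set φ : ℝ → ℝ := fun y => y ^ (d - 1) * (ε + a0 * y ^ (1 + γ)) ^ (-β) with hφdef
  have hA0 : 0 < A := Real.rpow_pos_of_pos (div_pos hε0 ha0) _
  have hAr : A < r := by
    have hlt : ε / a0 < r ^ (1 + γ) := (div_lt_iff₀ ha0).2 (by linarith [mul_comm a0 (r ^ (1+γ))])
    calc A < (r ^ (1 + γ)) ^ ((1 + γ)⁻¹) :=
          Real.rpow_lt_rpow (by positivity) hlt (by positivity)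
      _ = r := Real.rpow_rpow_inv hr.le (by positivity)
  have hint : IntervalIntegrable φ volume 0 r := by
    apply ContinuousOn.intervalIntegrable
    rw [uIcc_of_le hr.le]
    exact phi_contOn hγ0 hr ha0 hε0
  have hmemA : A ∈ uIcc (0:ℝ) r := by
    rw [uIcc_of_le hr.le]; exact ⟨hA0.le, hAr.le⟩
  have hi1 : IntervalIntegrable φ volume 0 A :=
    hint.mono_set (uIcc_subset_uIcc (by rw [uIcc_of_le hr.le]; exact ⟨le_refl _, hr.le⟩) hmemA)
  have hi2 : IntervalIntegrable φ volume A r :=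
    hint.mono_set (uIcc_subset_uIcc hmemA (by rw [uIcc_of_le hr.le]; exact ⟨hr.le, le_refl _⟩))
  have hJeq : (∫ y in Ioo (0:ℝ) r, φ y) = (∫ y in (0:ℝ)..A, φ y) + ∫ y in A..r, φ y := by
    rw [intervalIntegral.integral_add_adjacent_intervals hi1 hi2,
      intervalIntegral.integral_of_le hr.le, integral_Ioc_eq_integral_Ioo]
  have hb1 : (∫ y in (0:ℝ)..A, φ y) ≤ a0 ^ (-β) * (d:ℝ)⁻¹ := by
    have hint2 : IntervalIntegrable (fun y : ℝ => ε ^ (-β) * y ^ (d - 1)) volume 0 A :=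
      (intervalIntegral.intervalIntegrable_pow _).const_mul _
    have hmono : (∫ y in (0:ℝ)..A, φ y) ≤ ∫ y in (0:ℝ)..A, ε ^ (-β) * y ^ (d - 1) := by
      apply intervalIntegral.integral_mono_on hA0.le hi1 hint2
      intro y hy
      have hbase : ε ≤ ε + a0 * y ^ (1 + γ) :=
        le_add_of_nonneg_right (mul_nonneg ha0.le (Real.rpow_nonneg hy.1 _))
      have h5 := Real.rpow_le_rpow_of_nonpos hε0 hbase
        (neg_nonpos.2 (by positivity : (0:ℝ) ≤ β))
      calc φ y ≤ y ^ (d - 1) * ε ^ (-β) :=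
            mul_le_mul_of_nonneg_left h5 (pow_nonneg hy.1 _)
        _ = ε ^ (-β) * y ^ (d - 1) := mul_comm _ _
    have hd0 : d ≠ 0 := by omega
    have hcomp : (∫ y in (0:ℝ)..A, ε ^ (-β) * y ^ (d - 1)) = ε ^ (-β) * (A ^ d / d) := by
      rw [intervalIntegral.integral_const_mul, integral_pow, Nat.sub_add_cancel hd,
        zero_pow hd0]
      have e2 : ((d - 1 : ℕ):ℝ) + 1 = (d:ℝ) := by
        rw [Nat.cast_sub hd]; push_cast; ring
      rw [e2]
      ring
    have hval : ε ^ (-β) * (A ^ d / d) = a0 ^ (-β) * (d:ℝ)⁻¹ := by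
      rw [div_eq_mul_inv, ← mul_assoc, Aval hd hγ0 ha0 hε0]
    rw [hcomp, hval] at hmono
    exact hmono
  have hb2 : (∫ y in A..r, φ y) ≤ a0 ^ (-β) * (Real.log r - Real.log A) := by
    have hiinv : IntervalIntegrable (fun y : ℝ => a0 ^ (-β) * y⁻¹) volume A r := by
      apply IntervalIntegrable.const_mul
      apply ContinuousOn.intervalIntegrable
      apply ContinuousOn.inv₀ continuousOn_id
      intro x hx
      rw [uIcc_of_le hAr.le] at hx
      exact (lt_of_lt_of_le hA0 hx.1).ne'
    have hmono : (∫ y in A..r, φ y) ≤ ∫ y in A..r, a0 ^ (-β) * y⁻¹ := by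
      apply intervalIntegral.integral_mono_on hAr.le hi2 hiinv
      intro y hy
      have hy0 : 0 < y := lt_of_lt_of_le hA0 hy.1
      have hyp : 0 < a0 * y ^ (1 + γ) := mul_pos ha0 (Real.rpow_pos_of_pos hy0 _)
      have hbase : a0 * y ^ (1 + γ) ≤ ε + a0 * y ^ (1 + γ) := by linarith
      have h5 := Real.rpow_le_rpow_of_nonpos hyp hbase
        (neg_nonpos.2 (by positivity : (0:ℝ) ≤ β))
      calc φ y ≤ y ^ (d - 1) * (a0 * y ^ (1 + γ)) ^ (-β) :=
            mul_le_mul_of_nonneg_left h5 (pow_nonneg hy0.le _)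
        _ = a0 ^ (-β) * y⁻¹ := key1 hd hγ0 ha0 hy0
    have hcomp : (∫ y in A..r, a0 ^ (-β) * y⁻¹) = a0 ^ (-β) * (Real.log r - Real.log A) := by
      rw [intervalIntegral.integral_const_mul, integral_inv_of_pos hA0 hr,
        Real.log_div hr.ne' hA0.ne']
    rw [hcomp] at hmono
    exact hmono
  calc (∫ y in Ioo (0:ℝ) r, φ y) = (∫ y in (0:ℝ)..A, φ y) + ∫ y in A..r, φ y := hJeq
    _ ≤ a0 ^ (-β) * (d:ℝ)⁻¹ + a0 ^ (-β) * (Real.log r - Real.log A) := add_le_add hb1 hb2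


private lemma J_lower (hd : 1 ≤ d) (hγ0 : 0 < γ) (hr : 0 < r) (ha0 : 0 < a0)
    (hε0 : 0 < ε) (hεr : ε < a0 * r ^ (1 + γ)) :
    a0 ^ (-((d:ℝ) / (1 + γ))) * (Real.log r - Real.log ((ε / a0) ^ ((1 + γ)⁻¹)))
      - a0 ^ (-((d:ℝ) / (1 + γ))) * (((d:ℝ) / (1 + γ)) / (1 + γ))
      ≤ ∫ y in Ioo (0:ℝ) r, y ^ (d - 1) * (ε + a0 * y ^ (1 + γ)) ^ (-((d:ℝ) / (1 + γ))) := by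
  have hg : (0:ℝ) < 1 + γ := by linarith
  set β : ℝ := (d:ℝ) / (1 + γ) with hβdef
  have hβ0 : 0 < β := by positivity
  set A : ℝ := (ε / a0) ^ ((1 + γ)⁻¹) with hAdef
  set φ : ℝ → ℝ := fun y => y ^ (d - 1) * (ε + a0 * y ^ (1 + γ)) ^ (-β) with hφdef
  set ψ : ℝ → ℝ :=
    fun y => a0 ^ (-β) * y⁻¹ - β * a0 ^ (-β) * (ε / a0) * y ^ (-(2 + γ)) with hψdef
  have hA0 : 0 < A := Real.rpow_pos_of_pos (div_pos hε0 ha0) _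
  have hAr : A < r := by
    have hlt : ε / a0 < r ^ (1 + γ) := (div_lt_iff₀ ha0).2 (by linarith [mul_comm a0 (r ^ (1+γ))])
    calc A < (r ^ (1 + γ)) ^ ((1 + γ)⁻¹) :=
          Real.rpow_lt_rpow (by positivity) hlt (by positivity)
      _ = r := Real.rpow_rpow_inv hr.le (by positivity)
  have hint : IntervalIntegrable φ volume 0 r := by
    apply ContinuousOn.intervalIntegrable
    rw [uIcc_of_le hr.le]
    exact phi_contOn hγ0 hr ha0 hε0
  have hmemA : A ∈ uIcc (0:ℝ) r := by
    rw [uIcc_of_le hr.le]; exact ⟨hA0.le, hAr.le⟩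
  have hi1 : IntervalIntegrable φ volume 0 A :=
    hint.mono_set (uIcc_subset_uIcc (by rw [uIcc_of_le hr.le]; exact ⟨le_refl _, hr.le⟩) hmemA)
  have hi2 : IntervalIntegrable φ volume A r :=
    hint.mono_set (uIcc_subset_uIcc hmemA (by rw [uIcc_of_le hr.le]; exact ⟨hr.le, le_refl _⟩))
  have hJeq : (∫ y in Ioo (0:ℝ) r, φ y) = (∫ y in (0:ℝ)..A, φ y) + ∫ y in A..r, φ y := by
    rw [intervalIntegral.integral_add_adjacent_intervals hi1 hi2,
      intervalIntegral.integral_of_le hr.le, integral_Ioc_eq_integral_Ioo]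
  have hp1 : (0:ℝ) ≤ ∫ y in (0:ℝ)..A, φ y := by
    apply intervalIntegral.integral_nonneg hA0.le
    intro y hy
    have h6 : (0:ℝ) ≤ ε + a0 * y ^ (1 + γ) := by
      have : 0 ≤ a0 * y ^ (1 + γ) := mul_nonneg ha0.le (Real.rpow_nonneg hy.1 _)
      linarith
    exact mul_nonneg (pow_nonneg hy.1 _) (Real.rpow_nonneg h6 _)
  have hiψ : IntervalIntegrable ψ volume A r := by
    apply IntervalIntegrable.sub
    · apply IntervalIntegrable.const_mul
      apply ContinuousOn.intervalIntegrable
      apply ContinuousOn.inv₀ continuousOn_id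
      intro x hx
      rw [uIcc_of_le hAr.le] at hx
      exact (lt_of_lt_of_le hA0 hx.1).ne'
    · apply IntervalIntegrable.const_mul
      apply ContinuousOn.intervalIntegrable
      apply ContinuousOn.rpow_const continuousOn_id
      intro x hx
      rw [uIcc_of_le hAr.le] at hx
      exact Or.inl (lt_of_lt_of_le hA0 hx.1).ne'
  have hmono : (∫ y in A..r, ψ y) ≤ ∫ y in A..r, φ y := by
    apply intervalIntegral.integral_mono_on hAr.le hiψ hi2
    intro y hy
    have hy0 : 0 < y := lt_of_lt_of_le hA0 hy.1
    have hyp : 0 < a0 * y ^ (1 + γ) := mul_pos ha0 (Real.rpow_pos_of_pos hy0 _)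
    set t : ℝ := ε / (a0 * y ^ (1 + γ)) with htdef
    have ht : 0 ≤ t := by positivity
    have hsum : ε + a0 * y ^ (1 + γ) = (a0 * y ^ (1 + γ)) * (1 + t) := by
      rw [htdef]
      field_simp
      ring
    have hφeq : φ y = (a0 ^ (-β) * y⁻¹) * (1 + t) ^ (-β) := by
      show y ^ (d - 1) * (ε + a0 * y ^ (1 + γ)) ^ (-β) = _
      rw [hsum, Real.mul_rpow hyp.le (by linarith : (0:ℝ) ≤ 1 + t), ← mul_assoc,
        key1 hd hγ0 ha0 hy0]
    have hyy : y * y ^ (1 + γ) = y ^ ((2:ℝ) + γ) := by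
      nth_rewrite 1 [← Real.rpow_one y]
      rw [← Real.rpow_add hy0]
      ring_nf
    have hty : y⁻¹ * t = (ε / a0) * y ^ (-((2:ℝ) + γ)) := by
      rw [htdef, Real.rpow_neg hy0.le, ← hyy]
      have hy1 : y ^ (1 + γ) ≠ 0 := (Real.rpow_pos_of_pos hy0 _).ne'
      field_simp
    have hber := bernoulli_rpow hβ0.le ht
    calc ψ y = a0 ^ (-β) * y⁻¹ - β * a0 ^ (-β) * (y⁻¹ * t) := by
          show a0 ^ (-β) * y⁻¹ - β * a0 ^ (-β) * (ε / a0) * y ^ (-(2 + γ)) = _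
          rw [hty]; ring
      _ = (a0 ^ (-β) * y⁻¹) * (1 - β * t) := by ring
      _ ≤ (a0 ^ (-β) * y⁻¹) * (1 + t) ^ (-β) := by
          apply mul_le_mul_of_nonneg_left hber
          positivity
      _ = φ y := hφeq.symm
  -- compute ∫ ψ and bound it from below
  have hlog : (∫ y in A..r, a0 ^ (-β) * y⁻¹) = a0 ^ (-β) * (Real.log r - Real.log A) := by
    rw [intervalIntegral.integral_const_mul, integral_inv_of_pos hA0 hr,
      Real.log_div hr.ne' hA0.ne']
  have hrpowint : (∫ y in A..r, y ^ (-((2:ℝ) + γ)))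
      = (A ^ (-((1:ℝ) + γ)) - r ^ (-((1:ℝ) + γ))) / (1 + γ) := by
    rw [integral_rpow (Or.inr ⟨by intro h; rw [neg_eq_iff_eq_neg] at h; linarith [h],
      by rw [uIcc_of_le hAr.le]; exact fun h => absurd h.1 (not_le.2 hA0)⟩)]
    rw [show -((2:ℝ) + γ) + 1 = -(1 + γ) by ring]
    rw [div_eq_div_iff (by linarith : -((1:ℝ)+γ) ≠ 0) (by linarith : (1:ℝ)+γ ≠ 0)]
    ring
  have hAexp : A ^ (-((1:ℝ) + γ)) = a0 / ε := by
    rw [hAdef, ← Real.rpow_mul (by positivity : (0:ℝ) ≤ ε / a0),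
      show (1 + γ)⁻¹ * (-(1 + γ)) = -1 by field_simp, Real.rpow_neg_one, inv_div]
  have hi_inv : IntervalIntegrable (fun y : ℝ => a0 ^ (-β) * y⁻¹) volume A r := by
    apply IntervalIntegrable.const_mul
    apply ContinuousOn.intervalIntegrable
    apply ContinuousOn.inv₀ continuousOn_id
    intro x hx
    rw [uIcc_of_le hAr.le] at hx
    exact (lt_of_lt_of_le hA0 hx.1).ne'
  have hi_rpow : IntervalIntegrable
      (fun y : ℝ => β * a0 ^ (-β) * (ε / a0) * y ^ (-((2:ℝ) + γ))) volume A r := by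
    apply IntervalIntegrable.const_mul
    apply ContinuousOn.intervalIntegrable
    apply ContinuousOn.rpow_const continuousOn_id
    intro x hx
    rw [uIcc_of_le hAr.le] at hx
    exact Or.inl (lt_of_lt_of_le hA0 hx.1).ne'
  have hψsplit : (∫ y in A..r, ψ y)
      = a0 ^ (-β) * (Real.log r - Real.log A)
        - β * a0 ^ (-β) * (ε / a0) * ((A ^ (-((1:ℝ) + γ)) - r ^ (-((1:ℝ) + γ))) / (1 + γ)) := by
    have : (∫ y in A..r, ψ y) = (∫ y in A..r, a0 ^ (-β) * y⁻¹)
        - ∫ y in A..r, β * a0 ^ (-β) * (ε / a0) * y ^ (-((2:ℝ) + γ)) := by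
      rw [← intervalIntegral.integral_sub hi_inv hi_rpow]
    rw [this, hlog, intervalIntegral.integral_const_mul, hrpowint]
  have hψval : a0 ^ (-β) * (Real.log r - Real.log A) - a0 ^ (-β) * (β / (1 + γ))
      ≤ ∫ y in A..r, ψ y := by
    rw [hψsplit]
    have h7 : β * a0 ^ (-β) * (ε / a0)
        * ((A ^ (-((1:ℝ) + γ)) - r ^ (-((1:ℝ) + γ))) / (1 + γ))
        ≤ a0 ^ (-β) * (β / (1 + γ)) := by
      have hX : (0:ℝ) ≤ r ^ (-((1:ℝ) + γ)) := Real.rpow_nonneg hr.le _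
      have hc : (0:ℝ) ≤ β * a0 ^ (-β) * (ε / a0) := by positivity
      have h8 : (A ^ (-((1:ℝ) + γ)) - r ^ (-((1:ℝ) + γ))) / (1 + γ)
          ≤ (a0 / ε) / (1 + γ) := by
        rw [hAexp]
        gcongr
        linarith
      have h9 : β * a0 ^ (-β) * (ε / a0) * ((a0 / ε) / (1 + γ)) = a0 ^ (-β) * (β / (1 + γ)) := by
        have : (ε / a0) * (a0 / ε) = 1 := by field_simp
        field_simp
      calc β * a0 ^ (-β) * (ε / a0) * ((A ^ (-((1:ℝ) + γ)) - r ^ (-((1:ℝ) + γ))) / (1 + γ))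
          ≤ β * a0 ^ (-β) * (ε / a0) * ((a0 / ε) / (1 + γ)) :=
            mul_le_mul_of_nonneg_left h8 hc
        _ = a0 ^ (-β) * (β / (1 + γ)) := h9
    linarith
  calc a0 ^ (-β) * (Real.log r - Real.log A) - a0 ^ (-β) * (β / (1 + γ))
      ≤ ∫ y in A..r, ψ y := hψval
    _ ≤ ∫ y in A..r, φ y := hmono
    _ ≤ (∫ y in (0:ℝ)..A, φ y) + ∫ y in A..r, φ y := by linarith
    _ = ∫ y in Ioo (0:ℝ) r, φ y := hJeq.symm

end PerEps

private lemma radial_limit {d : ℕ} (hd : 1 ≤ d) {γ r a0 : ℝ}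
    (hγ0 : 0 < γ) (hr : 0 < r) (ha0 : 0 < a0) :
    Tendsto (fun ε : ℝ => |Real.log ε|⁻¹ *
        ∫ y in Ioo (0:ℝ) r, y ^ (d - 1) * (ε + a0 * y ^ (1 + γ)) ^ (-((d:ℝ) / (1 + γ))))
      (nhdsWithin 0 (Ioi 0))
      (nhds (a0 ^ (-((d:ℝ) / (1 + γ))) / (1 + γ))) := by
  have hg : (0:ℝ) < 1 + γ := by linarith
  have hd0 : (0:ℝ) < d := by exact_mod_cast hd
  set β : ℝ := (d:ℝ) / (1 + γ) with hβdef
  have hβ0 : 0 < β := by positivity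
  set C : ℝ := a0 ^ (-β) * ((d:ℝ)⁻¹ + β / (1 + γ)) with hCdef
  have ha0β : 0 < a0 ^ (-β) := Real.rpow_pos_of_pos ha0 _
  have hSmem : Ioo (0:ℝ) (min 1 (a0 * r ^ (1 + γ))) ∈ nhdsWithin (0:ℝ) (Ioi 0) :=
    Ioo_mem_nhdsGT_of_mem ⟨le_refl _, lt_min one_pos (by positivity)⟩
  -- limit of the auxiliary function of g ε := |log ε|⁻¹
  have hg0 : Tendsto (fun ε : ℝ => |Real.log ε|⁻¹) (nhdsWithin 0 (Ioi 0)) (nhds 0) := by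
    have h2 : Tendsto (fun ε : ℝ => |Real.log ε|) (nhdsWithin (0:ℝ) (Ioi 0)) atTop :=
      tendsto_abs_atBot_atTop.comp Real.tendsto_log_nhdsGT_zero
    exact tendsto_inv_atTop_zero.comp h2
  have hkey : ∀ c : ℝ, Tendsto (fun ε : ℝ =>
      a0 ^ (-β) * (|Real.log ε|⁻¹ * Real.log r
        - (1 + γ)⁻¹ * (-1 - |Real.log ε|⁻¹ * Real.log a0)) + c * |Real.log ε|⁻¹)
      (nhdsWithin 0 (Ioi 0)) (nhds (a0 ^ (-β) / (1 + γ))) := by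
    intro c
    have hcont : Continuous (fun x : ℝ =>
        a0 ^ (-β) * (x * Real.log r - (1 + γ)⁻¹ * (-1 - x * Real.log a0)) + c * x) := by
      continuity
    have h3 := (hcont.tendsto 0).comp hg0
    have h4 : a0 ^ (-β) * ((0:ℝ) * Real.log r - (1 + γ)⁻¹ * (-1 - 0 * Real.log a0)) + c * 0
        = a0 ^ (-β) / (1 + γ) := by
      rw [div_eq_mul_inv]
      ring
    rw [h4] at h3
    exact h3
  -- key eventual identity for log of A ε
  have hglog : ∀ ε : ℝ, ε ∈ Ioo (0:ℝ) (min 1 (a0 * r ^ (1 + γ))) →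
      |Real.log ε|⁻¹ * Real.log ((ε / a0) ^ ((1 + γ)⁻¹))
        = (1 + γ)⁻¹ * (-1 - |Real.log ε|⁻¹ * Real.log a0) := by
    intro ε hε
    have h0 : 0 < ε := hε.1
    have h1 : ε < 1 := lt_of_lt_of_le hε.2 (min_le_left _ _)
    have hlneg : Real.log ε < 0 := Real.log_neg h0 h1
    have habs : |Real.log ε| = -Real.log ε := abs_of_neg hlneg
    have hgl : |Real.log ε|⁻¹ * Real.log ε = -1 := by
      rw [habs]
      rw [inv_neg, neg_mul, inv_mul_cancel₀ hlneg.ne]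
    rw [Real.log_rpow (div_pos h0 ha0), Real.log_div h0.ne' ha0.ne']
    rw [show |Real.log ε|⁻¹ * ((1 + γ)⁻¹ * (Real.log ε - Real.log a0))
        = (1 + γ)⁻¹ * (|Real.log ε|⁻¹ * Real.log ε - |Real.log ε|⁻¹ * Real.log a0) by ring, hgl]
  apply tendsto_of_tendsto_of_tendsto_of_le_of_le' (hkey (-C)) (hkey C)
  · filter_upwards [hSmem] with ε hε
    have h0 : 0 < ε := hε.1
    have h2 : ε < a0 * r ^ (1 + γ) := lt_of_lt_of_le hε.2 (min_le_right _ _)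
    have hlb := J_lower hd hγ0 hr ha0 h0 h2
    have hgnn : (0:ℝ) ≤ |Real.log ε|⁻¹ := by positivity
    have step := mul_le_mul_of_nonneg_left hlb hgnn
    calc a0 ^ (-β) * (|Real.log ε|⁻¹ * Real.log r
          - (1 + γ)⁻¹ * (-1 - |Real.log ε|⁻¹ * Real.log a0)) + (-C) * |Real.log ε|⁻¹
        = |Real.log ε|⁻¹ * (a0 ^ (-β)
            * (Real.log r - Real.log ((ε / a0) ^ ((1 + γ)⁻¹))) - C) := by
          rw [show |Real.log ε|⁻¹ * (a0 ^ (-β)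
              * (Real.log r - Real.log ((ε / a0) ^ ((1 + γ)⁻¹))) - C)
            = a0 ^ (-β) * (|Real.log ε|⁻¹ * Real.log r
              - |Real.log ε|⁻¹ * Real.log ((ε / a0) ^ ((1 + γ)⁻¹))) + (-C) * |Real.log ε|⁻¹
            by ring, hglog ε hε]
      _ ≤ |Real.log ε|⁻¹ * (a0 ^ (-β) * (Real.log r - Real.log ((ε / a0) ^ ((1 + γ)⁻¹)))
            - a0 ^ (-β) * (β / (1 + γ))) := by
          apply mul_le_mul_of_nonneg_left _ hgnn
          have : a0 ^ (-β) * (β / (1 + γ)) ≤ C := by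
            rw [hCdef]
            have h9 : (0:ℝ) < (d:ℝ)⁻¹ := by positivity
            nlinarith
          linarith
      _ ≤ |Real.log ε|⁻¹ * ∫ y in Ioo (0:ℝ) r, y ^ (d - 1)
            * (ε + a0 * y ^ (1 + γ)) ^ (-β) := step
  · filter_upwards [hSmem] with ε hε
    have h0 : 0 < ε := hε.1
    have h2 : ε < a0 * r ^ (1 + γ) := lt_of_lt_of_le hε.2 (min_le_right _ _)
    have hub := J_upper hd hγ0 hr ha0 h0 h2
    have hgnn : (0:ℝ) ≤ |Real.log ε|⁻¹ := by positivity
    have step := mul_le_mul_of_nonneg_left hub hgnn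
    calc |Real.log ε|⁻¹ * ∫ y in Ioo (0:ℝ) r, y ^ (d - 1)
            * (ε + a0 * y ^ (1 + γ)) ^ (-β)
        ≤ |Real.log ε|⁻¹ * (a0 ^ (-β) * (d:ℝ)⁻¹
            + a0 ^ (-β) * (Real.log r - Real.log ((ε / a0) ^ ((1 + γ)⁻¹)))) := step
      _ ≤ |Real.log ε|⁻¹ * (C
            + a0 ^ (-β) * (Real.log r - Real.log ((ε / a0) ^ ((1 + γ)⁻¹)))) := by
          apply mul_le_mul_of_nonneg_left _ hgnn
          have : a0 ^ (-β) * (d:ℝ)⁻¹ ≤ C := by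
            rw [hCdef]
            have h9 : (0:ℝ) < β / (1 + γ) := by positivity
            nlinarith
          linarith
      _ = a0 ^ (-β) * (|Real.log ε|⁻¹ * Real.log r
            - (1 + γ)⁻¹ * (-1 - |Real.log ε|⁻¹ * Real.log a0)) + C * |Real.log ε|⁻¹ := by
          rw [show |Real.log ε|⁻¹ * (C
              + a0 ^ (-β) * (Real.log r - Real.log ((ε / a0) ^ ((1 + γ)⁻¹))))
            = a0 ^ (-β) * (|Real.log ε|⁻¹ * Real.log r
              - |Real.log ε|⁻¹ * Real.log ((ε / a0) ^ ((1 + γ)⁻¹))) + C * |Real.log ε|⁻¹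
            by ring, hglog ε hε]

/-- Remark 4.5, critical case `p = (n+γ)/(1+γ)` with constant coefficient `a₀`. -/
theorem tendsto_log_scaled_integral_constant_coeff
    {n : ℕ} (hn : 2 ≤ n) (γ r a0 : ℝ) (hγ : γ ∈ Ioo (0:ℝ) 1)
    (hr : 0 < r) (ha0 : 0 < a0) :
    Tendsto (fun ε : ℝ =>
      |Real.log ε|⁻¹ *
        ∫ x' in {x' : EuclideanSpace ℝ (Fin (n-1)) | ‖x'‖ < r},
          (ε + a0 * ‖x'‖ ^ (1 + γ)) ^ (-(((n:ℝ) - 1) / (1 + γ))))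
      (nhdsWithin 0 (Ioi 0))
      (nhds (a0 ^ ((1 - (n:ℝ)) / (1 + γ)) * 2 * Real.pi ^ (((n:ℝ) - 1) / 2) /
        ((1 + γ) * Real.Gamma (((n:ℝ) - 1) / 2)))) := by
  obtain ⟨hγ0, hγ1⟩ := hγ
  have hg : (0:ℝ) < 1 + γ := by linarith
  set d : ℕ := n - 1 with hddef
  have hd : 1 ≤ d := by omega
  have hcast : (n:ℝ) - 1 = (d:ℝ) := by
    rw [hddef, Nat.cast_sub (by omega : 1 ≤ n), Nat.cast_one]
  haveI : Nonempty (Fin d) := ⟨⟨0, by omega⟩⟩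
  haveI : Nontrivial (EuclideanSpace ℝ (Fin d)) :=
    inferInstance
  set c0 : ℝ := (d:ℝ) * (volume (Metric.ball (0 : EuclideanSpace ℝ (Fin d)) 1)).toReal
    with hc0def
  have hΓ2pos : 0 < Real.Gamma ((d:ℝ)/2 + 1) := Real.Gamma_pos_of_pos (by positivity)
  have hΓpos : 0 < Real.Gamma ((d:ℝ)/2) := Real.Gamma_pos_of_pos (by positivity)
  have heq : ∀ ε : ℝ, 0 < ε →
      (∫ x' in {x' : EuclideanSpace ℝ (Fin d) | ‖x'‖ < r},
          (ε + a0 * ‖x'‖ ^ (1 + γ)) ^ (-(((n:ℝ) - 1) / (1 + γ))))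
        = c0 * ∫ y in Ioo (0:ℝ) r, y ^ (d - 1) * (ε + a0 * y ^ (1 + γ)) ^ (-((d:ℝ)/(1+γ))) := by
    intro ε hε
    have hsetball : {x' : EuclideanSpace ℝ (Fin d) | ‖x'‖ < r} = Metric.ball 0 r := by
      ext x
      simp [mem_ball_zero_iff]
    rw [hcast, hsetball, ← integral_indicator measurableSet_ball]
    have hind : ∀ x : EuclideanSpace ℝ (Fin d),
        (Metric.ball (0:EuclideanSpace ℝ (Fin d)) r).indicator
          (fun x => (ε + a0 * ‖x‖ ^ (1+γ)) ^ (-((d:ℝ)/(1+γ)))) x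
        = (Iio r).indicator (fun y => (ε + a0 * y ^ (1+γ)) ^ (-((d:ℝ)/(1+γ)))) ‖x‖ := by
      intro x
      by_cases h : ‖x‖ < r
      · rw [indicator_of_mem (mem_ball_zero_iff.2 h), indicator_of_mem (mem_Iio.2 h)]
      · rw [indicator_of_notMem (fun hc => h (mem_ball_zero_iff.1 hc)),
          indicator_of_notMem (fun hc => h (mem_Iio.1 hc))]
    simp_rw [hind]
    rw [integral_fun_norm_addHaar volume
      (fun y => (Iio r).indicator (fun y => (ε + a0 * y ^ (1+γ)) ^ (-((d:ℝ)/(1+γ)))) y)]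
    rw [finrank_euclideanSpace_fin]
    have hind2 : ∀ y : ℝ, y ^ (d - 1)
        • (Iio r).indicator (fun y => (ε + a0 * y ^ (1+γ)) ^ (-((d:ℝ)/(1+γ)))) y
        = (Iio r).indicator
            (fun y => y ^ (d - 1) * (ε + a0 * y ^ (1+γ)) ^ (-((d:ℝ)/(1+γ)))) y := by
      intro y
      by_cases h : y < r
      · rw [indicator_of_mem (mem_Iio.2 h), indicator_of_mem (mem_Iio.2 h), smul_eq_mul]
      · rw [indicator_of_notMem (fun hc => h (mem_Iio.1 hc)),
          indicator_of_notMem (fun hc => h (mem_Iio.1 hc)), smul_zero]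
    simp_rw [hind2]
    rw [setIntegral_indicator measurableSet_Iio, Ioi_inter_Iio]
    rw [nsmul_eq_mul, smul_eq_mul, ← mul_assoc]
    rw [hc0def, measureReal_def]
  have hvol : (volume (Metric.ball (0 : EuclideanSpace ℝ (Fin d)) 1)).toReal
      = Real.sqrt Real.pi ^ d / Real.Gamma ((d:ℝ)/2 + 1) := by
    rw [EuclideanSpace.volume_ball]
    rw [Fintype.card_fin, ENNReal.ofReal_one, one_pow, one_mul,
      ENNReal.toReal_ofReal (by positivity)]
  have hsqrt : Real.sqrt Real.pi ^ d = Real.pi ^ ((d:ℝ)/2) := by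
    rw [Real.sqrt_eq_rpow, ← Real.rpow_natCast (Real.pi ^ ((1:ℝ)/2)) d,
      ← Real.rpow_mul Real.pi_nonneg]
    congr 1
    ring
  have hvalue : c0 * (a0 ^ (-((d:ℝ)/(1+γ))) / (1+γ))
      = a0 ^ ((1 - (n:ℝ)) / (1 + γ)) * 2 * Real.pi ^ (((n:ℝ) - 1) / 2) /
        ((1 + γ) * Real.Gamma (((n:ℝ) - 1) / 2)) := by
    rw [hcast, show (1 - (n:ℝ)) / (1 + γ) = -((d:ℝ)/(1+γ)) from by rw [← hcast]; ring]
    rw [hc0def, hvol, hsqrt, Real.Gamma_add_one (by positivity : ((d:ℝ)/2) ≠ 0)]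
    have hd0 : (0:ℝ) < (d:ℝ) := by exact_mod_cast hd
    field_simp
  rw [← hvalue]
  have hlim := (radial_limit hd hγ0 hr ha0).const_mul c0
  apply Tendsto.congr' ?_ hlim
  filter_upwards [self_mem_nhdsWithin] with ε (hε : ε ∈ Ioi 0)
  rw [heq ε hε]
  ring
end

section
/- Let n ≥ 1 be an integer and p > 1. For all vectors a, b ∈ ℝ^n, with the convention that |x|^{p−2}x := 0 when x = 0 and that (|a|+|b|)^{p−2}|a−b|² := 0 when a = b = 0, the following inequality holds: ⟨|a|^{p−2}a − |b|^{p−2}b, a − b⟩ ≥ (min{1, p−1}/2^{p−2}) · (|a|+|b|)^{p−2} · |a−b|². -/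
open Real

private lemma two_mul_le_two_rpow {q : ℝ} (hq1 : q ≤ 1) : 2 * q ≤ (2:ℝ) ^ q := by
  have hlog : Real.log 2 ≤ 1 := by
    have := Real.log_le_sub_one_of_pos (by norm_num : (0:ℝ) < 2); linarith
  have h2q : (2:ℝ) ^ q = Real.exp (Real.log 2 * q) := by
    rw [Real.rpow_def_of_pos (by norm_num)]
  have h3 : Real.exp (Real.log 2 * q - Real.log 2) * Real.exp (Real.log 2)
      = Real.exp (Real.log 2 * q) := by
    rw [← Real.exp_add]; ring_nf
  rw [Real.exp_log (by norm_num : (0:ℝ) < 2)] at h3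
  rw [h2q, ← h3]
  have key := Real.add_one_le_exp (Real.log 2 * q - Real.log 2)
  nlinarith [Real.log_pos (by norm_num : (1:ℝ) < 2)]

private lemma bernoulli_lower {q m d : ℝ} (hq : 1 ≤ q) (hm : 0 < m) (hd : -m ≤ d) :
    m ^ q + q * (m ^ (q-1) * d) ≤ (m + d) ^ q := by
  have hdm : (-1:ℝ) ≤ d / m := by rw [le_div_iff₀ hm]; linarith
  have hb := one_add_mul_self_le_rpow_one_add hdm hq
  have hmul : m ^ q * (1 + d/m) ^ q = (m + d) ^ q := by
    rw [← Real.mul_rpow hm.le (by linarith : (0:ℝ) ≤ 1 + d/m)]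
    congr 1; field_simp
  have hmq : m ^ (q-1) = m ^ q / m := by rw [Real.rpow_sub hm, Real.rpow_one]
  have h1 : m ^ q * (1 + q * (d/m)) ≤ (m+d)^q := by
    rw [← hmul]; exact mul_le_mul_of_nonneg_left hb (Real.rpow_nonneg hm.le q)
  have h2 : m ^ q + q * (m ^ (q-1) * d) = m ^ q * (1 + q * (d/m)) := by
    rw [hmq]; field_simp
  linarith [h1, h2.ge, h2.le]

private lemma l1core {q m d : ℝ} (hq : 1 ≤ q) (hm : 0 < m) (hd0 : 0 ≤ d) (hdm : d ≤ m) :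
    2 * (m ^ (q-1) * d) ≤ (m + d) ^ q - (m - d) ^ q := by
  have hplus := bernoulli_lower hq hm (by linarith : -m ≤ d)
  have hmq : m ^ (q-1) * m = m ^ q := by rw [Real.rpow_sub hm, Real.rpow_one]; field_simp
  have h1 : (m - d) ^ (q-1) ≤ m ^ (q-1) :=
    Real.rpow_le_rpow (by linarith) (by linarith) (by linarith)
  have h2 : (m - d) ^ q = (m - d) ^ (q-1) * (m - d) := by
    calc (m-d)^q = (m-d)^((q-1)+1) := by congr 1; ring
      _ = (m-d)^(q-1) * (m-d)^(1:ℝ) := Real.rpow_add' (by linarith)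
          (by intro h; exact absurd h (by intro h'; nlinarith))
      _ = (m-d)^(q-1) * (m-d) := by rw [Real.rpow_one]
  have h3 : (m - d) ^ q ≤ m ^ (q-1) * (m - d) := by
    rw [h2]
    exact mul_le_mul_of_nonneg_right h1 (by linarith)
  have h4 : (0:ℝ) ≤ (q-1) * (m ^ (q-1) * d) :=
    mul_nonneg (by linarith) (mul_nonneg (Real.rpow_nonneg hm.le _) hd0)
  nlinarith [hplus, h3, hmq, h4]

private lemma l3core {q m d : ℝ} (hq : 1 ≤ q) (hm : 0 < m) (hd0 : 0 ≤ d) (hdm : d ≤ m) :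
    2 * m ^ q ≤ (m + d) ^ q + (m - d) ^ q := by
  have hplus := bernoulli_lower hq hm (by linarith : -m ≤ d)
  have hminus := bernoulli_lower hq hm (show -m ≤ -d by linarith)
  rw [show m + -d = m - d by ring] at hminus
  nlinarith [hplus, hminus]

private lemma real_subadd {q x y : ℝ} (hq0 : 0 ≤ q) (hq1 : q ≤ 1) (hx : 0 ≤ x) (hy : 0 ≤ y) :
    (x + y) ^ q ≤ x ^ q + y ^ q := by
  have h := NNReal.rpow_add_le_add_rpow (⟨x, hx⟩ : NNReal) (⟨y, hy⟩ : NNReal) hq0 hq1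
  have h2 := NNReal.coe_le_coe.2 h
  push_cast [NNReal.coe_rpow] at h2
  exact h2

private lemma l4core {q m d : ℝ} (hq0 : 0 < q) (hq1 : q ≤ 1) (hm : 0 < m) (hd0 : 0 ≤ d)
    (hdm : d ≤ m) : 2 * q * m ^ q ≤ (m + d) ^ q + (m - d) ^ q := by
  have h1 : ((m + d) + (m - d)) ^ q ≤ (m + d) ^ q + (m - d) ^ q :=
    real_subadd hq0.le hq1 (by linarith) (by linarith)
  have h2 : ((m + d) + (m - d) : ℝ) = 2 * m := by ring
  rw [h2] at h1
  have h3 : ((2:ℝ) * m) ^ q = 2 ^ q * m ^ q := Real.mul_rpow (by norm_num) hm.le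
  have h4 : 2 * q * m ^ q ≤ 2 ^ q * m ^ q :=
    mul_le_mul_of_nonneg_right (two_mul_le_two_rpow hq1) (Real.rpow_nonneg hm.le q)
  linarith [h1, h3.le, h3.ge]

private lemma l2core {q m d : ℝ} (hq0 : 0 < q) (hq1 : q ≤ 1) (hm : 0 < m) (hd0 : 0 ≤ d)
    (hdm : d < m) : 2 * q * (m ^ (q-1) * d) ≤ (m + d) ^ q - (m - d) ^ q := by
  rcases eq_or_lt_of_le hd0 with rfl | hd0'
  · simp
  set g : ℝ → ℝ := fun x => (m + x) ^ q - (m - x) ^ q - 2 * q * m ^ (q-1) * x with hg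
  have hderiv : ∀ x ∈ Set.Ioo (0:ℝ) d, HasDerivAt g
      (q * (m + x) ^ (q-1) + q * (m - x) ^ (q-1) - 2 * q * m ^ (q-1)) x := by
    intro x hx
    have hx1 : (0:ℝ) < m + x := by linarith [hx.1]
    have hx2 : (0:ℝ) < m - x := by linarith [hx.2]
    have h1 : HasDerivAt (fun x : ℝ => (m + x) ^ q) (q * (m + x) ^ (q-1)) x := by
      have := (Real.hasDerivAt_rpow_const (p := q) (Or.inl hx1.ne')).comp x
        ((hasDerivAt_id x).const_add m)
      simpa [Function.comp_def] using this
    have h2 : HasDerivAt (fun x : ℝ => (m - x) ^ q) (-(q * (m - x) ^ (q-1))) x := by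
      have := (Real.hasDerivAt_rpow_const (p := q) (Or.inl hx2.ne')).comp x
        ((hasDerivAt_id x).const_sub m)
      simpa [Function.comp_def] using this
    have h3 : HasDerivAt (fun x : ℝ => 2 * q * m ^ (q-1) * x) (2 * q * m ^ (q-1)) x := by
      simpa using (hasDerivAt_id x).const_mul (2 * q * m ^ (q-1))
    have := (h1.sub h2).sub h3
    exact this.congr_deriv (by ring)
  have hderivnn : ∀ x ∈ Set.Ioo (0:ℝ) d, 0 ≤ deriv g x := by
    intro x hx
    rw [(hderiv x hx).deriv]
    have hx1 : (0:ℝ) < m + x := by linarith [hx.1]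
    have hx2 : (0:ℝ) < m - x := by linarith [hx.2]
    set A := (m + x) ^ (q-1) with hA
    set B := (m - x) ^ (q-1) with hB
    set C := m ^ (q-1) with hC
    have hApos : 0 < A := Real.rpow_pos_of_pos hx1 _
    have hBpos : 0 < B := Real.rpow_pos_of_pos hx2 _
    have hCpos : 0 < C := Real.rpow_pos_of_pos hm _
    have hAB : C * C ≤ A * B := by
      rw [hA, hB, hC, ← Real.mul_rpow hx1.le hx2.le, ← Real.mul_rpow hm.le hm.le]
      apply Real.rpow_le_rpow_of_nonpos (by nlinarith [hx.1]) (by nlinarith [sq_nonneg x])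
        (by linarith)
    have hABC : 2 * C ≤ A + B := by nlinarith [sq_nonneg (A - B), sq_nonneg (A + B)]
    nlinarith [hABC, hq0]
  have hcont : ContinuousOn g (Set.Icc 0 d) := by
    apply ContinuousOn.sub (ContinuousOn.sub ?_ ?_) ?_
    · apply ContinuousOn.rpow_const ((continuous_const.add continuous_id).continuousOn)
      intro x _; right; exact hq0.le
    · apply ContinuousOn.rpow_const ((continuous_const.sub continuous_id).continuousOn)
      intro x _; right; exact hq0.le
    · exact (continuous_const.mul continuous_id).continuousOn
  have hmono : MonotoneOn g (Set.Icc 0 d) := by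
    apply monotoneOn_of_deriv_nonneg (convex_Icc 0 d) hcont
    · intro x hx
      rw [interior_Icc] at hx
      exact ((hderiv x hx).differentiableAt).differentiableWithinAt
    · intro x hx
      rw [interior_Icc] at hx
      exact hderivnn x hx
  have h0 : g 0 = 0 := by simp [hg]
  have hfin : g 0 ≤ g d := hmono (Set.left_mem_Icc.2 hd0) (Set.right_mem_Icc.2 hd0) hd0
  rw [h0] at hfin
  simp only [hg] at hfin
  linarith

private lemma Kle1 {p : ℝ} (hp : 1 < p) : min 1 (p-1) / 2 ^ (p-2) ≤ 1 := by
  have h2 : (0:ℝ) < 2 ^ (p-2) := Real.rpow_pos_of_pos (by norm_num) _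
  rw [div_le_one h2]
  rcases le_total p 2 with h | h
  · have := two_mul_le_two_rpow (show p - 1 ≤ 1 by linarith)
    have h3 : (2:ℝ) ^ (p-2) = 2 ^ (p-1) / 2 := by
      rw [show p - 2 = (p-1) - 1 by ring, Real.rpow_sub (by norm_num), Real.rpow_one]
    have : min 1 (p-1) ≤ p - 1 := min_le_right _ _
    rw [h3]; rw [le_div_iff₀ (by norm_num : (0:ℝ) < 2)]
    calc min 1 (p-1) * 2 ≤ (p-1) * 2 := by nlinarith
      _ = 2 * (p-1) := by ring
      _ ≤ 2 ^ (p-1) := two_mul_le_two_rpow (by linarith)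
  · calc min 1 (p-1) ≤ 1 := min_le_left _ _
      _ ≤ 2 ^ (p-2) := Real.one_le_rpow (by norm_num) (by linarith)

private lemma masterAux {p s t x : ℝ} (hp : 1 < p) (hs : 0 < s) (ht : 0 < t) (hts : t ≤ s)
    (hx : |x| ≤ s * t) :
    min 1 (p-1) / 2 ^ (p-2) * ((s+t) ^ (p-2) * (s^2 + t^2 - 2*x)) ≤
      s ^ (p-2) * s^2 + t ^ (p-2) * t^2 - (s ^ (p-2) + t ^ (p-2)) * x := by
  set q := p - 1 with hq
  have hq0 : 0 < q := by simp [hq]; linarith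
  set m := (s + t) / 2 with hm
  set d := (s - t) / 2 with hd
  have hmpos : 0 < m := by simp [hm]; linarith
  have hd0 : 0 ≤ d := by simp [hd]; linarith
  have hdm : d < m := by simp [hm, hd]; linarith
  have hsmd : s = m + d := by simp [hm, hd]; ring
  have htmd : t = m - d := by simp [hm, hd]; ring
  -- the key reduction of the prefactor
  have hpre : min 1 q / 2 ^ (p-2) * (s+t) ^ (p-2) = min 1 q * m ^ (q-1) := by
    have h1 : s + t = 2 * m := by simp [hm]; ring
    have h2 : ((2:ℝ) * m) ^ (p-2) = 2 ^ (p-2) * m ^ (p-2) := Real.mul_rpow (by norm_num) hmpos.le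
    have h3 : (0:ℝ) < 2 ^ (p-2) := Real.rpow_pos_of_pos (by norm_num) _
    rw [h1, h2, show p - 2 = q - 1 by simp [hq]; ring]
    field_simp
  -- core endpoint inequality 1
  have hcore1 : min 1 q * (2 * (m ^ (q-1) * d)) ≤ s ^ q - t ^ q := by
    rw [hsmd, htmd]
    rcases le_total 1 q with h | h
    · rw [min_eq_left h]
      calc 1 * (2 * (m ^ (q-1) * d)) = 2 * (m ^ (q-1) * d) := by ring
        _ ≤ (m+d)^q - (m-d)^q := l1core h hmpos hd0 hdm.le
    · rw [min_eq_right h]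
      calc q * (2 * (m ^ (q-1) * d)) = 2 * q * (m ^ (q-1) * d) := by ring
        _ ≤ (m+d)^q - (m-d)^q := l2core hq0 h hmpos hd0 hdm
  -- core endpoint inequality 2
  have hcore2 : min 1 q * (2 * m ^ q) ≤ s ^ q + t ^ q := by
    rw [hsmd, htmd]
    rcases le_total 1 q with h | h
    · rw [min_eq_left h]
      calc 1 * (2 * m ^ q) = 2 * m ^ q := by ring
        _ ≤ (m+d)^q + (m-d)^q := l3core h hmpos hd0 hdm.le
    · rw [min_eq_right h]
      calc q * (2 * m ^ q) = 2 * q * m ^ q := by ring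
        _ ≤ (m+d)^q + (m-d)^q := l4core hq0 h hmpos hd0 hdm.le
  -- rpow bookkeeping
  have hsq : s ^ q = s ^ (p-2) * s := by
    rw [← Real.rpow_add_one hs.ne' (p-2)]; congr 1; rw [hq]; ring
  have htq : t ^ q = t ^ (p-2) * t := by
    rw [← Real.rpow_add_one ht.ne' (p-2)]; congr 1; rw [hq]; ring
  have hmq : m ^ q = m ^ (q-1) * m := by
    rw [← Real.rpow_add_one hmpos.ne' (q-1)]; congr 1; ring
  rw [show min 1 (p-1) = min 1 q by rw [hq]]
  rw [show min 1 q / 2 ^ (p-2) * ((s+t) ^ (p-2) * (s^2+t^2-2*x))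
      = (min 1 q / 2 ^ (p-2) * (s+t) ^ (p-2)) * (s^2+t^2-2*x) by ring, hpre]
  -- now the affine-in-x argument
  obtain ⟨hx1, hx2⟩ := abs_le.1 hx
  set K := min 1 q with hK
  set M := m ^ (q-1) with hM
  set S := s ^ (p-2) with hS
  set T := t ^ (p-2) with hT
  have hMnn : 0 ≤ M := Real.rpow_nonneg hmpos.le _
  -- endpoint 1 : F(st) ≥ 0
  have hE1 : 0 ≤ S * s^2 + T * t^2 - (S + T) * (s*t) - K * M * (s^2 + t^2 - 2*(s*t)) := by
    have h1 : K * M * (s^2 + t^2 - 2*(s*t)) = K * (2 * (M * d)) * (s - t) := by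
      rw [hd]; ring
    have h2 : S * s^2 + T * t^2 - (S + T) * (s*t) = (s^q - t^q) * (s - t) := by
      rw [hsq, htq]; ring
    rw [h1, h2]
    apply sub_nonneg.2
    exact mul_le_mul_of_nonneg_right hcore1 (by linarith)
  -- endpoint 2 : F(-st) ≥ 0
  have hE2 : 0 ≤ S * s^2 + T * t^2 - (S + T) * (-(s*t)) - K * M * (s^2 + t^2 - 2*(-(s*t))) := by
    have h1 : K * M * (s^2 + t^2 - 2*(-(s*t))) = K * (2 * m ^ q) * (s + t) := by
      rw [hmq, hm]; ring
    have h2 : S * s^2 + T * t^2 - (S + T) * (-(s*t)) = (s^q + t^q) * (s + t) := by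
      rw [hsq, htq]; ring
    rw [h1, h2]
    apply sub_nonneg.2
    exact mul_le_mul_of_nonneg_right hcore2 (by linarith)
  have hst : (0:ℝ) < 2 * (s * t) := by positivity
  have hcomb : 0 ≤ (s*t - x) * (S * s^2 + T * t^2 - (S + T) * (-(s*t))
        - K * M * (s^2 + t^2 - 2*(-(s*t))))
      + (s*t + x) * (S * s^2 + T * t^2 - (S + T) * (s*t) - K * M * (s^2 + t^2 - 2*(s*t))) :=
    add_nonneg (mul_nonneg (by linarith) hE2) (mul_nonneg (by linarith) hE1)
  have hkey : (s*t - x) * (S * s^2 + T * t^2 - (S + T) * (-(s*t))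
        - K * M * (s^2 + t^2 - 2*(-(s*t))))
      + (s*t + x) * (S * s^2 + T * t^2 - (S + T) * (s*t) - K * M * (s^2 + t^2 - 2*(s*t)))
      = 2 * (s * t) * (S * s^2 + T * t^2 - (S + T) * x - K * M * (s^2 + t^2 - 2*x)) := by
    ring
  rw [hkey] at hcomb
  have hfin := (mul_nonneg_iff_of_pos_left hst).1 hcomb
  linarith

private lemma master {p s t x : ℝ} (hp : 1 < p) (hs : 0 < s) (ht : 0 < t) (hx : |x| ≤ s * t) :
    min 1 (p-1) / 2 ^ (p-2) * ((s+t) ^ (p-2) * (s^2 + t^2 - 2*x)) ≤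
      s ^ (p-2) * s^2 + t ^ (p-2) * t^2 - (s ^ (p-2) + t ^ (p-2)) * x := by
  rcases le_total t s with h | h
  · exact masterAux hp hs ht h hx
  · have h2 := masterAux hp ht hs h (by rwa [mul_comm] at hx)
    rw [add_comm t s] at h2
    linarith

open scoped RealInnerProductSpace
open Classical in
/-- Monotonicity inequality for the p-Laplacian vector field `ξ ↦ |ξ|^{p-2}ξ`,
with the conventions `|x|^{p-2}x := 0` for `x = 0` and
`(|a|+|b|)^{p-2}|a-b|² := 0` for `a = b = 0`. -/
theorem pLaplacian_monotonicity
    {n : ℕ} (hn : 1 ≤ n) (p : ℝ) (hp : 1 < p)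
    (a b : EuclideanSpace ℝ (Fin n)) :
    (min 1 (p - 1) / 2 ^ (p - 2)) *
      (if a = 0 ∧ b = 0 then 0 else (‖a‖ + ‖b‖) ^ (p - 2) * ‖a - b‖ ^ 2) ≤
    ⟪(if a = 0 then 0 else ‖a‖ ^ (p - 2) • a) -
        (if b = 0 then 0 else ‖b‖ ^ (p - 2) • b), a - b⟫ := by
  by_cases ha : a = 0
  · by_cases hb : b = 0
    · simp [ha, hb]
    · rw [if_pos ha, if_neg hb, if_neg (by exact fun h => hb h.2)]
      subst ha
      have ht : 0 < ‖b‖ := norm_pos_iff.2 hb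
      have hinner : ⟪(0:EuclideanSpace ℝ (Fin n)) - ‖b‖ ^ (p-2) • b, (0:EuclideanSpace ℝ (Fin n)) - b⟫
          = ‖b‖ ^ (p-2) * ‖b‖ ^ 2 := by
        rw [zero_sub, zero_sub, inner_neg_neg, real_inner_smul_left, real_inner_self_eq_norm_sq]
      rw [hinner]
      have h1 : ‖(0:EuclideanSpace ℝ (Fin n)) - b‖ = ‖b‖ := by simp
      rw [h1]
      have h2 : (0:ℝ) + ‖b‖ = ‖b‖ := by ring
      rw [norm_zero, h2]
      have h3 : 0 ≤ ‖b‖ ^ (p-2) * ‖b‖ ^ 2 := by positivity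
      nlinarith [Kle1 hp, h3]
  · by_cases hb : b = 0
    · rw [if_neg ha, if_pos hb, if_neg (by exact fun h => ha h.1)]
      subst hb
      have hs : 0 < ‖a‖ := norm_pos_iff.2 ha
      have hinner : ⟪‖a‖ ^ (p-2) • a - (0:EuclideanSpace ℝ (Fin n)), a - 0⟫
          = ‖a‖ ^ (p-2) * ‖a‖ ^ 2 := by
        rw [sub_zero, sub_zero, real_inner_smul_left, real_inner_self_eq_norm_sq]
      rw [hinner]
      have h1 : ‖a - (0:EuclideanSpace ℝ (Fin n))‖ = ‖a‖ := by simp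
      rw [h1, norm_zero]
      have h2 : ‖a‖ + 0 = ‖a‖ := by ring
      rw [h2]
      have h3 : 0 ≤ ‖a‖ ^ (p-2) * ‖a‖ ^ 2 := by positivity
      nlinarith [Kle1 hp, h3]
    · rw [if_neg ha, if_neg hb, if_neg (by exact fun h => ha h.1)]
      have hs : 0 < ‖a‖ := norm_pos_iff.2 ha
      have ht : 0 < ‖b‖ := norm_pos_iff.2 hb
      have hinner : ⟪‖a‖ ^ (p-2) • a - ‖b‖ ^ (p-2) • b, a - b⟫
          = ‖a‖ ^ (p-2) * ‖a‖ ^ 2 + ‖b‖ ^ (p-2) * ‖b‖ ^ 2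
            - (‖a‖ ^ (p-2) + ‖b‖ ^ (p-2)) * ⟪a, b⟫ := by
        rw [inner_sub_left, inner_sub_right, inner_sub_right, real_inner_smul_left,
          real_inner_smul_left, real_inner_smul_left, real_inner_smul_left,
          real_inner_self_eq_norm_sq, real_inner_self_eq_norm_sq, real_inner_comm b a]
        ring
      have hnorm : ‖a - b‖ ^ 2 = ‖a‖ ^ 2 + ‖b‖ ^ 2 - 2 * ⟪a, b⟫ := by
        rw [norm_sub_sq_real]; ring
      rw [hinner, hnorm]
      exact master hp hs ht (abs_real_inner_le_norm a b)
end

section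
/- Let n ≥ 2 be an integer, p > 1, 0 < r0 ≤ R0, and r ∈ (0,1). Let Σ' ⊂ ℝ^{n−1} be a convex set with B_{r0}(0) ⊆ Σ' ⊆ B_{R0}(0), and write d(x') := dist(x', Σ'). Then there exist constants c > 0 and ε0 ∈ (0,1), depending only on n, p, r0, R0, and r, such that for all ε ∈ (0, ε0): ∫_{{x' ∈ ℝ^{n−1} : 0 < d(x') < r}} (ε + d(x')²)^{1−p} dx' ≥ c·ε^{(n+1)/2−p} if p > (n+1)/2; the same integral is ≥ c·|ln ε| if p = (n+1)/2; and it is ≥ c if 1 < p < (n+1)/2. -/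
open MeasureTheory Set Metric
open scoped Pointwise ENNReal

private lemma subset_one_add_smul {Em : Type*} [NormedAddCommGroup Em] [NormedSpace ℝ Em]
    {C : Set Em} (hC : Convex ℝ C) (h0 : (0:Em) ∈ C) {t : ℝ} (ht : 0 ≤ t) :
    C ⊆ (1 + t) • C := by
  intro y hy
  have h1t : (0:ℝ) < 1 + t := by linarith
  refine ⟨(1/(1+t)) • y, ?_, ?_⟩
  · exact hC.smul_mem_of_zero_mem h0 hy
      (mem_Icc.2 ⟨by positivity, by rw [div_le_one h1t]; linarith⟩)
  · show (1+t) • ((1/(1+t)) • y) = y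
    rw [smul_smul, mul_one_div, div_self (ne_of_gt h1t), one_smul]

variable {m : ℕ} {C : Set (EuclideanSpace ℝ (Fin m))} {r0 R0 : ℝ}

private lemma collar_measure_lower
    (hm : 1 ≤ m) (hC : Convex ℝ C) (hCc : IsClosed C)
    (hr0 : 0 < r0) (hR0 : 0 < R0)
    (hb : ball (0 : EuclideanSpace ℝ (Fin m)) r0 ⊆ C)
    (hb' : C ⊆ closedBall (0 : EuclideanSpace ℝ (Fin m)) R0)
    {s : ℝ} (hs : 0 < s) :
    ENNReal.ofReal ((volume (ball (0 : EuclideanSpace ℝ (Fin m)) r0)).toReal / (2*R0) * s)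
      ≤ volume {x : EuclideanSpace ℝ (Fin m) | 0 < infDist x C ∧ infDist x C < s} := by
  have hC0 : (0 : EuclideanSpace ℝ (Fin m)) ∈ C := hb (mem_ball_self hr0)
  set t := s / (2*R0) with ht_def
  have ht : 0 < t := by positivity
  have h1t : (0:ℝ) < 1 + t := by linarith
  set D := ((1+t) • C) \ C with hD
  -- subset claim
  have hsubset : D ⊆ {x : EuclideanSpace ℝ (Fin m) | 0 < infDist x C ∧ infDist x C < s} := by
    rintro x ⟨⟨y, hy, rfl⟩, hx2⟩
    constructor
    · exact (hCc.notMem_iff_infDist_pos ⟨0, hC0⟩).1 hx2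
    · have hdy : infDist ((1+t) • y) C ≤ dist ((1+t) • y) y := infDist_le_dist_of_mem hy
      have : dist ((1+t) • y) y = t * ‖y‖ := by
        rw [dist_eq_norm]
        have : (1+t) • y - y = t • y := by
          rw [add_smul, one_smul]; abel
        rw [this, norm_smul, Real.norm_eq_abs, abs_of_pos ht]
      have hyR : ‖y‖ ≤ R0 := by
        simpa [mem_closedBall_zero_iff] using hb' hy
      have : infDist ((1+t) • y) C ≤ t * R0 :=
        hdy.trans (by rw [this]; exact mul_le_mul_of_nonneg_left hyR ht.le)
      have htR : t * R0 = s / 2 := by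
        rw [ht_def]; field_simp
      linarith [this.trans_eq htR]
  refine le_trans ?_ (measure_mono hsubset)
  -- measure of D
  have hmC : MeasurableSet C := hCc.measurableSet
  have hCfin : volume C ≠ ∞ :=
    (lt_of_le_of_lt (measure_mono hb') (measure_closedBall_lt_top)).ne
  have hkey : volume ((1+t) • C) = ENNReal.ofReal ((1+t)^m) * volume C := by
    rw [Measure.addHaar_smul, finrank_euclideanSpace_fin, abs_of_pos (by positivity)]
  have hsub1 : C ⊆ (1+t) • C := subset_one_add_smul hC hC0 ht.le
  have hsplit : volume ((1+t) • C) ≤ volume D + volume C := by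
    refine le_trans (measure_mono ?_) (measure_union_le _ _)
    rw [hD, diff_union_self]
    exact subset_union_left
  have hlower : ENNReal.ofReal ((volume (ball (0 : EuclideanSpace ℝ (Fin m)) r0)).toReal / (2*R0) * s)
      + volume C ≤ volume ((1+t) • C) := by
    rw [hkey]
    have h1 : ENNReal.ofReal (1 + (m:ℝ)*t) ≤ ENNReal.ofReal ((1+t)^m) :=
      ENNReal.ofReal_le_ofReal (by
        have := one_add_mul_le_pow (a := t) (by linarith) m
        linarith)
    refine le_trans ?_ (mul_le_mul_left h1 _)
    rw [ENNReal.ofReal_add one_pos.le (by positivity), ENNReal.ofReal_one, add_mul, one_mul, add_comm]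
    refine add_le_add_right ?_ _
    have hvB : ENNReal.ofReal ((volume (ball (0 : EuclideanSpace ℝ (Fin m)) r0)).toReal)
        = volume (ball (0 : EuclideanSpace ℝ (Fin m)) r0) :=
      ENNReal.ofReal_toReal measure_ball_lt_top.ne
    have heq : (volume (ball (0 : EuclideanSpace ℝ (Fin m)) r0)).toReal / (2*R0) * s
        = (volume (ball (0 : EuclideanSpace ℝ (Fin m)) r0)).toReal * t := by
      rw [ht_def]; ring
    rw [heq, ENNReal.ofReal_mul ENNReal.toReal_nonneg, hvB]
    calc volume (ball (0 : EuclideanSpace ℝ (Fin m)) r0) * ENNReal.ofReal t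
        ≤ volume C * ENNReal.ofReal ((m:ℝ)*t) := by
          refine mul_le_mul' (measure_mono hb) (ENNReal.ofReal_le_ofReal ?_)
          have hm1 : (1:ℝ) ≤ (m:ℝ) := by exact_mod_cast hm
          nlinarith
      _ = ENNReal.ofReal ((m:ℝ)*t) * volume C := mul_comm _ _
  have := hlower.trans hsplit
  exact (ENNReal.add_le_add_iff_right hCfin).1 this

private lemma pow_one_add_le' {m : ℕ} {u : ℝ} (hu : 0 ≤ u) (hu1 : u ≤ 1) :
    (1 + u) ^ m ≤ 1 + u * m * 2 ^ m := by
  induction m with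
  | zero => simp
  | succ k ih =>
      have h2 : (0:ℝ) < 2 ^ k := by positivity
      have h2' : (1:ℝ) ≤ 2 ^ k := one_le_pow₀ (by norm_num)
      have h1u : 0 ≤ 1 + u := by linarith
      have huu : u * u ≤ u := mul_le_of_le_one_right hu hu1
      have hk0 : (0:ℝ) ≤ (k:ℝ) * 2 ^ k := by positivity
      calc (1 + u) ^ (k+1) = (1 + u) ^ k * (1 + u) := by ring
        _ ≤ (1 + u * k * 2 ^ k) * (1 + u) :=
            mul_le_mul_of_nonneg_right ih h1u
        _ = 1 + u + u * k * 2 ^ k + (u * u) * (k * 2 ^ k) := by ring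
        _ ≤ 1 + u + u * k * 2 ^ k + u * (k * 2 ^ k) := by
            have := mul_le_mul_of_nonneg_right huu hk0
            linarith
        _ ≤ 1 + u * (k+1) * 2 ^ (k+1) := by
            rw [pow_succ]
            nlinarith [mul_le_mul_of_nonneg_left h2' hu]
        _ = 1 + u * ((k:ℕ)+1 : ℕ) * 2 ^ (k+1) := by push_cast; ring

private lemma collar_measure_upper
    (hC : Convex ℝ C) (hCc : IsClosed C)
    (hr0 : 0 < r0)
    (hb : ball (0 : EuclideanSpace ℝ (Fin m)) r0 ⊆ C)
    (hb' : C ⊆ closedBall (0 : EuclideanSpace ℝ (Fin m)) R0)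
    {s : ℝ} (hs : 0 < s) (hsr0 : s ≤ r0) :
    volume {x : EuclideanSpace ℝ (Fin m) | 0 < infDist x C ∧ infDist x C < s}
      ≤ ENNReal.ofReal ((m:ℝ) * 2^m * (volume C).toReal / r0 * s) := by
  have hC0 : (0 : EuclideanSpace ℝ (Fin m)) ∈ C := hb (mem_ball_self hr0)
  set u := s / r0 with hu_def
  have hu : 0 < u := by positivity
  have hu1 : u ≤ 1 := by rw [hu_def, div_le_one hr0]; exact hsr0
  have hsubset : {x : EuclideanSpace ℝ (Fin m) | 0 < infDist x C ∧ infDist x C < s}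
      ⊆ ((1+u) • C) \ C := by
    rintro x ⟨hx1, hx2⟩
    have hxC : x ∉ C := fun h => absurd (infDist_zero_of_mem h) (by linarith)
    obtain ⟨y, hy, hxy⟩ := (infDist_lt_iff ⟨0, hC0⟩).1 hx2
    set w : EuclideanSpace ℝ (Fin m) := (r0/s) • (x - y) with hw_def
    have hw : w ∈ ball (0 : EuclideanSpace ℝ (Fin m)) r0 := by
      rw [mem_ball_zero_iff, hw_def, norm_smul, Real.norm_eq_abs,
        abs_of_pos (by positivity)]
      calc r0/s * ‖x - y‖ < r0/s * s := by
            refine mul_lt_mul_of_pos_left ?_ (by positivity)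
            rwa [← dist_eq_norm]
        _ = r0 := by field_simp
    refine ⟨?_, hxC⟩
    have hx_eq : x = (1:ℝ) • y + u • w := by
      rw [hw_def, smul_smul, one_smul, hu_def]
      rw [div_mul_div_comm, mul_comm s r0, div_self (by positivity), one_smul]
      abel
    rw [hC.add_smul one_pos.le hu.le]
    rw [hx_eq]
    exact Set.add_mem_add (smul_mem_smul_set hy) (smul_mem_smul_set (hb hw))
  refine le_trans (measure_mono hsubset) ?_
  have hmC : MeasurableSet C := hCc.measurableSet
  have hCfin : volume C ≠ ∞ :=
    (lt_of_le_of_lt (measure_mono hb') (measure_closedBall_lt_top)).ne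
  have h1u : (0:ℝ) < 1 + u := by linarith
  have hsub1 : C ⊆ (1+u) • C := subset_one_add_smul hC hC0 hu.le
  have hkey : volume ((1+u) • C) = ENNReal.ofReal ((1+u)^m) * volume C := by
    rw [Measure.addHaar_smul, finrank_euclideanSpace_fin, abs_of_pos (by positivity)]
  rw [measure_diff hsub1 hmC.nullMeasurableSet hCfin, hkey]
  have hvC : ENNReal.ofReal ((volume C).toReal) = volume C :=
    ENNReal.ofReal_toReal hCfin
  calc ENNReal.ofReal ((1+u)^m) * volume C - volume C
      ≤ ENNReal.ofReal (1 + u * m * 2^m) * volume C - volume C := by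
        refine tsub_le_tsub_right (mul_le_mul_left (ENNReal.ofReal_le_ofReal
          (pow_one_add_le' hu.le hu1)) _) _
    _ = (volume C + ENNReal.ofReal (u * m * 2^m) * volume C) - volume C := by
        rw [ENNReal.ofReal_add one_pos.le (by positivity), ENNReal.ofReal_one,
          add_mul, one_mul]
    _ = ENNReal.ofReal (u * m * 2^m) * volume C := ENNReal.add_sub_cancel_left hCfin
    _ = ENNReal.ofReal ((m:ℝ) * 2^m * (volume C).toReal / r0 * s) := by
        rw [← hvC, ← ENNReal.ofReal_mul (by positivity)]
        congr 1
        rw [hu_def, hvC]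
        field_simp

private lemma collar_finite {m : ℕ} {S : Set (EuclideanSpace ℝ (Fin m))}
    {R1 r : ℝ} (hS : S ⊆ ball 0 R1) (hSne : S.Nonempty) :
    volume {x : EuclideanSpace ℝ (Fin m) | 0 < infDist x S ∧ infDist x S < r} ≠ ⊤ := by
  refine (lt_of_le_of_lt (measure_mono ?_) (measure_ball_lt_top (x := (0 : EuclideanSpace ℝ (Fin m))) (r := R1 + r))).ne
  rintro x ⟨_, hx2⟩
  obtain ⟨y, hy, hxy⟩ := (infDist_lt_iff hSne).1 hx2
  have : dist y 0 < R1 := by simpa [mem_ball] using hS hy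
  have := dist_triangle x y 0
  simp only [mem_ball]
  linarith

private lemma integrable_collar {m : ℕ} {S : Set (EuclideanSpace ℝ (Fin m))}
    {R1 r : ℝ} (hS : S ⊆ ball 0 R1) (hSne : S.Nonempty)
    {ε q : ℝ} (hε : 0 < ε) (hq : q ≤ 0) :
    IntegrableOn (fun x => (ε + (infDist x S)^2) ^ q)
      {x : EuclideanSpace ℝ (Fin m) | 0 < infDist x S ∧ infDist x S < r} volume := by
  have hcont : Continuous fun x : EuclideanSpace ℝ (Fin m) =>
      (ε + (infDist x S)^2) ^ q := by
    refine (continuous_const.add ((continuous_infDist_pt S).pow 2)).rpow_const ?_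
    intro x
    left
    exact (show (0:ℝ) < ε + infDist x S ^ 2 by positivity).ne'
  refine Integrable.mono' (g := fun _ => ε ^ q) ?_ hcont.aestronglyMeasurable ?_
  · exact integrableOn_const (collar_finite hS hSne)
  · refine Filter.Eventually.of_forall fun x => ?_
    have h1 : 0 < ε + (infDist x S)^2 := by positivity
    rw [Real.norm_eq_abs, abs_of_nonneg (Real.rpow_nonneg h1.le _)]
    exact Real.rpow_le_rpow_of_nonpos hε (by nlinarith [sq_nonneg (infDist x S)]) hq

private lemma setIntegral_ge_sub {m : ℕ} {A E' : Set (EuclideanSpace ℝ (Fin m))}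
    {f : EuclideanSpace ℝ (Fin m) → ℝ} {κ : ℝ}
    (hfA : IntegrableOn f A volume) (hf0 : ∀ x, 0 ≤ f x)
    (hE : MeasurableSet E') (hEA : E' ⊆ A) (hfin : volume E' ≠ ⊤)
    (hκ : ∀ x ∈ E', κ ≤ f x) :
    κ * (volume E').toReal ≤ ∫ x in A, f x := by
  have h1 := setIntegral_ge_of_const_le_real hE hfin hκ (hfA.mono_set hEA)
  exact h1.trans (setIntegral_mono_set hfA (ae_of_all _ hf0) (HasSubset.Subset.eventuallyLE hEA))

set_option maxHeartbeats 2000000 in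
/-- Equation (3.12): three-regime lower bound on the collar integral outside
the flat part `Σ'` of the inclusions. -/
theorem collar_integral_lower_bound
    {n : ℕ} (hn : 2 ≤ n) (p r0 R0 r : ℝ) (hp : 1 < p)
    (hr0 : 0 < r0) (hr0R0 : r0 ≤ R0) (hr : r ∈ Ioo (0:ℝ) 1)
    (S : Set (EuclideanSpace ℝ (Fin (n-1)))) (hconv : Convex ℝ S)
    (hball : ball (0 : EuclideanSpace ℝ (Fin (n-1))) r0 ⊆ S)
    (hball' : S ⊆ ball (0 : EuclideanSpace ℝ (Fin (n-1))) R0) :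
    ∃ c > (0:ℝ), ∃ ε0 ∈ Ioo (0:ℝ) 1, ∀ ε ∈ Ioo (0:ℝ) ε0,
      ((((n:ℝ) + 1) / 2 < p →
        c * ε ^ (((n:ℝ) + 1) / 2 - p) ≤
          ∫ x' in {x' : EuclideanSpace ℝ (Fin (n-1)) |
              0 < infDist x' S ∧ infDist x' S < r},
            (ε + (infDist x' S) ^ 2) ^ (1 - p)) ∧
      (p = ((n:ℝ) + 1) / 2 →
        c * |Real.log ε| ≤
          ∫ x' in {x' : EuclideanSpace ℝ (Fin (n-1)) |
              0 < infDist x' S ∧ infDist x' S < r},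
            (ε + (infDist x' S) ^ 2) ^ (1 - p)) ∧
      (p < ((n:ℝ) + 1) / 2 →
        c ≤ ∫ x' in {x' : EuclideanSpace ℝ (Fin (n-1)) |
              0 < infDist x' S ∧ infDist x' S < r},
            (ε + (infDist x' S) ^ 2) ^ (1 - p))) := by
  have hrpos : 0 < r := hr.1
  have hr1 : r < 1 := hr.2
  have hR0 : 0 < R0 := lt_of_lt_of_le hr0 hr0R0
  have hm : 1 ≤ n - 1 := by omega
  have hn2 : (2:ℝ) ≤ (n:ℝ) := by exact_mod_cast hn
  have hconvC : Convex ℝ (closure S) := hconv.closure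
  have hCc : IsClosed (closure S) := isClosed_closure
  have hbC : ball (0 : EuclideanSpace ℝ (Fin (n-1))) r0 ⊆ closure S :=
    hball.trans subset_closure
  have hbC' : closure S ⊆ closedBall (0 : EuclideanSpace ℝ (Fin (n-1))) R0 :=
    (closure_mono hball').trans closure_ball_subset_closedBall
  have hSne : S.Nonempty := ⟨0, hball (mem_ball_self hr0)⟩
  have hsetEq : ∀ s' : ℝ,
      {x : EuclideanSpace ℝ (Fin (n-1)) | 0 < infDist x S ∧ infDist x S < s'}
      = {x : EuclideanSpace ℝ (Fin (n-1)) |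
          0 < infDist x (closure S) ∧ infDist x (closure S) < s'} := by
    intro s'; ext x; simp [infDist_closure]
  have hCfin : volume (closure S) ≠ ⊤ :=
    (lt_of_le_of_lt (measure_mono hbC') measure_closedBall_lt_top).ne
  have hvB : 0 < (volume (ball (0 : EuclideanSpace ℝ (Fin (n-1))) r0)).toReal :=
    ENNReal.toReal_pos (measure_ball_pos _ _ hr0).ne' measure_ball_lt_top.ne
  have hvBC : (volume (ball (0 : EuclideanSpace ℝ (Fin (n-1))) r0)).toReal
      ≤ (volume (closure S)).toReal := ENNReal.toReal_mono hCfin (measure_mono hbC)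
  have hvC : 0 < (volume (closure S)).toReal := lt_of_lt_of_le hvB hvBC
  set a : ℝ := (volume (ball (0 : EuclideanSpace ℝ (Fin (n-1))) r0)).toReal / (2*R0)
    with ha_def
  have ha : 0 < a := by rw [ha_def]; positivity
  set b : ℝ := ((n-1 : ℕ):ℝ) * 2^(n-1) * (volume (closure S)).toReal / r0 with hb_def
  have hm1 : (1:ℝ) ≤ ((n-1:ℕ):ℝ) := by exact_mod_cast hm
  have hbpos : 0 < b := by
    rw [hb_def]
    have h1 : (0:ℝ) < ((n-1:ℕ):ℝ) := lt_of_lt_of_le one_pos hm1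
    positivity
  set q : ℝ := min (a/(2*b)) (1/2) with hq_def
  have hq0 : 0 < q := lt_min (by positivity) one_half_pos
  have hq1 : q ≤ 1/2 := min_le_right _ _
  have hq1' : q < 1 := lt_of_le_of_lt hq1 (by norm_num)
  have hbq : b * q ≤ a/2 := by
    have h1 : q ≤ a/(2*b) := min_le_left _ _
    calc b*q ≤ b*(a/(2*b)) := mul_le_mul_of_nonneg_left h1 hbpos.le
      _ = a/2 := by field_simp
  set s0 : ℝ := min r r0 / 2 with hs0_def
  have hs00 : 0 < s0 := by rw [hs0_def]; positivity
  have hs0r : s0 < r := by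
    rw [hs0_def]
    calc min r r0 / 2 ≤ r / 2 := by
          have := min_le_left r r0; linarith
      _ < r := by linarith
  have hs0r0 : s0 ≤ r0 := by
    rw [hs0_def]
    have := min_le_right r r0; linarith
  have hs01 : s0 < 1 := lt_trans hs0r hr1
  have hq_exp : 1 - p ≤ 0 := by linarith
  set Lq : ℝ := Real.log (1/q) with hLq_def
  have hLq : 0 < Lq := Real.log_pos (one_lt_one_div hq0 hq1')
  set β : ℝ := 1/(4*Lq) with hβ_def
  have hβ : 0 < β := by rw [hβ_def]; positivity
  set τ : ℝ := a/2 * (2:ℝ)^(1-p) with hτ_def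
  have hτ : 0 < τ := by
    rw [hτ_def]
    have := Real.rpow_pos_of_pos (show (0:ℝ) < 2 by norm_num) (1-p)
    positivity
  set c1 : ℝ := a * (2:ℝ)^(1-p) with hc1_def
  have hc1 : 0 < c1 := by
    rw [hc1_def]
    have := Real.rpow_pos_of_pos (show (0:ℝ) < 2 by norm_num) (1-p)
    positivity
  set c2 : ℝ := τ * β / 2 with hc2_def
  have hc2 : 0 < c2 := by rw [hc2_def]; positivity
  set c3 : ℝ := a * s0 * (1 + s0^2)^(1-p) with hc3_def
  have hc3 : 0 < c3 := by
    rw [hc3_def]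
    have := Real.rpow_pos_of_pos (show (0:ℝ) < 1 + s0^2 by positivity) (1-p)
    positivity
  refine ⟨min c1 (min c2 c3), lt_min hc1 (lt_min hc2 hc3), ?_⟩
  set ε0 : ℝ := min (min (1/2) (r^2)) (min (s0^4) (Real.exp (-(2/β)))) with hε0_def
  have hε0pos : 0 < ε0 := by
    rw [hε0_def]
    have := Real.exp_pos (-(2/β))
    positivity
  have hε0h : ε0 ≤ 1/2 := le_trans (min_le_left _ _) (min_le_left _ _)
  have hε0r : ε0 ≤ r^2 := le_trans (min_le_left _ _) (min_le_right _ _)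
  have hε0s : ε0 ≤ s0^4 := le_trans (min_le_right _ _) (min_le_left _ _)
  have hε0e : ε0 ≤ Real.exp (-(2/β)) := le_trans (min_le_right _ _) (min_le_right _ _)
  clear_value a b q s0 Lq β τ c1 c2 c3 ε0
  refine ⟨ε0, ⟨hε0pos, ?_⟩, ?_⟩
  · linarith
  intro ε hε
  obtain ⟨hεpos, hεlt⟩ := hε
  have hε1 : ε < 1 := by linarith
  have hεr2 : ε < r^2 := by linarith
  have hεs4 : ε < s0^4 := by linarith
  have hεexp : ε < Real.exp (-(2/β)) := by linarith
  set A : Set (EuclideanSpace ℝ (Fin (n-1))) :=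
    {x : EuclideanSpace ℝ (Fin (n-1)) | 0 < infDist x S ∧ infDist x S < r} with hA_def
  set f : EuclideanSpace ℝ (Fin (n-1)) → ℝ :=
    fun x => (ε + (infDist x S)^2)^(1-p) with hf_def
  have hfA : IntegrableOn f A volume := integrable_collar hball' hSne hεpos hq_exp
  have hf0 : ∀ x, 0 ≤ f x := fun x => Real.rpow_nonneg (by positivity) _
  have hAfin : volume A ≠ ⊤ := collar_finite hball' hSne
  have hmeasA : ∀ s' : ℝ, MeasurableSet
      {x : EuclideanSpace ℝ (Fin (n-1)) | 0 < infDist x S ∧ infDist x S < s'} := by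
    intro s'
    have heq : {x : EuclideanSpace ℝ (Fin (n-1)) | 0 < infDist x S ∧ infDist x S < s'}
        = (fun x : EuclideanSpace ℝ (Fin (n-1)) => infDist x S) ⁻¹' (Set.Ioo 0 s') := rfl
    rw [heq]
    exact (continuous_infDist_pt S).measurable measurableSet_Ioo
  have hvol_low : ∀ s' : ℝ, 0 < s' → ENNReal.ofReal (a * s') ≤
      volume {x : EuclideanSpace ℝ (Fin (n-1)) | 0 < infDist x S ∧ infDist x S < s'} := by
    intro s' hs'
    rw [hsetEq s', ha_def]
    exact collar_measure_lower hm hconvC hCc hr0 hR0 hbC hbC' hs'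
  have hvol_up : ∀ s' : ℝ, 0 < s' → s' ≤ r0 →
      volume {x : EuclideanSpace ℝ (Fin (n-1)) | 0 < infDist x S ∧ infDist x S < s'}
      ≤ ENNReal.ofReal (b * s') := by
    intro s' hs' hs'r0
    rw [hsetEq s', hb_def]
    exact collar_measure_upper hconvC hCc hr0 hbC hbC' hs' hs'r0
  have master : ∀ s' : ℝ, 0 < s' → s' ≤ r →
      a * s' * (ε + s'^2)^(1-p) ≤ ∫ x in A, f x := by
    intro s' hs' hs'r
    have hEA : {x : EuclideanSpace ℝ (Fin (n-1)) | 0 < infDist x S ∧ infDist x S < s'}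
        ⊆ A := fun x hx => ⟨hx.1, lt_of_lt_of_le hx.2 hs'r⟩
    have hfin : volume {x : EuclideanSpace ℝ (Fin (n-1)) |
        0 < infDist x S ∧ infDist x S < s'} ≠ ⊤ := collar_finite hball' hSne
    have hκ : ∀ x ∈ {x : EuclideanSpace ℝ (Fin (n-1)) |
        0 < infDist x S ∧ infDist x S < s'}, (ε + s'^2)^(1-p) ≤ f x := by
      intro x hx
      have hd0 : 0 ≤ infDist x S := infDist_nonneg
      have hd : infDist x S < s' := hx.2
      have hsq : (infDist x S)^2 ≤ s'^2 := pow_le_pow_left₀ hd0 hd.le 2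
      exact Real.rpow_le_rpow_of_nonpos (by positivity) (by linarith) hq_exp
    have h1 := setIntegral_ge_sub hfA hf0 (hmeasA s') hEA hfin hκ
    refine le_trans ?_ h1
    have hvol : a * s' ≤ (volume {x : EuclideanSpace ℝ (Fin (n-1)) |
        0 < infDist x S ∧ infDist x S < s'}).toReal := by
      have h2 := ENNReal.toReal_mono hfin (hvol_low s' hs')
      rwa [ENNReal.toReal_ofReal (mul_nonneg ha.le hs'.le)] at h2
    calc a * s' * (ε + s'^2)^(1-p)
        ≤ (volume {x : EuclideanSpace ℝ (Fin (n-1)) |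
            0 < infDist x S ∧ infDist x S < s'}).toReal * (ε + s'^2)^(1-p) :=
          mul_le_mul_of_nonneg_right hvol (Real.rpow_nonneg (by positivity) _)
      _ = (ε + s'^2)^(1-p) * (volume {x : EuclideanSpace ℝ (Fin (n-1)) |
            0 < infDist x S ∧ infDist x S < s'}).toReal := mul_comm _ _
  refine ⟨?_, ?_, ?_⟩
  · -- p > (n+1)/2
    intro _
    have hsq : 0 < Real.sqrt ε := Real.sqrt_pos.2 hεpos
    have hsqr : Real.sqrt ε ≤ r := by
      have h1 : Real.sqrt ε ≤ Real.sqrt (r^2) := Real.sqrt_le_sqrt hεr2.le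
      rwa [Real.sqrt_sq hrpos.le] at h1
    have hM := master (Real.sqrt ε) hsq hsqr
    rw [Real.sq_sqrt hεpos.le] at hM
    have hcalc : a * Real.sqrt ε * (ε + ε)^(1-p) = c1 * ε ^ ((3:ℝ)/2 - p) := by
      rw [hc1_def]
      have h2ε : ε + ε = 2 * ε := by ring
      rw [h2ε, Real.mul_rpow (by norm_num) hεpos.le, Real.sqrt_eq_rpow]
      rw [show a * ε^((1:ℝ)/2) * ((2:ℝ)^(1-p) * ε^(1-p))
          = a * (2:ℝ)^(1-p) * (ε^((1:ℝ)/2) * ε^(1-p)) by ring]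
      rw [← Real.rpow_add hεpos]
      rw [show (1:ℝ)/2 + (1-p) = 3/2 - p by ring]
    rw [hcalc] at hM
    refine le_trans ?_ hM
    have hεe : ε ^ (((n:ℝ)+1)/2 - p) ≤ ε ^ ((3:ℝ)/2 - p) :=
      Real.rpow_le_rpow_of_exponent_ge hεpos hε1.le (by linarith)
    exact mul_le_mul (min_le_left _ _) hεe (Real.rpow_nonneg hεpos.le _) hc1.le
  · -- p = (n+1)/2
    intro hpeq
    have hp2 : 3 - 2*p ≤ 0 := by rw [hpeq]; linarith
    have hlogneg : Real.log ε < 0 := Real.log_neg hεpos hε1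
    set ℓ : ℝ := -Real.log ε with hℓ_def
    have hℓpos : 0 < ℓ := by rw [hℓ_def]; linarith
    have habs : |Real.log ε| = ℓ := by rw [abs_of_neg hlogneg]
    have hℓβ : 2/β ≤ ℓ := by
      have h1 : Real.log ε < -(2/β) := by
        calc Real.log ε < Real.log (Real.exp (-(2/β))) := Real.log_lt_log hεpos hεexp
          _ = -(2/β) := Real.log_exp _
      rw [hℓ_def]; linarith
    have hβℓ2 : 2 ≤ β * ℓ := by
      rw [div_le_iff₀ hβ] at hℓβ
      calc (2:ℝ) ≤ ℓ * β := hℓβ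
        _ = β * ℓ := mul_comm _ _
    clear_value ℓ
    set K : ℕ := ⌊β * ℓ⌋₊ with hK_def
    have hKf : β*ℓ - 1 < (K:ℝ) := by rw [hK_def]; exact Nat.sub_one_lt_floor _
    have hKle : (K:ℝ) ≤ β*ℓ := by
      rw [hK_def]; exact Nat.floor_le (mul_nonneg hβ.le hℓpos.le)
    clear_value K
    have hKge : β*ℓ/2 ≤ (K:ℝ) := by linarith
    set sk : ℕ → ℝ := fun k => q^k * s0 with hsk_def
    have hskpos : ∀ k, 0 < sk k := by
      intro k
      simp only [hsk_def]
      exact mul_pos (pow_pos hq0 k) hs00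
    have hsk_succ : ∀ k, sk (k+1) = q * sk k := by
      intro k
      simp only [hsk_def, pow_succ]
      ring
    have hsk_le : ∀ k, sk k ≤ s0 := by
      intro k
      simp only [hsk_def]
      calc q^k * s0 ≤ 1 * s0 :=
            mul_le_mul_of_nonneg_right (pow_le_one₀ hq0.le hq1'.le) hs00.le
        _ = s0 := one_mul _
    have hsk1 : ∀ k, sk k ≤ 1 := fun k => (hsk_le k).trans hs01.le
    have hsk_anti : ∀ j k : ℕ, j ≤ k → sk k ≤ sk j := by
      intro j k hjk
      simp only [hsk_def]
      exact mul_le_mul_of_nonneg_right (pow_le_pow_of_le_one hq0.le hq1'.le hjk) hs00.le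
    have hsqrtK : Real.sqrt ε ≤ sk K := by
      rw [← Real.log_le_log_iff (Real.sqrt_pos.2 hεpos) (hskpos K)]
      rw [Real.log_sqrt hεpos.le]
      simp only [hsk_def]
      rw [Real.log_mul (pow_ne_zero _ hq0.ne') hs00.ne', Real.log_pow]
      have hlogq : Real.log q = -Lq := by
        rw [hLq_def, one_div, Real.log_inv]; ring
      have hlogs0 : -(ℓ/4) ≤ Real.log s0 := by
        have h4 : Real.log ε < Real.log (s0^4) := Real.log_lt_log hεpos hεs4
        rw [Real.log_pow] at h4
        push_cast at h4
        rw [hℓ_def]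
        linarith
      have hKLq : (K:ℝ) * Lq ≤ ℓ/4 := by
        calc (K:ℝ)*Lq ≤ (β*ℓ)*Lq := mul_le_mul_of_nonneg_right hKle hLq.le
          _ = ℓ/4 := by rw [hβ_def]; field_simp [hLq.ne']
      rw [hlogq]
      have hle2 : Real.log ε / 2 = -(ℓ/2) := by rw [hℓ_def]; ring
      rw [hle2]
      have hKneg : (K:ℝ) * -Lq = -((K:ℝ)*Lq) := by ring
      rw [hKneg]
      linarith
    have hsqrtk : ∀ k, k ≤ K → Real.sqrt ε ≤ sk k :=
      fun k hk => hsqrtK.trans (hsk_anti k K hk)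
    have hεsk : ∀ k, k ≤ K → ε ≤ (sk k)^2 := by
      intro k hk
      have h1 := hsqrtk k hk
      have h2 := pow_le_pow_left₀ (Real.sqrt_nonneg ε) h1 2
      rwa [Real.sq_sqrt hεpos.le] at h2
    clear_value sk
    set Ek : ℕ → Set (EuclideanSpace ℝ (Fin (n-1))) := fun k =>
      {x : EuclideanSpace ℝ (Fin (n-1)) | 0 < infDist x S ∧ infDist x S < sk k}
      \ {x : EuclideanSpace ℝ (Fin (n-1)) | 0 < infDist x S ∧ infDist x S < sk (k+1)}
      with hEk_def
    have hEk_meas : ∀ k, MeasurableSet (Ek k) := fun k => (hmeasA _).diff (hmeasA _)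
    have hEk_subA : ∀ k, Ek k ⊆ A := by
      intro k x hx
      exact ⟨hx.1.1, lt_of_lt_of_le hx.1.2 ((hsk_le k).trans hs0r.le)⟩
    have hEk_fin : ∀ k, volume (Ek k) ≠ ⊤ := fun k =>
      ne_top_of_le_ne_top hAfin (measure_mono (hEk_subA k))
    have hdisj : ∀ j k : ℕ, j < k → Disjoint (Ek j) (Ek k) := by
      intro j k hjk
      rw [Set.disjoint_left]
      rintro x hxj hxk
      have h1 : infDist x S < sk k := hxk.1.2
      have h2 : sk k ≤ sk (j+1) := hsk_anti (j+1) k hjk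
      exact hxj.2 ⟨hxj.1.1, lt_of_lt_of_le h1 h2⟩
    have hEk_vol : ∀ k, k < K → a/2 * sk k ≤ (volume (Ek k)).toReal := by
      intro k _
      have hsplit : volume {x : EuclideanSpace ℝ (Fin (n-1)) |
            0 < infDist x S ∧ infDist x S < sk k}
          ≤ volume (Ek k) + volume {x : EuclideanSpace ℝ (Fin (n-1)) |
            0 < infDist x S ∧ infDist x S < sk (k+1)} := by
        refine le_trans (measure_mono ?_) (measure_union_le _ _)
        intro x hx
        by_cases hx2 : x ∈ {x : EuclideanSpace ℝ (Fin (n-1)) |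
            0 < infDist x S ∧ infDist x S < sk (k+1)}
        · exact Or.inr hx2
        · exact Or.inl ⟨hx, hx2⟩
      have hlow := hvol_low (sk k) (hskpos k)
      have hup := hvol_up (sk (k+1)) (hskpos (k+1)) ((hsk_le (k+1)).trans hs0r0)
      have hcomb : ENNReal.ofReal (a * sk k)
          ≤ volume (Ek k) + ENNReal.ofReal (b * sk (k+1)) :=
        hlow.trans (hsplit.trans (add_le_add_right hup _))
      have h3 : ENNReal.ofReal (a * sk k) - ENNReal.ofReal (b * sk (k+1))
          ≤ volume (Ek k) := tsub_le_iff_right.2 hcomb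
      rw [← ENNReal.ofReal_sub _ (mul_nonneg hbpos.le (hskpos _).le)] at h3
      have h4 : a/2 * sk k ≤ a * sk k - b * sk (k+1) := by
        rw [hsk_succ k, ← mul_assoc]
        have h6 := mul_le_mul_of_nonneg_right hbq (hskpos k).le
        linarith
      have h5 : ENNReal.ofReal (a/2 * sk k) ≤ volume (Ek k) :=
        le_trans (ENNReal.ofReal_le_ofReal h4) h3
      have h6 := ENNReal.toReal_mono (hEk_fin k) h5
      rwa [ENNReal.toReal_ofReal (mul_nonneg (by linarith) (hskpos k).le)] at h6
    have hshell : ∀ k, k < K → τ ≤ ∫ x in Ek k, f x := by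
      intro k hk
      have hκ : ∀ x ∈ Ek k, (ε + (sk k)^2)^(1-p) ≤ f x := by
        intro x hx
        have hd : infDist x S < sk k := hx.1.2
        have hd0 : 0 ≤ infDist x S := infDist_nonneg
        have hsq : (infDist x S)^2 ≤ (sk k)^2 := pow_le_pow_left₀ hd0 hd.le 2
        exact Real.rpow_le_rpow_of_nonpos (by positivity) (by linarith) hq_exp
      have h1 := setIntegral_ge_of_const_le_real (hEk_meas k) (hEk_fin k) hκ
        (hfA.mono_set (hEk_subA k))
      refine le_trans ?_ h1
      have hb1 : (2 * (sk k)^2)^(1-p) ≤ (ε + (sk k)^2)^(1-p) := by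
        refine Real.rpow_le_rpow_of_nonpos (by positivity) ?_ hq_exp
        have := hεsk k hk.le
        linarith
      have e1 : ((sk k)^2 : ℝ) = (sk k)^((2:ℝ)) := by
        rw [← Real.rpow_natCast (sk k) 2]; norm_num
      have e2 : ((sk k)^((2:ℝ)))^(1-p) = (sk k)^((2:ℝ)*(1-p)) :=
        (Real.rpow_mul (hskpos k).le 2 (1-p)).symm
      have e4 : (1:ℝ) ≤ (sk k)^((2:ℝ)*(1-p)+1) := by
        have h35 : (2:ℝ)*(1-p)+1 = 3 - 2*p := by ring
        rw [h35]
        exact Real.one_le_rpow_of_pos_of_le_one_of_nonpos (hskpos k) (hsk1 k) hp2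
      have hchain : τ ≤ (2*(sk k)^2)^(1-p) * (a/2 * sk k) := by
        have hstep : (2*(sk k)^2 : ℝ)^(1-p)
            = (2:ℝ)^(1-p) * (sk k)^((2:ℝ)*(1-p)) := by
          rw [Real.mul_rpow (by norm_num) (by positivity), e1, e2]
        rw [hstep]
        have e3 : (sk k)^((2:ℝ)*(1-p)) * sk k = (sk k)^((2:ℝ)*(1-p)+1) := by
          rw [Real.rpow_add (hskpos k) (2*(1-p)) 1, Real.rpow_one]
        calc τ = a/2 * (2:ℝ)^(1-p) * 1 := by rw [hτ_def]; ring
          _ ≤ a/2 * (2:ℝ)^(1-p) * ((sk k)^((2:ℝ)*(1-p)+1)) := by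
              refine mul_le_mul_of_nonneg_left e4 ?_
              have h2p := Real.rpow_pos_of_pos (show (0:ℝ) < 2 by norm_num) (1-p)
              exact mul_nonneg (by linarith) h2p.le
          _ = (2:ℝ)^(1-p) * (sk k)^((2:ℝ)*(1-p)) * (a/2 * sk k) := by
              rw [← e3]; ring
      refine hchain.trans ?_
      refine mul_le_mul hb1 (hEk_vol k hk) (mul_nonneg (by linarith) (hskpos k).le)
        (Real.rpow_nonneg (by positivity) _)
    have hsum : (K:ℝ) * τ ≤ ∫ x in A, f x := by
      have hint : ∀ k ∈ Finset.range K, IntegrableOn f (Ek k) volume := fun k _ =>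
        hfA.mono_set (hEk_subA k)
      have hdisj' : Set.Pairwise ↑(Finset.range K) (Function.onFun Disjoint Ek) := by
        intro i _ j _ hij
        rcases lt_or_gt_of_ne hij with h | h
        · exact hdisj i j h
        · exact (hdisj j i h).symm
      have heq := integral_biUnion_finset (Finset.range K) (fun k _ => hEk_meas k)
        hdisj' hint (μ := volume)
      have hle : ∑ k ∈ Finset.range K, τ ≤ ∑ k ∈ Finset.range K, ∫ x in Ek k, f x :=
        Finset.sum_le_sum (fun k hk => hshell k (Finset.mem_range.1 hk))
      rw [Finset.sum_const, Finset.card_range, nsmul_eq_mul] at hle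
      rw [← heq] at hle
      refine hle.trans ?_
      refine setIntegral_mono_set hfA (ae_of_all _ hf0)
        (HasSubset.Subset.eventuallyLE ?_)
      exact Set.iUnion₂_subset (fun k _ => hEk_subA k)
    rw [habs]
    calc min c1 (min c2 c3) * ℓ ≤ c2 * ℓ :=
          mul_le_mul_of_nonneg_right
            (le_trans (min_le_right _ _) (min_le_left _ _)) hℓpos.le
      _ = τ * (β*ℓ/2) := by rw [hc2_def]; ring
      _ ≤ τ * K := mul_le_mul_of_nonneg_left hKge hτ.le
      _ = (K:ℝ)*τ := mul_comm _ _
      _ ≤ _ := hsum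
  · -- p < (n+1)/2
    intro _
    have hM := master s0 hs00 hs0r.le
    refine le_trans ?_ hM
    have hmono : (1 + s0^2)^(1-p) ≤ (ε + s0^2)^(1-p) :=
      Real.rpow_le_rpow_of_nonpos (by positivity) (by linarith) hq_exp
    calc min c1 (min c2 c3) ≤ c3 := le_trans (min_le_right _ _) (min_le_right _ _)
      _ = a * s0 * (1+s0^2)^(1-p) := hc3_def
      _ ≤ a * s0 * (ε+s0^2)^(1-p) :=
          mul_le_mul_of_nonneg_left hmono (mul_nonneg ha.le hs00.le)
end
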